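/- arXiv:2005.12700 — 13 statements merged into one kernel-verified Lean document; each statement's English description precedes it below -/
import Mathlib

section
/- Let V and W be p-dimensional subspaces of X with bases v, w : Fin p → X respectively, and let P be the orthogonal projection of X onto W. Set A = Gram(w), let B be the p×p matrix with entries B_{ij} = ⟪w i, v j⟫, and set D = Gram(v). Then det(Gram(P ∘ v)) · det(A) = conj(det B) · det B. Equivalently, the Grassmann angle satisfies cos²Θ_{V,W} = |det B|² / (det A · det D). -/
open Matrix


variable {𝕜 X : Type*} [RCLike 𝕜] [NormedAddCommGroup X] [InnerProductSpace 𝕜 X]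
  [FiniteDimensional 𝕜 X]

/-- For `p`-dimensional subspaces `V, W` with bases `v, w`, and `P` the
orthogonal projection onto `W`, we have
`det (Gram (P ∘ v)) * det A = conj (det B) * det B`,
where `A = Gram w`, `B i j = ⟪w i, v j⟫`.  Equivalently,
`cos² Θ_{V,W} = |det B|² / (det A * det D)` with `D = Gram v`. -/
theorem grassmann_angle_formula_equal_dim {p : ℕ} (V W : Submodule 𝕜 X) (v w : Fin p → X)
    (hv : LinearIndependent 𝕜 v) (hvV : Submodule.span 𝕜 (Set.range v) = V)
    (hw : LinearIndependent 𝕜 w) (hwW : Submodule.span 𝕜 (Set.range w) = W) :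
    (Matrix.of fun i j : Fin p =>
        (inner 𝕜 ((W.orthogonalProjectionOnto (v i) : X)) ((W.orthogonalProjectionOnto (v j) : X)) : 𝕜)).det *
      (Matrix.of fun i j : Fin p => (inner 𝕜 (w i) (w j) : 𝕜)).det =
    (starRingEnd 𝕜) ((Matrix.of fun i j : Fin p => (inner 𝕜 (w i) (v j) : 𝕜)).det) *
      (Matrix.of fun i j : Fin p => (inner 𝕜 (w i) (v j) : 𝕜)).det := by
  classical
  subst hwW
  set Wsp := Submodule.span 𝕜 (Set.range w) with hWsp
  let b : Module.Basis (Fin p) 𝕜 Wsp := Module.Basis.span hw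
  set P := Wsp.orthogonalProjectionOnto with hP
  set C : Matrix (Fin p) (Fin p) 𝕜 := Matrix.of (fun k j => b.repr (P (v j)) k) with hC
  have hCsum : ∀ j, ((P (v j)) : X) = ∑ k, C k j • w k := by
    intro j
    have h := congrArg (Subtype.val) (b.sum_repr (P (v j)))
    simp only [AddSubmonoidClass.coe_finset_sum, SetLike.val_smul] at h
    rw [← h]
    exact Finset.sum_congr rfl fun k _ => by
      congr 1
      exact congrArg Subtype.val (Module.Basis.span_apply hw k)
  set A : Matrix (Fin p) (Fin p) 𝕜 := Matrix.of (fun i j => (inner 𝕜 (w i) (w j) : 𝕜)) with hA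
  set B : Matrix (Fin p) (Fin p) 𝕜 := Matrix.of (fun i j => (inner 𝕜 (w i) (v j) : 𝕜)) with hB
  have hwmem : ∀ i, w i ∈ Wsp := fun i => Submodule.subset_span ⟨i, rfl⟩
  have hBP : ∀ i j, B i j = (inner 𝕜 (w i) ((P (v j)) : X) : 𝕜) := by
    intro i j
    have h := Submodule.sub_starProjection_mem_orthogonal (K := Wsp) (v j)
    have h2 := (Submodule.mem_orthogonal _ _).mp h (w i) (hwmem i)
    have : (inner 𝕜 (w i) (v j) : 𝕜) - inner 𝕜 (w i) ((P (v j)) : X) = 0 := by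
      rw [← inner_sub_right]; exact h2
    simpa [B, sub_eq_zero] using this
  have hBAC : B = A * C := by
    ext i j
    rw [show B i j = (inner 𝕜 (w i) ((P (v j)) : X) : 𝕜) from hBP i j, hCsum j]
    simp [Matrix.mul_apply, inner_sum, inner_smul_right, A, mul_comm]
  have hG : (Matrix.of fun i j : Fin p =>
      (inner 𝕜 ((P (v i)) : X) ((P (v j)) : X) : 𝕜)) = Cᴴ * B := by
    ext i j
    simp only [Matrix.of_apply]
    rw [hCsum i]
    simp only [Matrix.mul_apply, Matrix.conjTranspose_apply, sum_inner, inner_smul_left, RCLike.star_def, C]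
    exact Finset.sum_congr rfl fun k _ => by rw [← hBP k j]
  have hA_herm : Aᴴ = A := by
    ext i j; simp [Matrix.conjTranspose_apply, A, inner_conj_symm]
  have hdetA : (starRingEnd 𝕜) A.det = A.det := by
    conv_rhs => rw [← hA_herm]
    rw [Matrix.det_conjTranspose]; rfl
  rw [hG, hBAC, Matrix.det_mul, Matrix.det_mul, Matrix.det_conjTranspose]
  simp only [RCLike.star_def, _root_.map_mul, hdetA]
  ring
end

section
/- Let e : Fin p → X be an orthonormal family spanning a subspace V and f : Fin q → X an orthonormal family spanning a subspace W. Let M be the q×p matrix with entries M_{ij} = ⟪f i, e j⟫ (the matrix of the orthogonal projection from V to W in these bases), and let Q be the orthogonal projection of X onto W⊥. Then det(Gram(Q ∘ e)) = det(1_{q×q} − M · Mᴴ). Equivalently, cos²Θ⊥_{V,W} = det(1 − M Mᴴ). -/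
open scoped Matrix

variable {𝕜 X : Type*} [RCLike 𝕜] [NormedAddCommGroup X] [InnerProductSpace 𝕜 X]
  [FiniteDimensional 𝕜 X]

local notation "⟪" x ", " y "⟫" => @inner 𝕜 _ _ x y

lemma proj_eq_sum_aux {q : ℕ} (W : Submodule 𝕜 X) (f : Fin q → X)
    (hf : Orthonormal 𝕜 f) (hfW : Submodule.span 𝕜 (Set.range f) = W) (x : X) :
    (W.orthogonalProjectionOnto x : X) = ∑ k, ⟪f k, x⟫ • f k := by
  rw [← Submodule.starProjection_apply]
  apply Submodule.eq_starProjection_of_mem_of_inner_eq_zero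
  · exact Submodule.sum_mem _ fun k _ => Submodule.smul_mem _ _
      (hfW ▸ Submodule.subset_span (Set.mem_range_self k))
  · intro w hw
    rw [← hfW] at hw
    induction hw using Submodule.span_induction with
    | mem y hy =>
      obtain ⟨j, rfl⟩ := hy
      rw [inner_sub_left, sum_inner]
      simp [inner_smul_left, orthonormal_iff_ite.mp hf, inner_conj_symm]
    | zero => simp
    | add y z _ _ hy hz => rw [inner_add_right, hy, hz, add_zero]
    | smul c y _ hy => rw [inner_smul_right, hy, mul_zero]

/-- For orthonormal families `e` spanning `V` and `f` spanning `W`, with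
`M i j = ⟪f i, e j⟫` the matrix of the orthogonal projection `V → W` in these bases, and `Q`
the orthogonal projection onto `Wᗮ`: `det (Gram (Q ∘ e)) = det (1 - M * Mᴴ)`.
Equivalently `cos² Θ⊥_{V,W} = det (1 - M Mᴴ)`. -/
theorem complementary_grassmann_angle_orthonormal {p q : ℕ} (V W : Submodule 𝕜 X)
    (e : Fin p → X) (f : Fin q → X)
    (he : Orthonormal 𝕜 e) (heV : Submodule.span 𝕜 (Set.range e) = V)
    (hf : Orthonormal 𝕜 f) (hfW : Submodule.span 𝕜 (Set.range f) = W) :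
    (Matrix.of fun i j : Fin p =>
        (inner 𝕜 (((Wᗮ).orthogonalProjectionOnto (e i) : X)) (((Wᗮ).orthogonalProjectionOnto (e j) : X)) : 𝕜)).det =
    ((1 : Matrix (Fin q) (Fin q) 𝕜) -
        (Matrix.of fun (i : Fin q) (j : Fin p) => (inner 𝕜 (f i) (e j) : 𝕜)) *
          (Matrix.of fun (i : Fin q) (j : Fin p) => (inner 𝕜 (f i) (e j) : 𝕜))ᴴ).det := by
  classical
  set M : Matrix (Fin q) (Fin p) 𝕜 := Matrix.of fun i j => (inner 𝕜 (f i) (e j) : 𝕜) with hM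
  have hgram : (Matrix.of fun i j : Fin p =>
      (inner 𝕜 (((Wᗮ).orthogonalProjectionOnto (e i) : X)) (((Wᗮ).orthogonalProjectionOnto (e j) : X)) : 𝕜)) =
      (1 : Matrix (Fin p) (Fin p) 𝕜) - Mᴴ * M := by
    ext i j
    have hQ : ∀ k, (((Wᗮ).orthogonalProjectionOnto (e k) : X)) =
        e k - ∑ l, ⟪f l, e k⟫ • f l := by
      intro k
      rw [← Submodule.starProjection_apply, Submodule.starProjection_orthogonal_val,
        Submodule.starProjection_apply, proj_eq_sum_aux W f hf hfW]
    rw [Matrix.of_apply, hQ i, hQ j]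
    have hPP : ⟪∑ l, ⟪f l, e i⟫ • f l, ∑ l, ⟪f l, e j⟫ • f l⟫
        = ∑ l, (starRingEnd 𝕜) ⟪f l, e i⟫ * ⟪f l, e j⟫ := by
      rw [sum_inner]
      simp_rw [inner_smul_left, inner_sum, inner_smul_right, orthonormal_iff_ite.mp hf,
        mul_ite, mul_one, mul_zero, Finset.sum_ite_eq, Finset.mem_univ,
        if_true]
    have heP : ⟪e i, ∑ l, ⟪f l, e j⟫ • f l⟫
        = ∑ l, (starRingEnd 𝕜) ⟪f l, e i⟫ * ⟪f l, e j⟫ := by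
      rw [inner_sum]
      congr 1; ext l
      rw [inner_smul_right, ← inner_conj_symm (e i) (f l)]
      ring
    have hPe : ⟪∑ l, ⟪f l, e i⟫ • f l, e j⟫
        = ∑ l, (starRingEnd 𝕜) ⟪f l, e i⟫ * ⟪f l, e j⟫ := by
      rw [sum_inner]
      congr 1; ext l
      rw [inner_smul_left]
    rw [inner_sub_left, inner_sub_right, inner_sub_right, hPP, heP, hPe,
      orthonormal_iff_ite.mp he i j, sub_self, sub_zero]
    simp [Matrix.sub_apply, Matrix.one_apply, Matrix.mul_apply,
      Matrix.conjTranspose_apply, hM]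
  rw [hgram, Matrix.det_one_sub_mul_comm]
end

section
/- Let e : Fin n → X be an orthonormal basis of X and v : Fin p → X a linearly independent family. For each subset I ⊆ Fin n with |I| = p, let W_I = span{e i : i ∈ I} be the corresponding coordinate p-subspace. Then ∑_{I ⊆ Fin n, |I| = p} det(Gram(P_{W_I} ∘ v)) = det(Gram(v)). Equivalently, for V = span(v), ∑_I cos²Θ_{V,W_I} = 1. -/
open Finset Equiv Matrix

theorem my_det_mul_expand {R : Type*} [CommRing R] {p n : ℕ}
    (B : Matrix (Fin p) (Fin n) R) (A : Matrix (Fin n) (Fin p) R) :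
    (B * A).det = ∑ f : Fin p → Fin n, (∏ i, B i (f i)) * (A.submatrix f id).det := by
  have hrow : (fun i => (B * A) i) = fun i => ∑ k : Fin n, B i k • A k := by
    funext i j
    simp [Matrix.mul_apply, Finset.sum_apply]
  calc (B * A).det = Matrix.detRowAlternating (fun i => ∑ k : Fin n, B i k • A k) := by
        rw [← hrow]
        rfl
    _ = ∑ f : Fin p → Fin n,
          Matrix.detRowAlternating (fun i => B i (f i) • A (f i)) :=
        (Matrix.detRowAlternating.toMultilinearMap).map_sum (fun i k => B i k • A k)
    _ = ∑ f : Fin p → Fin n, (∏ i, B i (f i)) * (A.submatrix f id).det := by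
        refine Finset.sum_congr rfl fun f _ => ?_
        refine Eq.trans (Matrix.detRowAlternating.toMultilinearMap.map_smul_univ
          (fun i => B i (f i)) (fun i => A (f i))) ?_
        rw [smul_eq_mul]
        rfl

theorem my_cauchyBinet {R : Type*} [CommRing R] {p n : ℕ}
    (B : Matrix (Fin p) (Fin n) R) (A : Matrix (Fin n) (Fin p) R) :
    (B * A).det = ∑ I ∈ (Finset.powersetCard p (Finset.univ : Finset (Fin n))).attach,
      (B.submatrix id (I.1.orderEmbOfFin (Finset.mem_powersetCard.mp I.2).2)).det *
        (A.submatrix (I.1.orderEmbOfFin (Finset.mem_powersetCard.mp I.2).2) id).det := by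
  classical
  set F : (Fin p → Fin n) → R := fun f => (∏ i, B i (f i)) * (A.submatrix f id).det with hF
  have h1 : (B * A).det = ∑ f : Fin p → Fin n, F f := my_det_mul_expand B A
  have h2 : ∑ f : Fin p → Fin n, F f
      = ∑ f ∈ Finset.univ.filter (fun f : Fin p → Fin n => Function.Injective f), F f := by
    refine (Finset.sum_filter_of_ne fun f _ hne => ?_).symm
    by_contra hinj
    apply hne
    rw [Function.not_injective_iff] at hinj
    obtain ⟨i, j, hij, hne'⟩ := hinj
    have : (A.submatrix f id).det = 0 := by
      refine Matrix.det_zero_of_row_eq hne' ?_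
      funext k
      simp [Matrix.submatrix_apply, hij]
    simp [hF, this]
  have h3 : ∑ x ∈ (Finset.powersetCard p (Finset.univ : Finset (Fin n))).attach ×ˢ
        (Finset.univ : Finset (Equiv.Perm (Fin p))),
        F ((x.1.1.orderEmbOfFin (Finset.mem_powersetCard.mp x.1.2).2) ∘ x.2)
      = ∑ f ∈ Finset.univ.filter (fun f : Fin p → Fin n => Function.Injective f), F f := by
    refine Finset.sum_bij
      (fun x _ => (x.1.1.orderEmbOfFin (Finset.mem_powersetCard.mp x.1.2).2) ∘ x.2)
      (fun x _ => ?_) (fun x hx y hy hxy => ?_) (fun f hf => ?_) (fun x _ => rfl)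
    · simp only [Finset.mem_filter, Finset.mem_univ, true_and]
      exact (x.1.1.orderEmbOfFin _).injective.comp x.2.injective
    · obtain ⟨⟨I, hI⟩, σ⟩ := x
      obtain ⟨⟨J, hJ⟩, τ⟩ := y
      simp only at hxy
      have hrange : (I : Set (Fin n)) = (J : Set (Fin n)) := by
        have h1 : Set.range ((I.orderEmbOfFin (Finset.mem_powersetCard.mp hI).2) ∘ σ)
            = (I : Set (Fin n)) := by
          rw [Set.range_comp, σ.range_eq_univ, Set.image_univ,
            Finset.range_orderEmbOfFin]
        have h2 : Set.range ((J.orderEmbOfFin (Finset.mem_powersetCard.mp hJ).2) ∘ τ)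
            = (J : Set (Fin n)) := by
          rw [Set.range_comp, τ.range_eq_univ, Set.image_univ,
            Finset.range_orderEmbOfFin]
        rw [← h1, ← h2, hxy]
      have hIJ : I = J := Finset.coe_injective hrange
      subst hIJ
      have hστ : σ = τ := Equiv.ext fun k =>
        (I.orderEmbOfFin (Finset.mem_powersetCard.mp hI).2).injective (congrFun hxy k)
      simp [hστ]
    · have hfinj : Function.Injective f := (Finset.mem_filter.mp hf).2
      set I : Finset (Fin n) := Finset.univ.image f with hIdef
      have hcard : I.card = p := by
        rw [hIdef, Finset.card_image_of_injective _ hfinj, Finset.card_univ,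
          Fintype.card_fin]
      have hmem : I ∈ Finset.powersetCard p (Finset.univ : Finset (Fin n)) :=
        Finset.mem_powersetCard.mpr ⟨Finset.subset_univ _, hcard⟩
      have hfk : ∀ k, f k ∈ I := fun k => Finset.mem_image_of_mem f (Finset.mem_univ k)
      set g : Fin p → Fin p := fun k => (I.orderIsoOfFin hcard).symm ⟨f k, hfk k⟩ with hg
      have hginj : Function.Injective g := by
        intro a b hab
        apply hfinj
        have := congrArg (fun z => ((I.orderIsoOfFin hcard) z : Fin n)) hab
        simpa [hg] using this
      set σ : Equiv.Perm (Fin p) :=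
        Equiv.ofBijective g ((Finite.injective_iff_bijective).mp hginj) with hσ
      refine ⟨(⟨I, hmem⟩, σ), Finset.mem_product.mpr ⟨Finset.mem_attach _ _,
        Finset.mem_univ _⟩, ?_⟩
      funext k
      show I.orderEmbOfFin _ (σ k) = f k
      have : σ k = g k := rfl
      rw [this, hg]
      rw [← Finset.coe_orderIsoOfFin_apply]
      simp
  have h4 : ∑ x ∈ (Finset.powersetCard p (Finset.univ : Finset (Fin n))).attach ×ˢ
        (Finset.univ : Finset (Equiv.Perm (Fin p))),
        F ((x.1.1.orderEmbOfFin (Finset.mem_powersetCard.mp x.1.2).2) ∘ x.2)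
      = ∑ I ∈ (Finset.powersetCard p (Finset.univ : Finset (Fin n))).attach,
        ∑ σ : Equiv.Perm (Fin p),
          F ((I.1.orderEmbOfFin (Finset.mem_powersetCard.mp I.2).2) ∘ σ) := by
    rw [Finset.sum_product]
  rw [h1, h2, ← h3, h4]
  refine Finset.sum_congr rfl fun I _ => ?_
  set m := I.1.orderEmbOfFin (Finset.mem_powersetCard.mp I.2).2 with hm
  calc ∑ σ : Equiv.Perm (Fin p), F (⇑m ∘ σ)
      = ∑ σ : Equiv.Perm (Fin p), ((Equiv.Perm.sign σ : ℤ) : R)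
          * (∏ i, B i (m (σ i))) * (A.submatrix m id).det := by
        refine Finset.sum_congr rfl fun σ _ => ?_
        have hsub : A.submatrix (⇑m ∘ σ) id = (A.submatrix m id).submatrix σ id := by
          rw [Matrix.submatrix_submatrix]
          rfl
        rw [hF]
        simp only [Function.comp_apply, hsub, Matrix.det_permute]
        push_cast
        ring
    _ = (∑ σ : Equiv.Perm (Fin p), ((Equiv.Perm.sign σ : ℤ) : R)
          * ∏ i, B i (m (σ i))) * (A.submatrix m id).det := by
        rw [Finset.sum_mul]
    _ = (B.submatrix id m).det * (A.submatrix m id).det := by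
        congr 1
        rw [← Matrix.det_transpose, Matrix.transpose_submatrix, Matrix.det_apply']
        rfl

variable {𝕜 X : Type*} [RCLike 𝕜] [NormedAddCommGroup X] [InnerProductSpace 𝕜 X]
  [FiniteDimensional 𝕜 X]

local notation "⟪" x ", " y "⟫" => @inner 𝕜 _ _ x y

theorem my_proj_inner {n p : ℕ} {e : Fin n → X} (he : Orthonormal 𝕜 e)
    {m : Fin p → Fin n} (hm : Function.Injective m) {I : Finset (Fin n)}
    (hrange : Set.range (e ∘ m) = e '' (I : Set (Fin n))) (x y : X) :
    ⟪(Submodule.orthogonalProjection (Submodule.span 𝕜 (e '' (I : Set (Fin n)))) x : X),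
      (Submodule.orthogonalProjection (Submodule.span 𝕜 (e '' (I : Set (Fin n)))) y : X)⟫ =
      ∑ k, ⟪x, e (m k)⟫ * ⟪e (m k), y⟫ := by
  classical
  rw [← hrange]
  set U := Submodule.span 𝕜 (Set.range (e ∘ m)) with hU
  have hw : Orthonormal 𝕜 (e ∘ m) := he.comp m hm
  set bas : Module.Basis (Fin p) 𝕜 U := Module.Basis.span hw.linearIndependent with hbasdef
  have hbas : ∀ k, (bas k : X) = e (m k) := fun k =>
    congrArg Subtype.val (Module.Basis.span_apply hw.linearIndependent k)
  have honb : Orthonormal 𝕜 ⇑bas := by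
    have h1 := hw.codRestrict U fun k => Submodule.subset_span ⟨k, rfl⟩
    have h2 : ⇑bas = Set.codRestrict (e ∘ m) U
        (fun k => Submodule.subset_span ⟨k, rfl⟩) := by
      funext k
      exact Subtype.ext (hbas k)
    rw [h2]
    exact h1
  set bU := bas.toOrthonormalBasis honb with hbU
  have hbUc : ∀ k, (bU k : X) = e (m k) := by
    intro k
    rw [hbU, show (bas.toOrthonormalBasis honb) k = bas k from
      congrFun (bas.coe_toOrthonormalBasis honb) k]
    exact hbas k
  have hproj : ∀ w : X, w ∈ U → ⟪(Submodule.orthogonalProjection U x : X), w⟫ = ⟪x, w⟫ := by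
    intro w hwU
    have h0 : ⟪x - (Submodule.orthogonalProjection U x : X), w⟫ = 0 :=
      U.starProjection_inner_eq_zero x w hwU
    rw [inner_sub_left, sub_eq_zero] at h0
    exact h0.symm
  rw [show Submodule.orthogonalProjection U y = ∑ i, ⟪(bU i : X), y⟫ • bU i from
    bU.orthogonalProjectionOnto_apply_eq_sum y]
  push_cast
  rw [inner_sum]
  refine Finset.sum_congr rfl fun k _ => ?_
  rw [inner_smul_right, hbUc, hproj (e (m k)) (Submodule.subset_span ⟨k, rfl⟩)]
  ring

/-- Let `e : Fin n → X` be an orthonormal basis of `X` and `v : Fin p → X` a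
linearly independent family.  Summing over all `p`-element subsets `I` of `Fin n`, with
`W_I = span {e i : i ∈ I}`: `∑_I det (Gram (P_{W_I} ∘ v)) = det (Gram v)`.
Equivalently, for `V = span v`, `∑_I cos² Θ_{V,W_I} = 1`. -/
theorem sum_sq_cos_grassmann_coordinate_subspaces {n p : ℕ} (e : Fin n → X)
    (he : Orthonormal 𝕜 e) (heX : Submodule.span 𝕜 (Set.range e) = ⊤)
    (v : Fin p → X) (hv : LinearIndependent 𝕜 v) :
    ∑ I ∈ Finset.powersetCard p (Finset.univ : Finset (Fin n)),
        (Matrix.of fun i j : Fin p =>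
          (inner 𝕜 ((Submodule.orthogonalProjection (Submodule.span 𝕜 (e '' ↑I)) (v i) : X))
                 ((Submodule.orthogonalProjection (Submodule.span 𝕜 (e '' ↑I)) (v j) : X)) : 𝕜)).det =
      (Matrix.of fun i j : Fin p => (inner 𝕜 (v i) (v j) : 𝕜)).det := by
  classical
  set A : Matrix (Fin n) (Fin p) 𝕜 := Matrix.of fun k i => ⟪e k, v i⟫ with hA
  set B : Matrix (Fin p) (Fin n) 𝕜 := Matrix.of fun i k => ⟪v i, e k⟫ with hB
  let bX : OrthonormalBasis (Fin n) 𝕜 X := OrthonormalBasis.mk he heX.ge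
  have hbX : ∀ k, bX k = e k := fun k => congrFun (OrthonormalBasis.coe_mk he heX.ge) k
  have hR : Matrix.of (fun i j : Fin p => (⟪v i, v j⟫ : 𝕜)) = B * A := by
    ext i j
    simp only [Matrix.of_apply, Matrix.mul_apply]
    rw [← bX.sum_inner_mul_inner (v i) (v j)]
    refine Finset.sum_congr rfl fun k _ => ?_
    rw [hbX]
    rfl
  rw [← Finset.sum_attach (Finset.powersetCard p (Finset.univ : Finset (Fin n)))
    (fun I => (Matrix.of fun i j : Fin p =>
      (inner 𝕜 ((Submodule.orthogonalProjection (Submodule.span 𝕜 (e '' ↑I)) (v i) : X))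
             ((Submodule.orthogonalProjection (Submodule.span 𝕜 (e '' ↑I)) (v j) : X)) : 𝕜)).det),
    show (Matrix.of fun i j : Fin p => (inner 𝕜 (v i) (v j) : 𝕜)).det = (B * A).det from by
      rw [hR], my_cauchyBinet]
  refine Finset.sum_congr rfl fun I _ => ?_
  set m := I.1.orderEmbOfFin (Finset.mem_powersetCard.mp I.2).2 with hm
  have hrange : Set.range (e ∘ m) = e '' (I.1 : Set (Fin n)) := by
    rw [Set.range_comp, Finset.range_orderEmbOfFin]
  have hmat : (Matrix.of fun i j : Fin p =>
      (inner 𝕜 ((Submodule.orthogonalProjection (Submodule.span 𝕜 (e '' ↑I.1)) (v i) : X))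
             ((Submodule.orthogonalProjection (Submodule.span 𝕜 (e '' ↑I.1)) (v j) : X)) : 𝕜)) =
      (B.submatrix id m) * (A.submatrix m id) := by
    ext i j
    rw [Matrix.mul_apply]
    rw [show ((Matrix.of fun i j : Fin p =>
      (inner 𝕜 ((Submodule.orthogonalProjection (Submodule.span 𝕜 (e '' ↑I.1)) (v i) : X))
             ((Submodule.orthogonalProjection (Submodule.span 𝕜 (e '' ↑I.1)) (v j) : X)) : 𝕜)) i j) =
      ∑ k, ⟪v i, e (m k)⟫ * ⟪e (m k), v j⟫ from
      my_proj_inner he m.injective hrange (v i) (v j)]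
    rfl
  rw [hmat, Matrix.det_mul]
end

section
/- Let e : Fin n → X be an orthonormal basis of X, v : Fin p → X a linearly independent family, and q an integer with p ≤ q ≤ n. For each subset I ⊆ Fin n with |I| = q, let W_I = span{e i : i ∈ I}. Then ∑_{I ⊆ Fin n, |I| = q} det(Gram(P_{W_I} ∘ v)) = C(n−p, n−q) · det(Gram(v)), where C denotes the binomial coefficient. Equivalently, for V = span(v), ∑_I cos²Θ_{V,W_I} = C(n−p, n−q). -/
variable {𝕜 X : Type*} [RCLike 𝕜] [NormedAddCommGroup X] [InnerProductSpace 𝕜 X]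
  [FiniteDimensional 𝕜 X]

open Finset

/-- Multilinear expansion of the determinant of a matrix whose rows are sums of
scaled rows of another matrix. -/
private lemma det_sum_rows_aux {R : Type*} [CommRing R] {p n : ℕ}
    (A B : Matrix (Fin n) (Fin p) R) (s : Finset (Fin n)) :
    (Matrix.of fun i j : Fin p => ∑ k ∈ s, B k i * A k j).det
      = ∑ f ∈ Fintype.piFinset (fun _ : Fin p => s),
          (∏ i, B (f i) i) * (Matrix.of fun i j : Fin p => A (f i) j).det := by
  classical
  have h1 : (Matrix.of fun i j : Fin p => ∑ k ∈ s, B k i * A k j)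
      = fun i => ∑ k ∈ s, B k i • A k := by
    ext i j
    simp [Finset.sum_apply]
  show (Matrix.detRowAlternating (Matrix.of fun i j : Fin p => ∑ k ∈ s, B k i * A k j)) = _
  rw [h1]
  rw [show (Matrix.detRowAlternating : (Fin p → R) [⋀^Fin p]→ₗ[R] R)
        (fun i => ∑ k ∈ s, B k i • A k)
      = (Matrix.detRowAlternating : (Fin p → R) [⋀^Fin p]→ₗ[R] R).toMultilinearMap
        (fun i => ∑ k ∈ s, B k i • A k) from rfl]
  rw [MultilinearMap.map_sum_finset]
  refine Finset.sum_congr rfl fun f _ => ?_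
  rw [MultilinearMap.map_smul_univ]
  simp only [smul_eq_mul]
  rfl

/-- Counting `q`-element subsets of `Fin n` containing a fixed `p`-element subset. -/
private lemma count_supersets_aux {n p q : ℕ} (hpq : p ≤ q) (hqn : q ≤ n)
    (t : Finset (Fin n)) (ht : t.card = p) :
    ((Finset.powersetCard q (Finset.univ : Finset (Fin n))).filter fun I => t ⊆ I).card
      = (n - p).choose (q - p) := by
  classical
  have hcard : ((Finset.powersetCard q (Finset.univ : Finset (Fin n))).filter
      fun I => t ⊆ I).card = (Finset.powersetCard (q - p) tᶜ).card := by
    apply Finset.card_bij' (fun I _ => I \ t) (fun J _ => J ∪ t)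
    · intro I hI
      rw [Finset.mem_filter, Finset.mem_powersetCard] at hI
      rw [Finset.mem_powersetCard]
      refine ⟨fun x hx => ?_, ?_⟩
      · rw [Finset.mem_compl]
        exact (Finset.mem_sdiff.mp hx).2
      · rw [Finset.card_sdiff_of_subset hI.2, hI.1.2, ht]
    · intro J hJ
      rw [Finset.mem_powersetCard] at hJ
      have hdisj : Disjoint J t :=
        Finset.disjoint_left.mpr fun {x} hx => Finset.mem_compl.mp (hJ.1 hx)
      rw [Finset.mem_filter, Finset.mem_powersetCard]
      refine ⟨⟨Finset.subset_univ _, ?_⟩, Finset.subset_union_right⟩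
      rw [Finset.card_union_of_disjoint hdisj, hJ.2, ht]
      omega
    · intro I hI
      rw [Finset.mem_filter] at hI
      exact Finset.sdiff_union_of_subset hI.2
    · intro J hJ
      rw [Finset.mem_powersetCard] at hJ
      have hdisj : Disjoint J t :=
        Finset.disjoint_left.mpr fun {x} hx => Finset.mem_compl.mp (hJ.1 hx)
      rw [Finset.union_sdiff_distrib, Finset.sdiff_self, Finset.union_empty,
        Finset.sdiff_eq_self_of_disjoint hdisj]
  rw [hcard, Finset.card_powersetCard, Finset.card_compl, ht, Fintype.card_fin]

/-- Entries of the Gram matrix of projections onto a coordinate subspace. -/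
private lemma gram_proj_entry_aux {n : ℕ} (e : Fin n → X) (he : Orthonormal 𝕜 e)
    (I : Finset (Fin n)) (x y : X) :
    (inner 𝕜 ((Submodule.orthogonalProjection (Submodule.span 𝕜 (e '' ↑I)) x : X))
           ((Submodule.orthogonalProjection (Submodule.span 𝕜 (e '' ↑I)) y : X)) : 𝕜)
      = ∑ k ∈ I, (starRingEnd 𝕜) (inner 𝕜 (e k) x : 𝕜) * (inner 𝕜 (e k) y : 𝕜) := by
  classical
  rw [show (e '' (↑I : Set (Fin n))) = (↑(I.image e) : Set X) from (Finset.coe_image).symm]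
  set U : Submodule 𝕜 X := Submodule.span 𝕜 (↑(I.image e) : Set X) with hU
  let b : OrthonormalBasis I 𝕜 U := OrthonormalBasis.span he I
  have hproj : ∀ z : X, ((Submodule.orthogonalProjection U z : U) : X)
      = ∑ k ∈ I.attach, (inner 𝕜 (e (k : Fin n)) z : 𝕜) • e (k : Fin n) := by
    intro z
    rw [b.orthogonalProjectionOnto_apply_eq_sum z]
    push_cast
    rw [Finset.univ_eq_attach]
    refine Finset.sum_congr rfl fun k _ => ?_
    rw [OrthonormalBasis.span_apply]
  have h1 : (inner 𝕜 ((Submodule.orthogonalProjection U x : U) : X)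
      ((Submodule.orthogonalProjection U y : U) : X) : 𝕜)
      = (inner 𝕜 x ((Submodule.orthogonalProjection U y : U) : X) : 𝕜) := by
    exact U.inner_orthogonalProjectionOnto_eq_of_mem_right _ _
  rw [h1, hproj y, inner_sum]
  rw [← Finset.sum_attach I
    (fun k => (starRingEnd 𝕜) (inner 𝕜 (e k) x : 𝕜) * (inner 𝕜 (e k) y : 𝕜))]
  refine Finset.sum_congr rfl fun k _ => ?_
  rw [inner_smul_right, ← inner_conj_symm x (e (k : Fin n))]
  ring

/-- Let `e : Fin n → X` be an orthonormal basis of `X`, `v : Fin p → X` a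
linearly independent family, and `p ≤ q ≤ n`.  Summing over all `q`-element subsets `I` of
`Fin n`, with `W_I = span {e i : i ∈ I}`:
`∑_I det (Gram (P_{W_I} ∘ v)) = C(n-p, n-q) * det (Gram v)`.
Equivalently, for `V = span v`, `∑_I cos² Θ_{V,W_I} = C(n-p, n-q)`. -/
theorem sum_sq_cos_grassmann_coordinate_subspaces_higher_dim {n p q : ℕ} (e : Fin n → X)
    (he : Orthonormal 𝕜 e) (heX : Submodule.span 𝕜 (Set.range e) = ⊤)
    (v : Fin p → X) (hv : LinearIndependent 𝕜 v)
    (hpq : p ≤ q) (hqn : q ≤ n) :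
    ∑ I ∈ Finset.powersetCard q (Finset.univ : Finset (Fin n)),
        (Matrix.of fun i j : Fin p =>
          (inner 𝕜 ((Submodule.orthogonalProjection (Submodule.span 𝕜 (e '' ↑I)) (v i) : X))
                 ((Submodule.orthogonalProjection (Submodule.span 𝕜 (e '' ↑I)) (v j) : X)) : 𝕜)).det =
      ((n - p).choose (n - q) : 𝕜) *
        (Matrix.of fun i j : Fin p => (inner 𝕜 (v i) (v j) : 𝕜)).det := by
  classical
  set A : Matrix (Fin n) (Fin p) 𝕜 := Matrix.of fun k i => (inner 𝕜 (e k) (v i) : 𝕜) with hA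
  set B : Matrix (Fin n) (Fin p) 𝕜 :=
    Matrix.of fun k i => (starRingEnd 𝕜) (inner 𝕜 (e k) (v i) : 𝕜) with hB
  set g : (Fin p → Fin n) → 𝕜 :=
    fun f => (∏ i, B (f i) i) * (Matrix.of fun i j : Fin p => A (f i) j).det with hg
  -- orthonormal basis of X
  let bas : Module.Basis (Fin n) 𝕜 X := Module.Basis.mk he.linearIndependent heX.ge
  have hbas : ⇑bas = e := Module.Basis.coe_mk _ _
  let ob : OrthonormalBasis (Fin n) 𝕜 X := bas.toOrthonormalBasis (hbas ▸ he)
  have hob : ∀ k, ob k = e k := fun k => by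
    rw [show ob k = bas k from congrFun (Module.Basis.coe_toOrthonormalBasis _ _) k, hbas]
  -- Gram matrix of v
  have hGram : (Matrix.of fun i j : Fin p => (inner 𝕜 (v i) (v j) : 𝕜))
      = Matrix.of fun i j : Fin p => ∑ k ∈ Finset.univ, B k i * A k j := by
    ext i j
    simp only [Matrix.of_apply, hA, hB]
    rw [← ob.sum_inner_mul_inner (v i) (v j)]
    refine Finset.sum_congr rfl fun k _ => ?_
    simp [hob, inner_conj_symm]
  -- each projected Gram matrix
  have hGramI : ∀ I : Finset (Fin n),
      (Matrix.of fun i j : Fin p =>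
          (inner 𝕜 ((Submodule.orthogonalProjection (Submodule.span 𝕜 (e '' ↑I)) (v i) : X))
                 ((Submodule.orthogonalProjection (Submodule.span 𝕜 (e '' ↑I)) (v j) : X)) : 𝕜))
      = Matrix.of fun i j : Fin p => ∑ k ∈ I, B k i * A k j := by
    intro I
    ext i j
    simp only [Matrix.of_apply, hA, hB]
    exact gram_proj_entry_aux e he I (v i) (v j)
  -- rewrite both sides via det_sum_rows_aux
  have hRHS : (Matrix.of fun i j : Fin p => (inner 𝕜 (v i) (v j) : 𝕜)).det
      = ∑ f : Fin p → Fin n, g f := by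
    rw [hGram, det_sum_rows_aux A B Finset.univ, Fintype.piFinset_univ]
  have hpiI : ∀ I : Finset (Fin n), Fintype.piFinset (fun _ : Fin p => I)
      = Finset.univ.filter (fun f : Fin p → Fin n => ∀ i, f i ∈ I) := by
    intro I
    ext f
    simp [Fintype.mem_piFinset]
  have hLHS : ∀ I : Finset (Fin n),
      (Matrix.of fun i j : Fin p =>
          (inner 𝕜 ((Submodule.orthogonalProjection (Submodule.span 𝕜 (e '' ↑I)) (v i) : X))
                 ((Submodule.orthogonalProjection (Submodule.span 𝕜 (e '' ↑I)) (v j) : X)) : 𝕜)).det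
      = ∑ f : Fin p → Fin n, if (∀ i, f i ∈ I) then g f else 0 := by
    intro I
    rw [hGramI I, det_sum_rows_aux A B I, hpiI I, Finset.sum_filter]
  calc
    ∑ I ∈ Finset.powersetCard q (Finset.univ : Finset (Fin n)),
        (Matrix.of fun i j : Fin p =>
          (inner 𝕜 ((Submodule.orthogonalProjection (Submodule.span 𝕜 (e '' ↑I)) (v i) : X))
                 ((Submodule.orthogonalProjection (Submodule.span 𝕜 (e '' ↑I)) (v j) : X)) : 𝕜)).det
      = ∑ I ∈ Finset.powersetCard q (Finset.univ : Finset (Fin n)),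
          ∑ f : Fin p → Fin n, if (∀ i, f i ∈ I) then g f else 0 :=
        Finset.sum_congr rfl fun I _ => hLHS I
    _ = ∑ f : Fin p → Fin n, ∑ I ∈ Finset.powersetCard q (Finset.univ : Finset (Fin n)),
          if (∀ i, f i ∈ I) then g f else 0 := Finset.sum_comm
    _ = ∑ f : Fin p → Fin n,
          (((Finset.powersetCard q (Finset.univ : Finset (Fin n))).filter
            fun I => ∀ i, f i ∈ I).card : 𝕜) * g f := by
        refine Finset.sum_congr rfl fun f _ => ?_
        rw [← Finset.sum_filter, Finset.sum_const, nsmul_eq_mul]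
    _ = ∑ f : Fin p → Fin n, ((n - p).choose (n - q) : 𝕜) * g f := by
        refine Finset.sum_congr rfl fun f _ => ?_
        by_cases hf : Function.Injective f
        · congr 2
          have hfilter : ((Finset.powersetCard q (Finset.univ : Finset (Fin n))).filter
              fun I => ∀ i, f i ∈ I)
              = ((Finset.powersetCard q (Finset.univ : Finset (Fin n))).filter
              fun I => Finset.image f Finset.univ ⊆ I) := by
            refine Finset.filter_congr fun I _ => ?_
            constructor
            · intro h x hx
              obtain ⟨i, _, rfl⟩ := Finset.mem_image.mp hx
              exact h i
            · intro h i
              exact h (Finset.mem_image_of_mem f (Finset.mem_univ i))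
          rw [hfilter, count_supersets_aux hpq hqn _
            (by rw [Finset.card_image_of_injective _ hf, Finset.card_univ, Fintype.card_fin])]
          have : n - p - (q - p) = n - q := by omega
          rw [← Nat.choose_symm (by omega : q - p ≤ n - p), this]
        · have hz : g f = 0 := by
            rw [Function.not_injective_iff] at hf
            obtain ⟨i, j, hij, hne⟩ := hf
            have hdet : (Matrix.of fun i j : Fin p => A (f i) j).det = 0 :=
              Matrix.det_zero_of_row_eq hne (by ext k; simp [hij])
            simp only [hg]
            rw [hdet, mul_zero]
          rw [hz, mul_zero, mul_zero]
    _ = ((n - p).choose (n - q) : 𝕜) *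
        (Matrix.of fun i j : Fin p => (inner 𝕜 (v i) (v j) : 𝕜)).det := by
        rw [← Finset.mul_sum, hRHS]
end

section
/- Let e : Fin n → X be an orthonormal basis of X, V ⊆ X a subspace of dimension p, P the orthogonal projection onto V, and q an integer with 1 ≤ q < p. Then ∑_{I ⊆ Fin n, |I| = q} det( (⟪P(e i), P(e j)⟫)_{i,j ∈ I} ) = C(p, q), where for each q-element subset I the determinant is that of the q×q Gram matrix of the family (P(e i))_{i ∈ I}, and C denotes the binomial coefficient. Equivalently, with W_I = span{e i : i ∈ I}, ∑_I cos²Θ_{W_I,V} = C(p, q). -/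
set_option linter.unusedSectionVars false
set_option maxHeartbeats 1000000

open Finset Matrix Equiv

section CB

variable {α : Type*} [Fintype α] [LinearOrder α] {q : ℕ}

private theorem strictMono_eq_of_range_eq {f g : Fin q → α} (hf : StrictMono f)
    (hg : StrictMono g) (h : Set.range f = Set.range g) : f = g := by
  have hwf : WellFoundedLT (Fin q) := inferInstance
  exact (@StrictMono.range_inj (Fin q) α inferInstance inferInstance hwf f g hf hg).1 h

private theorem strictMono_eq_of_image_eq {f g : Fin q → α} (hf : StrictMono f)
    (hg : StrictMono g) (h : Finset.image f Finset.univ = Finset.image g Finset.univ) :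
    f = g := by
  refine strictMono_eq_of_range_eq hf hg ?_
  rw [← Set.image_univ, ← Set.image_univ, ← Finset.coe_univ, ← Finset.coe_image,
    ← Finset.coe_image, h]

private theorem image_card {p : Fin q → α} (hp : Function.Injective p) :
    (Finset.image p Finset.univ).card = q := by
  rw [Finset.card_image_of_injective _ hp, Finset.card_univ, Fintype.card_fin]

private noncomputable def sortOf (p : Fin q → α) (hp : Function.Injective p) : Fin q → α :=
  ⇑((Finset.image p Finset.univ).orderEmbOfFin (image_card hp))

private theorem sortOf_strictMono (p : Fin q → α) (hp : Function.Injective p) :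
    StrictMono (sortOf p hp) :=
  ((Finset.image p Finset.univ).orderEmbOfFin (image_card hp)).strictMono

private noncomputable def permOf (p : Fin q → α) (hp : Function.Injective p) :
    Equiv.Perm (Fin q) :=
  (Equiv.ofBijective
      (fun i => (⟨p i, Finset.mem_image_of_mem p (Finset.mem_univ i)⟩ :
        (Finset.image p Finset.univ : Finset α)))
      (by
        rw [Fintype.bijective_iff_injective_and_card, Fintype.card_coe, image_card hp]
        exact ⟨fun a b h => hp (congrArg Subtype.val h), by simp⟩)).trans
    ((Finset.image p Finset.univ).orderIsoOfFin (image_card hp)).toEquiv.symm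

private theorem sortOf_permOf (p : Fin q → α) (hp : Function.Injective p) :
    sortOf p hp ∘ permOf p hp = p := by
  funext i
  simp only [sortOf, permOf, Function.comp_apply, Equiv.trans_apply]
  rw [← Finset.coe_orderIsoOfFin_apply]
  simp

private theorem image_comp_perm (f : Fin q → α) (τ : Equiv.Perm (Fin q)) :
    Finset.image (f ∘ τ) Finset.univ = Finset.image f Finset.univ := by
  ext x
  simp only [Finset.mem_image, Function.comp_apply, Finset.mem_univ, true_and]
  constructor
  · rintro ⟨i, rfl⟩; exact ⟨τ i, rfl⟩
  · rintro ⟨i, rfl⟩; exact ⟨τ.symm i, by simp⟩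

private theorem image_sortOf (p : Fin q → α) (hp : Function.Injective p) :
    Finset.image (sortOf p hp) Finset.univ = Finset.image p Finset.univ := by
  apply Finset.coe_injective
  rw [Finset.coe_image, Finset.coe_univ, Set.image_univ, sortOf, Finset.range_orderEmbOfFin]

private theorem sortOf_comp_perm {f : Fin q → α} (hf : StrictMono f) (τ : Equiv.Perm (Fin q))
    (h : Function.Injective (f ∘ τ)) : sortOf (f ∘ τ) h = f := by
  refine strictMono_eq_of_image_eq (sortOf_strictMono _ h) hf ?_
  rw [image_sortOf, image_comp_perm]

private theorem permOf_comp_perm {f : Fin q → α} (hf : StrictMono f) (τ : Equiv.Perm (Fin q))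
    (h : Function.Injective (f ∘ τ)) : permOf (f ∘ τ) h = τ := by
  have h1 := sortOf_permOf (f ∘ τ) h
  rw [sortOf_comp_perm hf τ h] at h1
  exact Equiv.ext fun i => hf.injective (congrFun h1 i)

private theorem sum_filter_injective_eq {M : Type*} [AddCommMonoid M]
    [DecidablePred (fun p : Fin q → α => Function.Injective p)]
    [DecidablePred (fun f : Fin q → α => StrictMono f)]
    (F : (Fin q → α) → M) :
    ∑ p ∈ Finset.univ.filter (fun p : Fin q → α => Function.Injective p), F p =
      ∑ f ∈ Finset.univ.filter (fun f : Fin q → α => StrictMono f),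
        ∑ τ : Equiv.Perm (Fin q), F (f ∘ τ) := by
  classical
  rw [← Finset.sum_product']
  refine Finset.sum_bij'
    (fun p hp => (sortOf p (Finset.mem_filter.1 hp).2, permOf p (Finset.mem_filter.1 hp).2))
    (fun x _ => x.1 ∘ x.2) ?_ ?_ ?_ ?_ ?_
  · intro p hp
    refine Finset.mem_product.2 ⟨Finset.mem_filter.2 ⟨Finset.mem_univ _, ?_⟩, Finset.mem_univ _⟩
    exact sortOf_strictMono p (Finset.mem_filter.1 hp).2
  · intro x hx
    have hsm : StrictMono x.1 := (Finset.mem_filter.1 (Finset.mem_product.1 hx).1).2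
    exact Finset.mem_filter.2 ⟨Finset.mem_univ _, hsm.injective.comp x.2.injective⟩
  · intro p hp
    exact sortOf_permOf p (Finset.mem_filter.1 hp).2
  · intro x hx
    have hsm : StrictMono x.1 := (Finset.mem_filter.1 (Finset.mem_product.1 hx).1).2
    have hinj : Function.Injective (x.1 ∘ x.2) := hsm.injective.comp x.2.injective
    exact Prod.ext (sortOf_comp_perm hsm x.2 hinj) (permOf_comp_perm hsm x.2 hinj)
  · intro p hp
    exact (congrArg F (sortOf_permOf p (Finset.mem_filter.1 hp).2)).symm

section Det

open Equiv.Perm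

variable {R : Type*} [CommRing R] {q : ℕ}

local notation "ε " σ:max => ((sign σ : ℤ) : R)

private theorem cb_aux {m : Type*} [Fintype m]
    (A : Matrix (Fin q) m R) (B : Matrix m (Fin q) R) {p : Fin q → m}
    (H : ¬Function.Injective p) :
    (∑ σ : Equiv.Perm (Fin q), ε σ * ∏ x, A (σ x) (p x) * B (p x) x) = 0 := by
  obtain ⟨i, j, hpij, hij⟩ : ∃ i j, p i = p j ∧ i ≠ j := by
    rw [Function.Injective] at H
    push_neg at H
    obtain ⟨i, j, h1, h2⟩ := H
    exact ⟨i, j, h1, h2⟩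
  exact Finset.sum_involution (fun σ _ => σ * Equiv.swap i j)
    (fun σ _ => by
      have : (∏ x, A (σ x) (p x)) = ∏ x, A ((σ * Equiv.swap i j) x) (p x) :=
        Fintype.prod_equiv (Equiv.swap i j) _ _ (by simp [apply_swap_eq_self hpij])
      simp [this, sign_swap hij, -sign_swap', Finset.prod_mul_distrib])
    (fun σ _ _ => (not_congr mul_swap_eq_iff).mpr hij) (fun _ _ => Finset.mem_univ _)
    fun σ _ => mul_swap_involutive i j σ

private theorem sum_perm_mul (M N : Matrix (Fin q) (Fin q) R) :
    ∑ τ : Equiv.Perm (Fin q), ∑ σ : Equiv.Perm (Fin q),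
        ε σ * ∏ i, M (σ i) (τ i) * N (τ i) i = M.det * N.det :=
  calc
    ∑ τ : Equiv.Perm (Fin q), ∑ σ : Equiv.Perm (Fin q),
        ε σ * ∏ i, M (σ i) (τ i) * N (τ i) i
      = ∑ σ : Equiv.Perm (Fin q), ∑ τ : Equiv.Perm (Fin q),
          (∏ i, N (σ i) i) * ε τ * ∏ j, M (τ j) (σ j) := by
        simp only [mul_comm, mul_left_comm, Finset.prod_mul_distrib, mul_assoc]
    _ = ∑ σ : Equiv.Perm (Fin q), ∑ τ : Equiv.Perm (Fin q),
          (∏ i, N (σ i) i) * (ε σ * ε τ) * ∏ i, M (τ i) i :=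
      Finset.sum_congr rfl fun σ _ =>
        Fintype.sum_equiv (Equiv.mulRight σ⁻¹) _ _ fun τ => by
          have : (∏ j, M (τ j) (σ j)) = ∏ j, M ((τ * σ⁻¹) j) j := by
            rw [← (σ⁻¹ : _ ≃ _).prod_comp]
            simp only [Equiv.Perm.coe_mul, Equiv.Perm.inv_def, Equiv.apply_symm_apply, Function.comp_apply]
          have h : ε σ * ε (τ * σ⁻¹) = ε τ :=
            calc
              ε σ * ε (τ * σ⁻¹) = ε ((τ * σ⁻¹) * σ) := by
                rw [mul_comm, sign_mul (τ * σ⁻¹)]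
                simp only [Int.cast_mul, Units.val_mul]
              _ = ε τ := by simp only [inv_mul_cancel_right]
          simp_rw [Equiv.coe_mulRight, h]
          simp only [this]
    _ = M.det * N.det := by
      simp only [Matrix.det_apply', Finset.mul_sum, mul_comm, mul_left_comm, mul_assoc]

private theorem cauchy_binet {m : Type*} [Fintype m] [DecidableEq m] [LinearOrder m]
    [DecidablePred (fun f : Fin q → m => StrictMono f)]
    (A : Matrix (Fin q) m R) (B : Matrix m (Fin q) R) :
    (A * B).det = ∑ f ∈ Finset.univ.filter (fun f : Fin q → m => StrictMono f),
      (A.submatrix id f).det * (B.submatrix f id).det := by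
  classical
  have step1 : (A * B).det = ∑ p : Fin q → m, ∑ σ : Equiv.Perm (Fin q),
      ε σ * ∏ i, A (σ i) (p i) * B (p i) i := by
    simp only [Matrix.det_apply', Matrix.mul_apply, Finset.prod_univ_sum, Finset.mul_sum,
      Fintype.piFinset_univ]
    rw [Finset.sum_comm]
  have step2 : ∑ p : Fin q → m, ∑ σ : Equiv.Perm (Fin q),
      ε σ * ∏ i, A (σ i) (p i) * B (p i) i
      = ∑ p ∈ Finset.univ.filter (fun p : Fin q → m => Function.Injective p),
          ∑ σ : Equiv.Perm (Fin q), ε σ * ∏ i, A (σ i) (p i) * B (p i) i :=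
    (Finset.sum_subset (Finset.filter_subset _ _) fun p _ hp =>
      cb_aux A B (by simpa using hp)).symm
  rw [step1, step2,
    sum_filter_injective_eq (fun p => ∑ σ : Equiv.Perm (Fin q),
      ε σ * ∏ i, A (σ i) (p i) * B (p i) i)]
  exact Finset.sum_congr rfl fun f _ => sum_perm_mul (A.submatrix id f) (B.submatrix f id)

end Det

private theorem card_filter_strictMono {p q : ℕ}
    [DecidablePred (fun f : Fin q → Fin p => StrictMono f)] :
    (Finset.univ.filter (fun f : Fin q → Fin p => StrictMono f)).card = p.choose q := by
  classical
  have : (Finset.univ.filter (fun f : Fin q → Fin p => StrictMono f)).card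
      = (Finset.powersetCard q (Finset.univ : Finset (Fin p))).card := by
    refine Finset.card_bij (fun f _ => Finset.image f Finset.univ) ?_ ?_ ?_
    · intro f hf
      rw [Finset.mem_powersetCard_univ,
        Finset.card_image_of_injective _ ((Finset.mem_filter.1 hf).2).injective,
        Finset.card_univ, Fintype.card_fin]
    · intro f hf f' hf' h
      refine strictMono_eq_of_range_eq (Finset.mem_filter.1 hf).2 (Finset.mem_filter.1 hf').2 ?_
      rw [← Set.image_univ, ← Set.image_univ, ← Finset.coe_univ, ← Finset.coe_image,
        ← Finset.coe_image, h]
    · intro I hI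
      have hcard : I.card = q := Finset.mem_powersetCard_univ.1 hI
      refine ⟨⇑(I.orderEmbOfFin hcard), Finset.mem_filter.2
        ⟨Finset.mem_univ _, (I.orderEmbOfFin hcard).strictMono⟩, ?_⟩
      apply Finset.coe_injective
      rw [Finset.coe_image, Finset.coe_univ, Set.image_univ, Finset.range_orderEmbOfFin]
  rw [this, Finset.card_powersetCard, Finset.card_univ, Fintype.card_fin]

private theorem sum_minors {R : Type*} [CommRing R] {p q n : ℕ}
    [DecidablePred (fun f : Fin q → Fin n => StrictMono f)]
    (A : Matrix (Fin p) (Fin n) R) (B : Matrix (Fin n) (Fin p) R) (hAB : A * B = 1) :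
    ∑ f ∈ Finset.univ.filter (fun f : Fin q → Fin n => StrictMono f),
      ((B * A).submatrix f f).det = (p.choose q : R) := by
  classical
  have step : ∀ f : Fin q → Fin n, ((B * A).submatrix f f).det
      = ∑ g ∈ Finset.univ.filter (fun g : Fin q → Fin p => StrictMono g),
          ((B.submatrix f g).det * (A.submatrix g f).det) := by
    intro f
    rw [Matrix.submatrix_mul B A f id f Function.bijective_id, cauchy_binet]
    simp [Matrix.submatrix_submatrix]
  simp_rw [step]
  rw [Finset.sum_comm]
  have inner_eq : ∀ g ∈ Finset.univ.filter (fun g : Fin q → Fin p => StrictMono g),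
      (∑ f ∈ Finset.univ.filter (fun f : Fin q → Fin n => StrictMono f),
        (B.submatrix f g).det * (A.submatrix g f).det) = 1 := by
    intro g hg
    have hg' : StrictMono g := (Finset.mem_filter.1 hg).2
    have : ∀ f : Fin q → Fin n, (B.submatrix f g).det * (A.submatrix g f).det
        = ((A.submatrix g id).submatrix id f).det
          * ((B.submatrix id g).submatrix f id).det := by
      intro f
      rw [mul_comm]
      simp [Matrix.submatrix_submatrix]
    simp_rw [this]
    rw [← cauchy_binet (A.submatrix g id) (B.submatrix id g),
      ← Matrix.submatrix_mul A B g id g Function.bijective_id, hAB,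
      Matrix.submatrix_one g hg'.injective, Matrix.det_one]
  rw [Finset.sum_congr rfl inner_eq, Finset.sum_const, nsmul_eq_mul, mul_one, card_filter_strictMono]

end CB



variable {𝕜 X : Type*} [RCLike 𝕜] [NormedAddCommGroup X] [InnerProductSpace 𝕜 X]
  [FiniteDimensional 𝕜 X]

/-- Let `e : Fin n → X` be an orthonormal basis of `X`, `V` a subspace of
dimension `p`, `P` the orthogonal projection onto `V`, and `1 ≤ q < p`.  Summing over all
`q`-element subsets `I` of `Fin n`:
`∑_I det ((⟪P (e i), P (e j)⟫)_{i,j ∈ I}) = C(p, q)`.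
Equivalently, with `W_I = span {e i : i ∈ I}`, `∑_I cos² Θ_{W_I,V} = C(p, q)`. -/
theorem sum_sq_cos_grassmann_coordinate_subspaces_lower_dim {n p q : ℕ} (e : Fin n → X)
    (he : Orthonormal 𝕜 e) (heX : Submodule.span 𝕜 (Set.range e) = ⊤)
    (V : Submodule 𝕜 X) (hV : Module.finrank 𝕜 V = p)
    (hq : 1 ≤ q) (hqp : q < p) :
    ∑ I ∈ Finset.powersetCard q (Finset.univ : Finset (Fin n)),
        (Matrix.of fun i j : ↥I =>
          (inner 𝕜 ((Submodule.orthogonalProjection V (e ↑i) : X))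
                 ((Submodule.orthogonalProjection V (e ↑j) : X)) : 𝕜)).det =
      (p.choose q : 𝕜) := by
  classical
  let E : OrthonormalBasis (Fin n) 𝕜 X := OrthonormalBasis.mk he (ge_of_eq heX)
  have hE : ∀ i, E i = e i := fun i => by simp [E, OrthonormalBasis.coe_mk]
  let b : OrthonormalBasis (Fin p) 𝕜 V := (stdOrthonormalBasis 𝕜 V).reindex (finCongr hV)
  let A : Matrix (Fin p) (Fin n) 𝕜 := Matrix.of fun k i => (inner 𝕜 ((b k : X)) (e i) : 𝕜)
  have hAB : A * Aᴴ = 1 := by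
    ext k l
    simp only [Matrix.mul_apply, Matrix.conjTranspose_apply, Matrix.of_apply, A,
      Matrix.one_apply]
    calc ∑ i, (inner 𝕜 ((b k : X)) (e i) : 𝕜) * star (inner 𝕜 ((b l : X)) (e i) : 𝕜)
        = ∑ i, (inner 𝕜 ((b k : X)) (E i) : 𝕜) * inner 𝕜 (E i) ((b l : X)) := by
          refine Finset.sum_congr rfl fun i _ => ?_
          rw [hE, RCLike.star_def, inner_conj_symm]
      _ = inner 𝕜 ((b k : X)) ((b l : X)) := E.sum_inner_mul_inner _ _
      _ = if k = l then 1 else 0 := by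
          rw [← Submodule.coe_inner]
          exact orthonormal_iff_ite.1 b.orthonormal k l
  have hG : ∀ i j : Fin n,
      (inner 𝕜 ((Submodule.orthogonalProjection V (e i) : X)) ((Submodule.orthogonalProjection V (e j) : X)) : 𝕜)
        = (Aᴴ * A) i j := by
    intro i j
    rw [← Submodule.coe_inner,
      ← b.sum_inner_mul_inner (Submodule.orthogonalProjection V (e i)) (Submodule.orthogonalProjection V (e j))]
    simp only [Matrix.mul_apply, Matrix.conjTranspose_apply, Matrix.of_apply, A]
    refine Finset.sum_congr rfl fun k _ => ?_
    rw [Submodule.inner_orthogonalProjectionOnto_eq_of_mem_left, RCLike.star_def,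
      ← Submodule.inner_orthogonalProjectionOnto_eq_of_mem_left (K := V) (b k) (e i), inner_conj_symm]
  have hsum : ∑ I ∈ Finset.powersetCard q (Finset.univ : Finset (Fin n)),
        (Matrix.of fun i j : ↥I =>
          (inner 𝕜 ((Submodule.orthogonalProjection V (e ↑i) : X))
                 ((Submodule.orthogonalProjection V (e ↑j) : X)) : 𝕜)).det
      = ∑ f ∈ Finset.univ.filter (fun f : Fin q → Fin n => StrictMono f),
          ((Aᴴ * A).submatrix f f).det := by
    refine Finset.sum_bij
      (fun I hI => ⇑(I.orderEmbOfFin (Finset.mem_powersetCard_univ.1 hI))) ?_ ?_ ?_ ?_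
    · intro I hI
      exact Finset.mem_filter.2 ⟨Finset.mem_univ _, (I.orderEmbOfFin _).strictMono⟩
    · intro I hI I' hI' h
      apply Finset.coe_injective
      rw [← Finset.range_orderEmbOfFin I (Finset.mem_powersetCard_univ.1 hI),
        ← Finset.range_orderEmbOfFin I' (Finset.mem_powersetCard_univ.1 hI'), h]
    · intro f hf
      have hsm : StrictMono f := (Finset.mem_filter.1 hf).2
      have hcard : (Finset.image f Finset.univ).card = q := by
        rw [Finset.card_image_of_injective _ hsm.injective, Finset.card_univ, Fintype.card_fin]
      exact ⟨Finset.image f Finset.univ, Finset.mem_powersetCard_univ.2 hcard,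
        (Finset.orderEmbOfFin_unique hcard
          (fun x => Finset.mem_image_of_mem f (Finset.mem_univ x)) hsm).symm⟩
    · intro I hI
      have hcard : I.card = q := Finset.mem_powersetCard_univ.1 hI
      have heq : ((Aᴴ * A).submatrix ⇑(I.orderEmbOfFin hcard) ⇑(I.orderEmbOfFin hcard))
          = (Matrix.of fun i j : ↥I =>
              (inner 𝕜 ((Submodule.orthogonalProjection V (e ↑i) : X))
                     ((Submodule.orthogonalProjection V (e ↑j) : X)) : 𝕜)).submatrix
            (I.orderIsoOfFin hcard).toEquiv (I.orderIsoOfFin hcard).toEquiv := by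
        ext a c
        simp only [Matrix.submatrix_apply, Matrix.of_apply, RelIso.coe_fn_toEquiv]
        rw [← hG, Finset.coe_orderIsoOfFin_apply, Finset.coe_orderIsoOfFin_apply]
      rw [← Matrix.det_submatrix_equiv_self (I.orderIsoOfFin hcard).toEquiv, ← heq]
  rw [hsum]
  exact sum_minors A Aᴴ hAB
end

section
/- Let e : Fin n → X be an orthonormal basis of X and let v, w : Fin p → X be arbitrary families of vectors. Then det( (⟪v i, w j⟫)_{i,j} ) = ∑_{I ⊆ Fin n, |I| = p} conj( det( (⟪e k, v i⟫)_{k ∈ I, i ∈ Fin p} ) ) · det( (⟪e k, w j⟫)_{k ∈ I, j ∈ Fin p} ), where for each p-element subset I the rows are indexed by the increasing enumeration of I (the summand is independent of the chosen ordering of I). For unit blades this expresses the oriented Grassmann angle identity cos𝚯_{V,W} = ∑_I cos𝚯_{V,X_I} · cos𝚯_{W,X_I} over the coordinate p-subspaces X_I. -/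
open Finset Equiv Matrix

section CB
variable {R : Type*} [CommRing R] {n p : ℕ}

private abbrev enum (I : {x // x ∈ Finset.powersetCard p (Finset.univ : Finset (Fin n))})
    (k : Fin p) : Fin n :=
  (I.1.orderIsoOfFin (Finset.mem_powersetCard_univ.mp I.2) k : Fin n)

private lemma enum_injective (I : {x // x ∈ Finset.powersetCard p (Finset.univ : Finset (Fin n))}) :
    Function.Injective (enum I) := fun a b h => by
  have := (I.1.orderIsoOfFin (Finset.mem_powersetCard_univ.mp I.2)).injective
    (Subtype.ext h)
  exact this

private lemma image_enum (I : {x // x ∈ Finset.powersetCard p (Finset.univ : Finset (Fin n))}) :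
    Finset.image (enum I) Finset.univ = I.1 := by
  apply Finset.eq_of_subset_of_card_le
  · intro x hx
    simp only [Finset.mem_image] at hx
    obtain ⟨k, _, rfl⟩ := hx
    exact (I.1.orderIsoOfFin (Finset.mem_powersetCard_univ.mp I.2) k).2
  · rw [Finset.card_image_of_injective _ (enum_injective I), Finset.card_univ,
      Fintype.card_fin, Finset.mem_powersetCard_univ.mp I.2]

theorem cauchy_binet_s8 (M N : Matrix (Fin n) (Fin p) R) :
    (Matrix.of fun i j : Fin p => ∑ k, M k i * N k j).det =
      ∑ I ∈ (Finset.powersetCard p (Finset.univ : Finset (Fin n))).attach,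
        (M.submatrix (enum I) id).det * (N.submatrix (enum I) id).det := by
  classical
  have key : ∀ f : Fin p → Fin n,
      (∑ σ : Perm (Fin p), ((Perm.sign σ : ℤ) : R) * ∏ i, M (f i) (σ i)) =
        (M.submatrix f id).det := by
    intro f
    rw [← Matrix.det_transpose, Matrix.det_apply']
    rfl
  have h1 : (Matrix.of fun i j : Fin p => ∑ k, M k i * N k j).det =
      ∑ f : Fin p → Fin n, (M.submatrix f id).det * ∏ i, N (f i) i := by
    rw [Matrix.det_apply']
    simp only [Matrix.of_apply, Finset.prod_univ_sum, Fintype.piFinset_univ, Finset.mul_sum]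
    rw [Finset.sum_comm]
    refine Finset.sum_congr rfl fun f _ => ?_
    rw [← key f, Finset.sum_mul]
    refine Finset.sum_congr rfl fun σ _ => ?_
    rw [Finset.prod_mul_distrib]
    ring
  rw [h1]
  have h2 : ∑ f : Fin p → Fin n, (M.submatrix f id).det * ∏ i, N (f i) i =
      ∑ f ∈ Finset.univ.filter (fun f : Fin p → Fin n => Function.Injective f),
        (M.submatrix f id).det * ∏ i, N (f i) i := by
    symm
    apply Finset.sum_subset (Finset.filter_subset _ _)
    intro f _ hf
    simp only [Finset.mem_filter, Finset.mem_univ, true_and] at hf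
    rw [Function.not_injective_iff] at hf
    obtain ⟨a, b, hab, hne⟩ := hf
    rw [Matrix.det_zero_of_row_eq hne (by ext j; simp [Matrix.submatrix, hab]), zero_mul]
  rw [h2]
  have h3 : ∑ f ∈ Finset.univ.filter (fun f : Fin p → Fin n => Function.Injective f),
        (M.submatrix f id).det * ∏ i, N (f i) i =
      ∑ a ∈ (Finset.powersetCard p (Finset.univ : Finset (Fin n))).attach ×ˢ
          (Finset.univ : Finset (Perm (Fin p))),
        (M.submatrix (fun i => enum a.1 (a.2 i)) id).det * ∏ i, N (enum a.1 (a.2 i)) i := by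
    refine (Finset.sum_bij (fun a _ => fun i => enum a.1 (a.2 i)) ?_ ?_ ?_ ?_).symm
    · intro a _
      simp only [Finset.mem_filter, Finset.mem_univ, true_and]
      exact (enum_injective a.1).comp a.2.injective
    · rintro ⟨I, σ⟩ _ ⟨I', σ'⟩ _ h
      have h' : ∀ i, enum I (σ i) = enum I' (σ' i) := fun i => congrFun h i
      have himg : I.1 = I'.1 := by
        rw [← image_enum I, ← image_enum I']
        have e1 : Finset.image (enum I) Finset.univ
            = Finset.image (fun i => enum I (σ i)) Finset.univ := by
          rw [show (fun i => enum I (σ i)) = (enum I) ∘ ⇑σ from rfl, ← Finset.image_image,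
            Finset.image_univ_equiv]
        have e2 : Finset.image (enum I') Finset.univ
            = Finset.image (fun i => enum I' (σ' i)) Finset.univ := by
          rw [show (fun i => enum I' (σ' i)) = (enum I') ∘ ⇑σ' from rfl, ← Finset.image_image,
            Finset.image_univ_equiv]
        rw [e1, e2]
        exact Finset.image_congr fun i _ => h' i
      obtain ⟨I, hI⟩ := I
      obtain ⟨I', hI'⟩ := I'
      simp only at himg
      subst himg
      suffices hσ : σ = σ' by rw [hσ]
      ext i
      have := h' i
      exact congrArg Fin.val (enum_injective ⟨I, hI⟩ (by exact this))
    · intro f hf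
      simp only [Finset.mem_filter, Finset.mem_univ, true_and] at hf
      have hIcard : (Finset.image f Finset.univ).card = p := by
        rw [Finset.card_image_of_injective _ hf, Finset.card_univ, Fintype.card_fin]
      have hI : Finset.image f Finset.univ ∈
          Finset.powersetCard p (Finset.univ : Finset (Fin n)) :=
        Finset.mem_powersetCard_univ.mpr hIcard
      set I : {x // x ∈ Finset.powersetCard p (Finset.univ : Finset (Fin n))} := ⟨_, hI⟩
      have hmem : ∀ i, f i ∈ Finset.image f Finset.univ := fun i =>
        Finset.mem_image_of_mem f (Finset.mem_univ i)
      set σ₀ : Fin p → Fin p := fun i =>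
        ((Finset.image f Finset.univ).orderIsoOfFin hIcard).symm ⟨f i, hmem i⟩
      have hσ₀ : Function.Injective σ₀ := by
        intro a b hab
        have h2 := congrArg
          (fun x => (((Finset.image f Finset.univ).orderIsoOfFin hIcard) x : Fin n)) hab
        simp only [σ₀, OrderIso.apply_symm_apply] at h2
        exact hf h2
      refine ⟨⟨I, Equiv.ofBijective σ₀ (Finite.injective_iff_bijective.mp hσ₀)⟩,
        Finset.mem_product.mpr ⟨Finset.mem_attach _ _, Finset.mem_univ _⟩, ?_⟩
      funext i
      show enum I (σ₀ i) = f i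
      simp only [σ₀, enum, I, OrderIso.apply_symm_apply]
    · intro a _
      rfl
  rw [h3, Finset.sum_product]
  refine Finset.sum_congr rfl fun I _ => ?_
  have keyN : (∑ σ : Perm (Fin p), ((Perm.sign σ : ℤ) : R) * ∏ i, N (enum I (σ i)) i) =
      (N.submatrix (enum I) id).det := by
    rw [Matrix.det_apply']
    rfl
  rw [← keyN, Finset.mul_sum]
  refine Finset.sum_congr rfl fun σ _ => ?_
  have : (M.submatrix (fun i => enum I (σ i)) id).det =
      ((Perm.sign σ : ℤ) : R) * (M.submatrix (enum I) id).det := by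
    have := Matrix.det_permute σ (M.submatrix (enum I) id)
    rw [← this]
    rfl
  rw [this]
  ring
end CB

variable {𝕜 X : Type*} [RCLike 𝕜] [NormedAddCommGroup X] [InnerProductSpace 𝕜 X]
  [FiniteDimensional 𝕜 X]

/-- Let `e : Fin n → X` be an orthonormal basis of `X` and `v, w : Fin p → X`
arbitrary families.  Then
`det (⟪v i, w j⟫) = ∑_{I, |I| = p} conj (det (⟪e k, v i⟫)_{k ∈ I, i}) * det (⟪e k, w j⟫)_{k ∈ I, j}`,
rows indexed by the increasing enumeration of each `p`-element subset `I` of `Fin n`.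
For unit blades this is the oriented identity `cos 𝚯_{V,W} = ∑_I cos 𝚯_{V,X_I} cos 𝚯_{W,X_I}`. -/
theorem oriented_grassmann_angle_coordinate_expansion {n p : ℕ} (e : Fin n → X)
    (he : Orthonormal 𝕜 e) (heX : Submodule.span 𝕜 (Set.range e) = ⊤)
    (v w : Fin p → X) :
    (Matrix.of fun i j : Fin p => (inner 𝕜 (v i) (w j) : 𝕜)).det =
      ∑ I ∈ (Finset.powersetCard p (Finset.univ : Finset (Fin n))).attach,
        (starRingEnd 𝕜) ((Matrix.of fun k i : Fin p =>
            (inner 𝕜 (e ((I.1.orderIsoOfFin (Finset.mem_powersetCard_univ.mp I.2) k : Fin n)))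
              (v i) : 𝕜)).det) *
          (Matrix.of fun k j : Fin p =>
            (inner 𝕜 (e ((I.1.orderIsoOfFin (Finset.mem_powersetCard_univ.mp I.2) k : Fin n)))
              (w j) : 𝕜)).det := by
  classical
  let b : OrthonormalBasis (Fin n) 𝕜 X := OrthonormalBasis.mk he (by rw [heX])
  have hb : ∀ k, b k = e k := fun k => by simp [b]
  set M : Matrix (Fin n) (Fin p) 𝕜 := Matrix.of fun k i => (inner 𝕜 (e k) (v i) : 𝕜) with hM
  set N : Matrix (Fin n) (Fin p) 𝕜 := Matrix.of fun k j => (inner 𝕜 (e k) (w j) : 𝕜) with hN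
  have hentry : (Matrix.of fun i j : Fin p => (inner 𝕜 (v i) (w j) : 𝕜)) =
      Matrix.of fun i j : Fin p => ∑ k, (M.map (starRingEnd 𝕜)) k i * N k j := by
    ext i j
    simp only [Matrix.of_apply, Matrix.map_apply, hM, hN]
    rw [← b.sum_inner_mul_inner (v i) (w j)]
    refine Finset.sum_congr rfl fun k _ => ?_
    rw [hb k, ← inner_conj_symm]
  rw [hentry, cauchy_binet_s8]
  refine Finset.sum_congr rfl fun I _ => ?_
  congr 1
  rw [RingHom.map_det]
  rfl
end

section
/- Let V and W be nonzero subspaces of X and let U ⊆ V be a subspace with U ⊥ W (every vector of U is orthogonal to every vector of W). Then U is a principal subspace of V with respect to W: there exist associated principal bases e : Fin p → X of V and f : Fin q → X of W, and a subset S ⊆ Fin p, such that U = span{e i : i ∈ S}. -/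
variable {𝕜 X : Type*} [RCLike 𝕜] [NormedAddCommGroup X] [InnerProductSpace 𝕜 X]
  [FiniteDimensional 𝕜 X]

/-- Orthonormal families `e` spanning `V` and `f` spanning `W` are *associated principal bases*
of `V` and `W`: `⟪e i, f j⟫ = 0` whenever `i ≠ j`, and each `⟪e i, f i⟫` is a nonnegative real. -/
def IsPrincipalPair {𝕜 X : Type*} [RCLike 𝕜] [NormedAddCommGroup X] [InnerProductSpace 𝕜 X]
    {p q : ℕ} (V W : Submodule 𝕜 X) (e : Fin p → X) (f : Fin q → X) : Prop :=
  Orthonormal 𝕜 e ∧ Submodule.span 𝕜 (Set.range e) = V ∧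
  Orthonormal 𝕜 f ∧ Submodule.span 𝕜 (Set.range f) = W ∧
  (∀ (i : Fin p) (j : Fin q), (i : ℕ) ≠ (j : ℕ) → (inner 𝕜 (e i) (f j) : 𝕜) = 0) ∧
  (∀ (i : Fin p) (j : Fin q), (i : ℕ) = (j : ℕ) →
    ∃ c : ℝ, 0 ≤ c ∧ (inner 𝕜 (e i) (f j) : 𝕜) = (c : 𝕜))

section Aux

variable {E : Type*} [NormedAddCommGroup E] [InnerProductSpace 𝕜 E]

lemma aux_range_fin_append {α : Type*} {n m : ℕ} (v : Fin n → α) (w : Fin m → α) :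
    Set.range (Fin.append v w) = Set.range v ∪ Set.range w := by
  ext x
  constructor
  · rintro ⟨i, rfl⟩
    induction i using Fin.addCases with
    | left i => exact Or.inl ⟨i, (Fin.append_left v w i).symm⟩
    | right i => exact Or.inr ⟨i, (Fin.append_right v w i).symm⟩
  · rintro (⟨i, rfl⟩ | ⟨i, rfl⟩)
    · exact ⟨Fin.castAdd m i, Fin.append_left v w i⟩
    · exact ⟨Fin.natAdd n i, Fin.append_right v w i⟩

lemma aux_orthonormal_append {n m : ℕ} {v : Fin n → E} {w : Fin m → E}
    (hv : Orthonormal 𝕜 v) (hw : Orthonormal 𝕜 w)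
    (hvw : ∀ i j, (inner 𝕜 (v i) (w j) : 𝕜) = 0) :
    Orthonormal 𝕜 (Fin.append v w) := by
  rw [orthonormal_iff_ite] at hv hw ⊢
  intro i j
  induction i using Fin.addCases with
  | left i =>
    induction j using Fin.addCases with
    | left j =>
      rw [Fin.append_left, Fin.append_left]
      rw [hv i j]
      congr 1
      simp [Fin.ext_iff]
    | right j =>
      rw [Fin.append_left, Fin.append_right, hvw i j]
      have : ¬ (Fin.castAdd m i = Fin.natAdd n j) := by
        simp only [Fin.ext_iff, Fin.coe_castAdd, Fin.coe_natAdd]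
        omega
      simp [this]
  | right i =>
    induction j using Fin.addCases with
    | left j =>
      rw [Fin.append_right, Fin.append_left]
      have h0 : (inner 𝕜 (w i) (v j) : 𝕜) = 0 := by
        rw [← inner_conj_symm, hvw j i, map_zero]
      rw [h0]
      have : ¬ (Fin.natAdd n i = Fin.castAdd m j) := by
        simp only [Fin.ext_iff, Fin.coe_castAdd, Fin.coe_natAdd]
        omega
      simp [this]
    | right j =>
      rw [Fin.append_right, Fin.append_right, hw i j]
      congr 1
      simp [Fin.ext_iff]

lemma aux_span_coe_orthonormal {p : Submodule 𝕜 E} {n : ℕ}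
    (v : OrthonormalBasis (Fin n) 𝕜 ↥p) :
    Submodule.span 𝕜 (Set.range fun i => ((v i : E))) = p := by
  have : (Set.range fun i => ((v i : E))) = p.subtype '' Set.range v := by
    rw [← Set.range_comp]; rfl
  rw [this, Submodule.span_image, ← OrthonormalBasis.coe_toBasis v,
    Module.Basis.span_eq, Submodule.map_subtype_top]

end Aux

set_option maxHeartbeats 2000000 in
/-- If `V, W` are nonzero subspaces and `U ⊆ V` satisfies `U ⊥ W`, then `U` is
a principal subspace of `V` with respect to `W`: it is spanned by a subset of a principal basis
of `V` associated to a principal basis of `W`. -/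
theorem orthogonal_subspace_is_principal (V W : Submodule 𝕜 X) (hV : V ≠ ⊥) (hW : W ≠ ⊥)
    (U : Submodule 𝕜 X) (hUV : U ≤ V)
    (hUW : ∀ u ∈ U, ∀ w ∈ W, (inner 𝕜 u w : 𝕜) = 0) :
    ∃ (p q : ℕ) (e : Fin p → X) (f : Fin q → X) (S : Set (Fin p)),
      IsPrincipalPair V W e f ∧ U = Submodule.span 𝕜 (e '' S) := by
  classical
  -- the "projection onto W" operator, viewed from V to W
  set T : ↥V →ₗ[𝕜] ↥W :=
    ((W.orthogonalProjectionOnto : X →L[𝕜] ↥W).toLinearMap).comp V.subtype with hTdef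
  have hTinner : ∀ (v : ↥V) (w : ↥W), (inner 𝕜 (v : X) (w : X) : 𝕜) = inner 𝕜 (T v) w := by
    intro v w
    have h0 : (inner 𝕜 ((v : X) - (W.orthogonalProjectionOnto (v : X) : X)) (w : X) : 𝕜) = 0 :=
      W.starProjection_inner_eq_zero (v : X) (w : X) w.2
    rw [inner_sub_left, sub_eq_zero] at h0
    rw [h0]
    rfl
  set A : ↥V →ₗ[𝕜] ↥V := (LinearMap.adjoint T).comp T with hAdef
  have hTT : ∀ x y : ↥V, (inner 𝕜 (T x) (T y) : 𝕜) = inner 𝕜 x (A y) := by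
    intro x y
    exact (LinearMap.adjoint_inner_right T x (T y)).symm
  have hA : A.IsSymmetric := by
    intro x y
    exact (LinearMap.adjoint_inner_left T y (T x)).trans
      (LinearMap.adjoint_inner_right T x (T y)).symm
  set K : Submodule 𝕜 ↥V := LinearMap.ker T with hKdef
  have hAK : ∀ x ∈ K, A x = 0 := by
    intro x hx
    rw [hAdef, LinearMap.comp_apply, LinearMap.mem_ker.mp hx, map_zero]
  have hinv : ∀ v ∈ Kᗮ, A v ∈ Kᗮ := by
    intro v hv
    rw [Submodule.mem_orthogonal]
    intro k hk
    rw [← hA k v, hAK k hk, inner_zero_left]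
  set A' : ↥(Kᗮ) →ₗ[𝕜] ↥(Kᗮ) := A.restrict hinv with hA'def
  have hA'A : ∀ x : ↥(Kᗮ), ((A' x : ↥V)) = A (x : ↥V) := fun x => rfl
  have hA' : A'.IsSymmetric := by
    intro x y
    have := hA (x : ↥V) (y : ↥V)
    simpa [Submodule.coe_inner, hA'A] using this
  -- eigenbasis of A' on Kᗮ
  set r : ℕ := Module.finrank 𝕜 ↥(Kᗮ) with hrdef
  set b0 : OrthonormalBasis (Fin r) 𝕜 ↥(Kᗮ) := hA'.eigenvectorBasis rfl with hb0def
  set μ : Fin r → ℝ := hA'.eigenvalues rfl with hμdef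
  have hb0eig : ∀ i, A' (b0 i) = (μ i : 𝕜) • b0 i := fun i =>
    hA'.apply_eigenvectorBasis rfl i
  set bV : Fin r → ↥V := fun i => ((b0 i : ↥V)) with hbVdef
  have hAbV : ∀ i, A (bV i) = (μ i : 𝕜) • bV i := by
    intro i
    rw [hbVdef]
    simp only
    rw [← hA'A, hb0eig i, Submodule.coe_smul]
  set g : Fin r → ↥W := fun i => T (bV i) with hgdef
  have hginner : ∀ i j, (inner 𝕜 (g i) (g j) : 𝕜) =
      (μ j : 𝕜) * inner 𝕜 (b0 i) (b0 j) := by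
    intro i j
    rw [hgdef]
    simp only
    rw [hTT, hAbV, inner_smul_right]
    congr 1
  have hgoff : ∀ i j, i ≠ j → (inner 𝕜 (g i) (g j) : 𝕜) = 0 := by
    intro i j hij
    rw [hginner, b0.orthonormal.2 hij, mul_zero]
  have hgne : ∀ i, g i ≠ 0 := by
    intro i h
    have hbK : bV i ∈ K := LinearMap.mem_ker.mpr h
    have hbK' : bV i ∈ Kᗮ := (b0 i).2
    have : bV i = 0 := by
      have := Submodule.inner_right_of_mem_orthogonal hbK hbK'
      rwa [inner_self_eq_zero] at this
    have : b0 i = 0 := Subtype.ext this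
    exact b0.orthonormal.ne_zero i this
  have hgself : ∀ i, (inner 𝕜 (g i) (g i) : 𝕜) = (‖g i‖ : 𝕜) ^ 2 :=
    fun i => inner_self_eq_norm_sq_to_K (g i)
  -- U inside V, contained in ker T
  set U' : Submodule 𝕜 ↥V := U.comap V.subtype with hU'def
  have hU'K : U' ≤ K := by
    intro u hu
    have huU : (u : X) ∈ U := hu
    have huW : (u : X) ∈ Wᗮ := by
      rw [Submodule.mem_orthogonal]
      intro w hw
      rw [← inner_conj_symm, hUW (u : X) huU w hw, map_zero]
    rw [hKdef, LinearMap.mem_ker, hTdef]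
    have h0 : W.orthogonalProjectionOnto (u : X) = 0 :=
      (Submodule.orthogonalProjectionOnto_eq_zero_iff (K := W)).mpr huW
    exact Subtype.ext_iff.mpr (congrArg Subtype.val h0)
  set k : ℕ := Module.finrank 𝕜 ↥U' with hkdef
  set c0 : OrthonormalBasis (Fin k) 𝕜 ↥U' := stdOrthonormalBasis 𝕜 ↥U' with hc0def
  set cV : Fin k → ↥V := fun i => ((c0 i : ↥V)) with hcVdef
  set D : Submodule 𝕜 ↥V := U'ᗮ ⊓ K with hDdef
  set m : ℕ := Module.finrank 𝕜 ↥D with hmdef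
  set d0 : OrthonormalBasis (Fin m) 𝕜 ↥D := stdOrthonormalBasis 𝕜 ↥D with hd0def
  set dV : Fin m → ↥V := fun i => ((d0 i : ↥V)) with hdVdef
  -- the V-side basis
  set eV : Fin (r + (k + m)) → ↥V := Fin.append bV (Fin.append cV dV) with heVdef
  have hbVmem : ∀ i, bV i ∈ Kᗮ := fun i => (b0 i).2
  have hcVmem : ∀ i, cV i ∈ K := fun i => hU'K (c0 i).2
  have hdVmem : ∀ i, dV i ∈ K := fun i => (Submodule.mem_inf.mp (d0 i).2).2
  have hcVU' : ∀ i, cV i ∈ U' := fun i => (c0 i).2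
  have hdVU'o : ∀ i, dV i ∈ U'ᗮ := fun i => (Submodule.mem_inf.mp (d0 i).2).1
  have horthbV : Orthonormal 𝕜 bV :=
    b0.orthonormal.comp_linearIsometry (Kᗮ).subtypeₗᵢ
  have horthcV : Orthonormal 𝕜 cV :=
    c0.orthonormal.comp_linearIsometry U'.subtypeₗᵢ
  have horthdV : Orthonormal 𝕜 dV :=
    d0.orthonormal.comp_linearIsometry D.subtypeₗᵢ
  have horthcd : Orthonormal 𝕜 (Fin.append cV dV) := by
    refine aux_orthonormal_append horthcV horthdV ?_
    intro i j
    exact Submodule.inner_right_of_mem_orthogonal (hcVU' i) (hdVU'o j)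
  have horth_eV : Orthonormal 𝕜 eV := by
    refine aux_orthonormal_append horthbV horthcd ?_
    intro i j
    induction j using Fin.addCases with
    | left j =>
      rw [Fin.append_left]
      exact Submodule.inner_right_of_mem_orthogonal (hcVmem j) (hbVmem i) |>.symm ▸
        (by rw [← inner_conj_symm,
          Submodule.inner_right_of_mem_orthogonal (hcVmem j) (hbVmem i), map_zero])
    | right j =>
      rw [Fin.append_right]
      rw [← inner_conj_symm,
        Submodule.inner_right_of_mem_orthogonal (hdVmem j) (hbVmem i), map_zero]
  -- spans on V side
  have hspan_bV : Submodule.span 𝕜 (Set.range bV) = Kᗮ := aux_span_coe_orthonormal b0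
  have hspan_cV : Submodule.span 𝕜 (Set.range cV) = U' := aux_span_coe_orthonormal c0
  have hspan_dV : Submodule.span 𝕜 (Set.range dV) = D := aux_span_coe_orthonormal d0
  have hKsplit : U' ⊔ D = K := Submodule.sup_orthogonal_inf_of_hasOrthogonalProjection hU'K
  have hspan_eV : Submodule.span 𝕜 (Set.range eV) = ⊤ := by
    rw [heVdef, aux_range_fin_append, aux_range_fin_append,
      Submodule.span_union, Submodule.span_union, hspan_bV, hspan_cV, hspan_dV,
      hKsplit, sup_comm, Submodule.sup_orthogonal_of_hasOrthogonalProjection]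
  -- the W side
  set G : Submodule 𝕜 ↥W := Submodule.span 𝕜 (Set.range g) with hGdef
  set f1 : Fin r → ↥W := fun i => ((‖g i‖ : 𝕜))⁻¹ • g i with hf1def
  set q2 : ℕ := Module.finrank 𝕜 ↥(Gᗮ) with hq2def
  set f20 : OrthonormalBasis (Fin q2) 𝕜 ↥(Gᗮ) := stdOrthonormalBasis 𝕜 ↥(Gᗮ) with hf20def
  set f2 : Fin q2 → ↥W := fun i => ((f20 i : ↥W)) with hf2def
  set fW : Fin (r + q2) → ↥W := Fin.append f1 f2 with hfWdef
  have hgnorm_ne : ∀ i, (‖g i‖ : 𝕜) ≠ 0 := by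
    intro i
    simp only [ne_eq, RCLike.ofReal_eq_zero, norm_eq_zero]
    exact hgne i
  have hf1inner : ∀ i j, (inner 𝕜 (f1 i) (f1 j) : 𝕜) =
      (‖g i‖ : 𝕜)⁻¹ * (‖g j‖ : 𝕜)⁻¹ * inner 𝕜 (g i) (g j) := by
    intro i j
    rw [hf1def]
    simp only
    rw [inner_smul_left, inner_smul_right]
    rw [map_inv₀, RCLike.conj_ofReal]
    ring
  have horthf1 : Orthonormal 𝕜 f1 := by
    rw [orthonormal_iff_ite]
    intro i j
    rw [hf1inner]
    by_cases h : i = j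
    · subst h
      rw [hgself, if_pos rfl, sq, mul_mul_mul_comm, inv_mul_cancel₀ (hgnorm_ne i),
        one_mul]
    · rw [hgoff i j h, if_neg h, mul_zero]
  have hf1G : ∀ i, f1 i ∈ G := fun i =>
    Submodule.smul_mem _ _ (Submodule.subset_span ⟨i, rfl⟩)
  have hf2Go : ∀ i, f2 i ∈ Gᗮ := fun i => (f20 i).2
  have horthf2 : Orthonormal 𝕜 f2 :=
    f20.orthonormal.comp_linearIsometry (Gᗮ).subtypeₗᵢ
  have horth_fW : Orthonormal 𝕜 fW := by
    refine aux_orthonormal_append horthf1 horthf2 ?_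
    intro i j
    exact Submodule.inner_right_of_mem_orthogonal (hf1G i) (hf2Go j)
  have hspan_f1 : Submodule.span 𝕜 (Set.range f1) = G := by
    apply le_antisymm
    · rw [Submodule.span_le]
      rintro x ⟨i, rfl⟩
      exact hf1G i
    · rw [hGdef, Submodule.span_le]
      rintro x ⟨i, rfl⟩
      have : g i = (‖g i‖ : 𝕜) • f1 i := by
        rw [hf1def]
        simp only
        rw [smul_smul, mul_inv_cancel₀ (hgnorm_ne i), one_smul]
      rw [this]
      exact Submodule.smul_mem _ _ (Submodule.subset_span ⟨i, rfl⟩)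
  have hspan_fW : Submodule.span 𝕜 (Set.range fW) = ⊤ := by
    rw [hfWdef, aux_range_fin_append, Submodule.span_union, hspan_f1,
      aux_span_coe_orthonormal f20, Submodule.sup_orthogonal_of_hasOrthogonalProjection]
  -- now pass to X
  refine ⟨r + (k + m), r + q2, fun i => ((eV i : X)), fun j => ((fW j : X)),
    {i : Fin (r + (k + m)) | ∃ j : Fin k, i = Fin.natAdd r (Fin.castAdd m j)}, ?_, ?_⟩
  · refine ⟨?_, ?_, ?_, ?_, ?_, ?_⟩
    · exact horth_eV.comp_linearIsometry V.subtypeₗᵢ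
    · have : (Set.range fun i => ((eV i : X))) = V.subtype '' Set.range eV := by
        rw [← Set.range_comp]; rfl
      rw [this, Submodule.span_image, hspan_eV, Submodule.map_subtype_top]
    · exact horth_fW.comp_linearIsometry W.subtypeₗᵢ
    · have : (Set.range fun j => ((fW j : X))) = W.subtype '' Set.range fW := by
        rw [← Set.range_comp]; rfl
      rw [this, Submodule.span_image, hspan_fW, Submodule.map_subtype_top]
    · -- off-diagonal
      intro i j hij
      rw [hTinner (eV i) (fW j)]
      induction i using Fin.addCases with
      | left i =>
        have hTei : T (eV (Fin.castAdd (k + m) i)) = g i := by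
          rw [heVdef, Fin.append_left]
        rw [hTei]
        induction j using Fin.addCases with
        | left j =>
          have hfj : fW (Fin.castAdd q2 j) = f1 j := by
            rw [hfWdef]
            exact Fin.append_left f1 f2 j
          rw [hfj, hf1def]
          simp only
          rw [inner_smul_right, hgoff i j, mul_zero]
          intro h
          exact hij (by rw [h]; rfl)
        | right j =>
          have hfj : fW (Fin.natAdd r j) = f2 j := by
            rw [hfWdef]
            exact Fin.append_right f1 f2 j
          rw [hfj]
          have hgiG : g i ∈ G := by
            rw [hGdef]; exact Submodule.subset_span ⟨i, rfl⟩
          exact Submodule.inner_right_of_mem_orthogonal hgiG (hf2Go j)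
      | right i =>
        have hTei : T (eV (Fin.natAdd r i)) = 0 := by
          rw [heVdef]
          simp only [Fin.append_right]
          induction i using Fin.addCases with
          | left i =>
            rw [Fin.append_left]
            exact LinearMap.mem_ker.mp (hcVmem i)
          | right i =>
            rw [Fin.append_right]
            exact LinearMap.mem_ker.mp (hdVmem i)
        rw [hTei, inner_zero_left]
    · -- diagonal
      intro i j hij
      rw [hTinner (eV i) (fW j)]
      induction i using Fin.addCases with
      | left i =>
        have hTei : T (eV (Fin.castAdd (k + m) i)) = g i := by
          rw [heVdef, Fin.append_left]
        rw [hTei]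
        induction j using Fin.addCases with
        | left j =>
          have hijr : i = j := by
            apply Fin.ext
            simpa using hij
          subst hijr
          have hfj : fW (Fin.castAdd q2 i) = f1 i := by
            rw [hfWdef]
            exact Fin.append_left f1 f2 i
          rw [hfj]
          refine ⟨‖g i‖, norm_nonneg _, ?_⟩
          rw [hf1def]
          simp only
          rw [inner_smul_right, hgself, sq, ← mul_assoc,
            inv_mul_cancel₀ (hgnorm_ne i), one_mul]
        | right j =>
          exfalso
          simp only [Fin.coe_castAdd, Fin.coe_natAdd] at hij
          omega
      | right i =>
        have hTei : T (eV (Fin.natAdd r i)) = 0 := by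
          rw [heVdef]
          simp only [Fin.append_right]
          induction i using Fin.addCases with
          | left i =>
            rw [Fin.append_left]
            exact LinearMap.mem_ker.mp (hcVmem i)
          | right i =>
            rw [Fin.append_right]
            exact LinearMap.mem_ker.mp (hdVmem i)
        exact ⟨0, le_refl 0, by rw [hTei, inner_zero_left]; simp⟩
  · -- U = span of the selected part
    have himg : ((fun i => ((eV i : X))) ''
        {i : Fin (r + (k + m)) | ∃ j : Fin k, i = Fin.natAdd r (Fin.castAdd m j)}) =
        Set.range fun j : Fin k => ((cV j : X)) := by
      ext x
      constructor
      · rintro ⟨i, ⟨j, rfl⟩, rfl⟩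
        refine ⟨j, ?_⟩
        rw [heVdef]
        simp only
        rw [Fin.append_right, Fin.append_left]
      · rintro ⟨j, rfl⟩
        refine ⟨Fin.natAdd r (Fin.castAdd m j), ⟨j, rfl⟩, ?_⟩
        rw [heVdef]
        simp only
        rw [Fin.append_right, Fin.append_left]
    rw [himg]
    have : (Set.range fun j : Fin k => ((cV j : X))) = V.subtype '' Set.range cV := by
      rw [← Set.range_comp]; rfl
    rw [this, Submodule.span_image, hspan_cV, hU'def, Submodule.map_comap_subtype,
      inf_eq_right.mpr hUV]
end

section
/- Let e : Fin p → X and f : Fin q → X be associated principal bases of subspaces V and W, let S ⊆ Fin p, let U = span{e i : i ∈ S}, and let P be the orthogonal projection of X onto W. Then P(U) = span{ f i : i ∈ S, i < q, and ⟪e i, f i⟫ ≠ 0 }. In particular, the orthogonal projection onto W of a principal subspace of V is spanned by a subset of the principal basis f of W. -/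
variable {𝕜 X : Type*} [RCLike 𝕜] [NormedAddCommGroup X] [InnerProductSpace 𝕜 X]
  [FiniteDimensional 𝕜 X]

lemma aux_mem_orthogonal_span {s : Set X} {x : X}
    (h : ∀ u ∈ s, (inner 𝕜 u x : 𝕜) = 0) : x ∈ (Submodule.span 𝕜 s)ᗮ := by
  rw [Submodule.mem_orthogonal]
  intro u hu
  induction hu using Submodule.span_induction with
  | mem u hu => exact h u hu
  | zero => simp
  | add u v _ _ hu hv => simp [inner_add_left, hu, hv]
  | smul c u _ hu => simp [inner_smul_left, hu]

/-- For associated principal bases `e, f` of `V, W`, a subset `S ⊆ Fin p`,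
`U = span {e i : i ∈ S}`, and `P` the orthogonal projection onto `W`:
`P(U) = span {f i : i ∈ S, i < q, ⟪e i, f i⟫ ≠ 0}`. -/
theorem image_of_principal_subspace {p q : ℕ} (V W : Submodule 𝕜 X)
    (e : Fin p → X) (f : Fin q → X) (hef : IsPrincipalPair V W e f)
    (S : Set (Fin p)) (U : Submodule 𝕜 X) (hU : U = Submodule.span 𝕜 (e '' S)) :
    Submodule.map (W.subtype ∘ₗ (W.orthogonalProjection).toLinearMap) U =
      Submodule.span 𝕜
        {x | ∃ (i : Fin p) (h : (i : ℕ) < q),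
          i ∈ S ∧ (inner 𝕜 (e i) (f ⟨(i : ℕ), h⟩) : 𝕜) ≠ 0 ∧ x = f ⟨(i : ℕ), h⟩} := by
  obtain ⟨he, hVe, hf, hWf, hzero, hnn⟩ := hef
  have hfW : ∀ j : Fin q, f j ∈ W := fun j => by
    rw [← hWf]; exact Submodule.subset_span ⟨j, rfl⟩
  -- compute the projection of each e i
  have hproj : ∀ i : Fin p,
      ((W.orthogonalProjection (e i) : W) : X) =
        if h : (i : ℕ) < q then (inner 𝕜 (e i) (f ⟨(i : ℕ), h⟩) : 𝕜) • f ⟨(i : ℕ), h⟩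
        else 0 := by
    intro i
    split_ifs with h
    · apply Submodule.eq_starProjection_of_mem_orthogonal
      · exact Submodule.smul_mem _ _ (hfW _)
      · rw [← hWf]
        apply aux_mem_orthogonal_span
        rintro u ⟨j, rfl⟩
        rw [inner_sub_right, inner_smul_right]
        obtain ⟨c, hc0, hc⟩ := hnn i ⟨(i : ℕ), h⟩ rfl
        by_cases hij : (i : ℕ) = (j : ℕ)
        · have hji : j = ⟨(i : ℕ), h⟩ := Fin.ext hij.symm
          have h1 : (inner 𝕜 (f ⟨(i : ℕ), h⟩) (e i) : 𝕜) = (c : 𝕜) := by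
            rw [← inner_conj_symm, hc, RCLike.conj_ofReal]
          rw [hji]
          simp [h1, hc, orthonormal_iff_ite.mp hf, RCLike.conj_ofReal, hf.1 _]
        · have h1 : (inner 𝕜 (f j) (e i) : 𝕜) = 0 := by
            rw [← inner_conj_symm, hzero i j (fun hh => hij hh)]
            simp
          have h2 : (inner 𝕜 (f j) (f ⟨(i : ℕ), h⟩) : 𝕜) = 0 := by
            rw [orthonormal_iff_ite.mp hf]
            simp only [ite_eq_right_iff]
            intro hjj
            exact absurd (congrArg Fin.val hjj).symm hij
          simp [h1, h2]
    · apply Submodule.eq_starProjection_of_mem_orthogonal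
      · exact Submodule.zero_mem _
      · rw [← hWf, sub_zero]
        apply aux_mem_orthogonal_span
        rintro u ⟨j, rfl⟩
        rw [← inner_conj_symm, hzero i j (by omega)]
        simp
  subst hU
  rw [Submodule.map_span, ← Set.image_comp]
  apply le_antisymm
  · rw [Submodule.span_le]
    rintro x ⟨i, hiS, rfl⟩
    simp only [Function.comp_apply, LinearMap.coe_comp, ContinuousLinearMap.coe_coe,
      Submodule.coe_subtype]
    rw [SetLike.mem_coe, hproj i]
    split_ifs with h
    · by_cases hne : (inner 𝕜 (e i) (f ⟨(i : ℕ), h⟩) : 𝕜) = 0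
      · simp [hne]
      · exact Submodule.smul_mem _ _
          (Submodule.subset_span ⟨i, h, hiS, hne, rfl⟩)
    · exact Submodule.zero_mem _
  · rw [Submodule.span_le]
    rintro x ⟨i, h, hiS, hne, rfl⟩
    have hmem : ((W.subtype ∘ₗ (W.orthogonalProjection).toLinearMap) ∘ e) i ∈
        Submodule.span 𝕜 (((W.subtype ∘ₗ (W.orthogonalProjection).toLinearMap) ∘ e) '' S) :=
      Submodule.subset_span ⟨i, hiS, rfl⟩
    have heq : ((W.subtype ∘ₗ (W.orthogonalProjection).toLinearMap) ∘ e) i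
        = (inner 𝕜 (e i) (f ⟨(i : ℕ), h⟩) : 𝕜) • f ⟨(i : ℕ), h⟩ := by
      have := hproj i
      simp only [dif_pos h] at this
      exact this
    have : f ⟨(i : ℕ), h⟩ = (inner 𝕜 (e i) (f ⟨(i : ℕ), h⟩) : 𝕜)⁻¹ •
        ((W.subtype ∘ₗ (W.orthogonalProjection).toLinearMap) ∘ e) i := by
      rw [heq, smul_smul, inv_mul_cancel₀ hne, one_smul]
    rw [this]
    exact Submodule.smul_mem _ _ hmem
end

section
/- Let V and W be nonzero subspaces of X, let U ⊆ V be a subspace, and let P be the orthogonal projection of X onto W. Then U is principal with respect to W — i.e., there exist associated principal bases e of V and f of W and an index set S with U = span{e i : i ∈ S} — if and only if P(U) ⊥ P(U⊥ ∩ V), where U⊥ ∩ V is the orthogonal complement of U within V. -/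
variable {𝕜 X : Type*} [RCLike 𝕜] [NormedAddCommGroup X] [InnerProductSpace 𝕜 X]
  [FiniteDimensional 𝕜 X]

open Submodule

local notation "⟪" x ", " y "⟫" => @inner 𝕜 _ _ x y

section H
omit [FiniteDimensional 𝕜 X]

theorem unit_inner_self {x : X} (hx : x ≠ 0) :
    ⟪((‖x‖:𝕜))⁻¹ • x, ((‖x‖:𝕜))⁻¹ • x⟫ = 1 := by
  have hx' : (‖x‖ : 𝕜) ≠ 0 := by
    simpa using norm_ne_zero_iff.2 hx
  rw [inner_smul_left, inner_smul_right, inner_self_eq_norm_sq_to_K, map_inv₀, RCLike.conj_ofReal]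
  field_simp

theorem inner_self_unit {x : X} (hx : x ≠ 0) :
    ⟪x, ((‖x‖:𝕜))⁻¹ • x⟫ = ((‖x‖ : ℝ) : 𝕜) := by
  have hx' : (‖x‖ : 𝕜) ≠ 0 := by
    simpa using norm_ne_zero_iff.2 hx
  rw [inner_smul_right, inner_self_eq_norm_sq_to_K]
  rw [sq, ← mul_assoc, inv_mul_cancel₀ hx', one_mul]

end H

theorem pw_inner_left (W : Submodule 𝕜 X) (a w : X) (hw : w ∈ W) :
    ⟪a, w⟫ = ⟪(orthogonalProjection W a : X), w⟫ := by
  have h : ⟪a - W.starProjection a, w⟫ = 0 := W.starProjection_inner_eq_zero a w hw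
  rw [inner_sub_left, sub_eq_zero] at h
  exact h

theorem pw_inner_pw (W : Submodule 𝕜 X) (a b : X) :
    ⟪(orthogonalProjection W a : X), (orthogonalProjection W b : X)⟫
      = ⟪a, (orthogonalProjection W b : X)⟫ :=
  (pw_inner_left W a _ (orthogonalProjection W b).2).symm

theorem span_range_coe_onb {K : Submodule 𝕜 X} {ι : Type*} [Fintype ι]
    (b : OrthonormalBasis ι 𝕜 K) :
    Submodule.span 𝕜 (Set.range fun i => (b i : X)) = K := by
  have h1 : (Set.range fun i => (b i : X)) = K.subtype '' Set.range b := by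
    rw [← Set.range_comp]; rfl
  rw [h1, ← Submodule.map_span]
  have h2 : span 𝕜 (Set.range ⇑b) = ⊤ := by
    have := b.toBasis.span_eq
    rwa [b.coe_toBasis] at this
  rw [h2]
  simp [Submodule.map_top, Submodule.range_subtype]

theorem onb_coe_orthonormal {K : Submodule 𝕜 X} {ι : Type*} [Fintype ι]
    (b : OrthonormalBasis ι 𝕜 K) : Orthonormal 𝕜 (fun i => (b i : X)) := by
  have h : (fun i => (b i : X)) = K.subtypeₗᵢ ∘ b := rfl
  rw [h]
  exact b.orthonormal.comp_linearIsometry K.subtypeₗᵢ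

theorem aux_svd (W Y : Submodule 𝕜 X) :
    ∃ e : Fin (Module.finrank 𝕜 Y) → X, Orthonormal 𝕜 e ∧
      Submodule.span 𝕜 (Set.range e) = Y ∧
      ∀ i j, i ≠ j →
        ⟪(orthogonalProjection W (e i) : X), (orthogonalProjection W (e j) : X)⟫ = 0 := by
  let T : Y →ₗ[𝕜] Y := (orthogonalProjection Y).toLinearMap ∘ₗ
    ((W.subtype ∘ₗ (orthogonalProjection W).toLinearMap) ∘ₗ Y.subtype)
  have hT : T.IsSymmetric := by
    intro x y
    have hx : T x = orthogonalProjection Y ((orthogonalProjection W (x:X) : X)) := rfl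
    have hy : T y = orthogonalProjection Y ((orthogonalProjection W (y:X) : X)) := rfl
    rw [hx, hy, inner_orthogonalProjection_eq_of_mem_right,
      inner_orthogonalProjection_eq_of_mem_left]
    exact Submodule.inner_starProjection_left_eq_right (K := W) _ _
  let b := hT.eigenvectorBasis rfl
  refine ⟨fun i => (b i : X), onb_coe_orthonormal b, span_range_coe_onb b, fun i j hij => ?_⟩
  rw [pw_inner_pw]
  have h1 : ⟪((b i : Y) : X), (orthogonalProjection W (b j) : X)⟫
      = ⟪(b i : Y), (orthogonalProjection Y ((orthogonalProjection W (b j) : X)) : Y)⟫ := by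
    rw [inner_orthogonalProjection_eq_of_mem_left]
  rw [h1]
  have h2 : (orthogonalProjection Y ((orthogonalProjection W ((b j : X)) : X)) : Y) = T (b j) := rfl
  rw [h2, hT.apply_eigenvectorBasis]
  rw [inner_smul_right, b.orthonormal.2 hij, mul_zero]

theorem core (W : Submodule 𝕜 X) {p : ℕ} (e0 : Fin p → X)
    (he : Orthonormal 𝕜 e0)
    (horth : ∀ i j : Fin p, i ≠ j →
      ⟪(orthogonalProjection W (e0 i) : X), (orthogonalProjection W (e0 j) : X)⟫ = 0) :
    ∃ (σ : Equiv.Perm (Fin p)) (f : Fin (Module.finrank 𝕜 W) → X),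
      IsPrincipalPair (Submodule.span 𝕜 (Set.range e0)) W (e0 ∘ σ) f := by
  classical
  set q := Module.finrank 𝕜 W with hq
  set Pw : X → X := fun x => (orthogonalProjection W x : X) with hPwdef
  have hPwW : ∀ x, Pw x ∈ W := fun x => (orthogonalProjection W x).2
  have pwl : ∀ (a w : X), w ∈ W → ⟪a, w⟫ = ⟪Pw a, w⟫ := fun a w hw => pw_inner_left W a w hw
  set act : Finset (Fin p) := Finset.univ.filter (fun i => Pw (e0 i) ≠ 0) with hact
  set k := act.card with hk
  set n2 := Fintype.card {i : Fin p // ¬ i ∈ act} with hn2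
  have hcard : k + n2 = p := by
    have h := Fintype.card_congr (Equiv.sumCompl (fun i : Fin p => i ∈ act))
    rw [Fintype.card_sum, Fintype.card_coe, Fintype.card_fin] at h
    exact h
  have hkp : k ≤ p := le_of_add_le_left hcard.le
  let eA : Fin k ≃ {i : Fin p // i ∈ act} := act.equivFin.symm
  let eB : Fin n2 ≃ {i : Fin p // ¬ i ∈ act} := (Fintype.equivFinOfCardEq rfl).symm
  let σ : Equiv.Perm (Fin p) := (finCongr hcard.symm).trans ((finSumFinEquiv.symm).trans
    ((Equiv.sumCongr eA eB).trans (Equiv.sumCompl (fun i => i ∈ act))))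
  have P1 : ∀ (j : Fin p) (h : (j:ℕ) < k), σ j = ↑(eA ⟨(j:ℕ), h⟩) := by
    intro j h
    show (Equiv.sumCompl _) ((Equiv.sumCongr eA eB) (finSumFinEquiv.symm (finCongr hcard.symm j)))
      = _
    have h2 : finCongr hcard.symm j = Fin.castAdd n2 ⟨(j:ℕ), h⟩ := by ext; simp
    rw [h2, finSumFinEquiv_symm_apply_castAdd]
    simp
  have P2 : ∀ (j : Fin p) (h : ¬ (j:ℕ) < k) (h2 : (j:ℕ) - k < n2),
      σ j = ↑(eB ⟨(j:ℕ) - k, h2⟩) := by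
    intro j h h2
    show (Equiv.sumCompl _) ((Equiv.sumCongr eA eB) (finSumFinEquiv.symm (finCongr hcard.symm j)))
      = _
    have h3 : finCongr hcard.symm j = Fin.natAdd k ⟨(j:ℕ) - k, h2⟩ := by ext; simp; omega
    rw [h3, finSumFinEquiv_symm_apply_natAdd]
    simp
  have hmemact : ∀ i : Fin p, i ∈ act ↔ Pw (e0 i) ≠ 0 := by
    intro i; simp [hact]
  have hactive : ∀ (j : Fin p), (j:ℕ) < k → Pw (e0 (σ j)) ≠ 0 := by
    intro j h
    rw [P1 j h]
    exact (hmemact _).1 (eA ⟨(j:ℕ), h⟩).2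
  have hinactive : ∀ (j : Fin p), ¬ (j:ℕ) < k → Pw (e0 (σ j)) = 0 := by
    intro j h
    have h2 : (j:ℕ) - k < n2 := by have := j.2; omega
    rw [P2 j h h2]
    by_contra hne
    exact (eB ⟨(j:ℕ) - k, h2⟩).2 ((hmemact _).2 hne)
  set E : Fin p → X := e0 ∘ σ with hE
  have horthE : ∀ i j : Fin p, i ≠ j → ⟪Pw (E i), Pw (E j)⟫ = 0 := by
    intro i j hij
    exact horth _ _ (fun hc => hij (σ.injective hc))
  -- the subspace G spanned by active projections
  set G : Submodule 𝕜 X := span 𝕜 ((fun i => Pw (e0 i)) '' act) with hG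
  have hGW : G ≤ W := by
    rw [hG, span_le]
    rintro x ⟨i, _, rfl⟩
    exact hPwW _
  -- normalized active family
  set gN : {i : Fin p // i ∈ act} → X :=
    fun i => ((‖Pw (e0 i)‖ : 𝕜))⁻¹ • Pw (e0 i) with hgN
  have hgnorm : ∀ i : {i : Fin p // i ∈ act}, ‖Pw (e0 i)‖ ≠ 0 := by
    intro i
    exact norm_ne_zero_iff.2 ((hmemact _).1 i.2)
  have hgNorthonormal : Orthonormal 𝕜 gN := by
    rw [orthonormal_iff_ite]
    intro i j
    by_cases hij : i = j
    · subst hij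
      rw [if_pos rfl]
      exact unit_inner_self ((hmemact _).1 i.2)
    · have hne : (i : Fin p) ≠ (j : Fin p) := fun hc => hij (Subtype.ext hc)
      simp only [hgN, inner_smul_left, inner_smul_right, if_neg hij]
      rw [horth _ _ hne]
      ring
  have hspanG : span 𝕜 (Set.range gN) = G := by
    apply le_antisymm
    · rw [span_le]
      rintro x ⟨i, rfl⟩
      refine Submodule.smul_mem _ _ (subset_span ⟨i, i.2, rfl⟩)
    · rw [hG, span_le]
      rintro x ⟨i, hi, rfl⟩
      have h1 : (fun i => Pw (e0 i)) i = (‖Pw (e0 i)‖ : 𝕜) • gN ⟨i, hi⟩ := by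
        show Pw (e0 i) = _
        rw [hgN, smul_smul]
        rw [mul_inv_cancel₀ (by exact_mod_cast hgnorm ⟨i, hi⟩), one_smul]
      rw [h1]
      exact Submodule.smul_mem _ _ (subset_span ⟨⟨i, hi⟩, rfl⟩)
  have hfinG : Module.finrank 𝕜 G = k := by
    rw [← hspanG, finrank_span_eq_card hgNorthonormal.linearIndependent, Fintype.card_coe]
  have hkq : k ≤ q := by
    rw [← hfinG, hq]
    exact Submodule.finrank_mono hGW
  set Wg : Submodule 𝕜 X := Gᗮ ⊓ W with hWg
  have hq2 : k + Module.finrank 𝕜 Wg = q := by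
    rw [← hfinG]
    exact Submodule.finrank_add_inf_finrank_orthogonal hGW
  set bW := stdOrthonormalBasis 𝕜 Wg with hbW
  -- definition of f
  set f : Fin q → X := fun j =>
    if h : (j:ℕ) < k then
      ((‖Pw (E ⟨(j:ℕ), lt_of_lt_of_le h hkp⟩)‖ : 𝕜))⁻¹ • Pw (E ⟨(j:ℕ), lt_of_lt_of_le h hkp⟩)
    else (bW ⟨(j:ℕ) - k, by have := j.2; omega⟩ : X) with hf

  have hactiveE : ∀ j : Fin p, (j:ℕ) < k → Pw (E j) ≠ 0 := hactive
  have hinactiveE : ∀ j : Fin p, ¬ (j:ℕ) < k → Pw (E j) = 0 := hinactive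
  have hPwEG : ∀ i : Fin p, (i:ℕ) < k → Pw (E i) ∈ G := by
    intro i h
    refine subset_span ⟨σ i, ?_, rfl⟩
    exact Finset.mem_coe.2 ((hmemact (σ i)).2 (hactive i h))
  have hGperp1 : ∀ a b : X, a ∈ G → b ∈ Gᗮ → ⟪a, b⟫ = 0 := by
    intro a b ha hb
    exact (Submodule.mem_orthogonal G b).1 hb a ha
  have hGperp2 : ∀ a b : X, a ∈ Gᗮ → b ∈ G → ⟪a, b⟫ = 0 := by
    intro a b ha hb
    exact inner_eq_zero_symm.1 (hGperp1 b a hb ha)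
  have hbWmem : ∀ m, (bW m : X) ∈ Wg := fun m => (bW m).2
  have hbWGperp : ∀ m, (bW m : X) ∈ Gᗮ := fun m => (Submodule.mem_inf.1 (hbWmem m)).1
  have hbWW : ∀ m, (bW m : X) ∈ W := fun m => (Submodule.mem_inf.1 (hbWmem m)).2
  have hfW : ∀ j : Fin q, f j ∈ W := by
    intro j
    simp only [hf]
    by_cases h : (j:ℕ) < k
    · rw [dif_pos h]
      exact Submodule.smul_mem _ _ (hPwW _)
    · rw [dif_neg h]
      exact hbWW _
  have hfon : Orthonormal 𝕜 f := by
    rw [orthonormal_iff_ite]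
    intro i j
    by_cases hij : i = j
    · subst hij
      rw [if_pos rfl]
      simp only [hf]
      by_cases h : (i:ℕ) < k
      · rw [dif_pos h]
        exact unit_inner_self (hactiveE _ h)
      · rw [dif_neg h]
        have h2 := orthonormal_iff_ite.mp (onb_coe_orthonormal bW)
          ⟨(i:ℕ) - k, by have := i.2; omega⟩ ⟨(i:ℕ) - k, by have := i.2; omega⟩
        simpa using h2
    · rw [if_neg hij]
      simp only [hf]
      have hvalne : (i:ℕ) ≠ (j:ℕ) := fun hc => hij (Fin.ext hc)
      by_cases h1 : (i:ℕ) < k <;> by_cases h2 : (j:ℕ) < k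
      · rw [dif_pos h1, dif_pos h2, inner_smul_left, inner_smul_right]
        have hne : (⟨(i:ℕ), lt_of_lt_of_le h1 hkp⟩ : Fin p)
            ≠ ⟨(j:ℕ), lt_of_lt_of_le h2 hkp⟩ := by
          intro hc
          rw [Fin.mk.injEq] at hc
          exact hvalne hc
        rw [horthE _ _ hne]
        ring
      · rw [dif_pos h1, dif_neg h2, inner_smul_left]
        rw [hGperp1 _ _ (hPwEG ⟨(i:ℕ), lt_of_lt_of_le h1 hkp⟩ h1) (hbWGperp _), mul_zero]
      · rw [dif_neg h1, dif_pos h2, inner_smul_right]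
        rw [hGperp2 _ _ (hbWGperp _) (hPwEG ⟨(j:ℕ), lt_of_lt_of_le h2 hkp⟩ h2), mul_zero]
      · rw [dif_neg h1, dif_neg h2]
        have h3 := orthonormal_iff_ite.mp (onb_coe_orthonormal bW)
          ⟨(i:ℕ) - k, by have := i.2; omega⟩ ⟨(j:ℕ) - k, by have := j.2; omega⟩
        rw [h3, if_neg]
        intro hc
        have := congrArg Fin.val hc
        simp only [] at this
        omega
  have hWsup : G ⊔ Wg = W := Submodule.sup_orthogonal_inf_of_hasOrthogonalProjection hGW
  have hspanf : span 𝕜 (Set.range f) = W := by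
    apply le_antisymm
    · rw [span_le]
      rintro x ⟨j, rfl⟩
      exact hfW j
    · rw [← hWsup, sup_le_iff]
      constructor
      · rw [hG, span_le]
        rintro x ⟨i, hi, rfl⟩
        have hi' : i ∈ act := Finset.mem_coe.1 hi
        set j0 := eA.symm ⟨i, hi'⟩ with hj0
        have hj0p : (j0:ℕ) < p := lt_of_lt_of_le j0.2 hkp
        have hσ : σ ⟨(j0:ℕ), hj0p⟩ = i := by
          rw [P1 ⟨(j0:ℕ), hj0p⟩ j0.2]
          have : (⟨(j0:ℕ), j0.2⟩ : Fin k) = j0 := rfl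
          rw [this, hj0, Equiv.apply_symm_apply]
        have hfj : f ⟨(j0:ℕ), lt_of_lt_of_le j0.2 hkq⟩
            = ((‖Pw (e0 i)‖ : 𝕜))⁻¹ • Pw (e0 i) := by
          simp only [hf]
          have : ((⟨(j0:ℕ), lt_of_lt_of_le j0.2 hkq⟩ : Fin q) : ℕ) < k := j0.2
          rw [dif_pos this]
          have hEe : E ⟨(j0:ℕ), hj0p⟩ = e0 i := by rw [hE]; simp [hσ]
          simp only [hEe]
        have hx : (fun i => Pw (e0 i)) i
            = (‖Pw (e0 i)‖ : 𝕜) • f ⟨(j0:ℕ), lt_of_lt_of_le j0.2 hkq⟩ := by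
          show Pw (e0 i) = _
          rw [hfj, smul_smul, mul_inv_cancel₀, one_smul]
          have : Pw (e0 i) ≠ 0 := (hmemact i).1 hi'
          simpa using norm_ne_zero_iff.2 this
        rw [hx]
        exact Submodule.smul_mem _ _ (subset_span (Set.mem_range_self _))
      · rw [← span_range_coe_onb bW, span_le]
        rintro x ⟨m, rfl⟩
        show (bW m : X) ∈ span 𝕜 (Set.range f)
        have hm : ((⟨k + (m:ℕ), by have := m.2; omega⟩ : Fin q) : ℕ) = k + (m:ℕ) := rfl
        have hfm : f ⟨k + (m:ℕ), by have := m.2; omega⟩ = (bW m : X) := by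
          simp only [hf]
          rw [dif_neg (by omega)]
          congr 1
          ext
          simp
        rw [← hfm]
        exact subset_span (Set.mem_range_self _)
  refine ⟨σ, f, he.comp σ σ.injective, ?_, hfon, hspanf, ?_, ?_⟩
  · rw [Set.range_comp, Equiv.range_eq_univ, Set.image_univ]
  · intro i j hij
    rw [show ((e0 ∘ σ) i : X) = E i from rfl]
    rw [pwl (E i) (f j) (hfW j)]
    simp only [hf]
    by_cases h2 : (j:ℕ) < k
    · rw [dif_pos h2, inner_smul_right]
      have hne : i ≠ (⟨(j:ℕ), lt_of_lt_of_le h2 hkp⟩ : Fin p) := by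
        intro hc
        exact hij (congrArg Fin.val hc)
      rw [horthE _ _ hne, mul_zero]
    · rw [dif_neg h2]
      by_cases h1 : (i:ℕ) < k
      · exact hGperp1 _ _ (hPwEG i h1) (hbWGperp _)
      · rw [hinactiveE i h1, inner_zero_left]
  · intro i j hij
    by_cases h2 : (j:ℕ) < k
    · have h1 : (i:ℕ) < k := by omega
      have hieq : (⟨(j:ℕ), lt_of_lt_of_le h2 hkp⟩ : Fin p) = i := by
        ext
        exact hij.symm
      have hfj : f j = ((‖Pw (E i)‖ : 𝕜))⁻¹ • Pw (E i) := by
        simp only [hf]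
        rw [dif_pos h2]
        rw [hieq]
      refine ⟨‖Pw (E i)‖, norm_nonneg _, ?_⟩
      rw [show ((e0 ∘ σ) i : X) = E i from rfl]
      rw [pwl (E i) (f j) (hfW j), hfj]
      exact inner_self_unit (hactiveE _ h1)
    · refine ⟨0, le_refl 0, ?_⟩
      have h1 : ¬ (i:ℕ) < k := by omega
      rw [show ((e0 ∘ σ) i : X) = E i from rfl]
      rw [pwl (E i) (f j) (hfW j), hinactiveE i h1, inner_zero_left]
      simp

/-- For nonzero subspaces `V, W`, a subspace `U ⊆ V`, and `P` the orthogonal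
projection onto `W`: `U` is principal with respect to `W` if and only if
`P(U) ⊥ P(U^⊥ ∩ V)`. -/
theorem principal_iff_orthogonal_projections (V W : Submodule 𝕜 X) (hV : V ≠ ⊥) (hW : W ≠ ⊥)
    (U : Submodule 𝕜 X) (hUV : U ≤ V) :
    (∃ (p q : ℕ) (e : Fin p → X) (f : Fin q → X) (S : Set (Fin p)),
        IsPrincipalPair V W e f ∧ U = Submodule.span 𝕜 (e '' S)) ↔
      (∀ x ∈ Submodule.map (W.subtype ∘ₗ (W.orthogonalProjectionOnto).toLinearMap) U,
        ∀ y ∈ Submodule.map (W.subtype ∘ₗ (W.orthogonalProjectionOnto).toLinearMap) (Uᗮ ⊓ V),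
          (inner 𝕜 x y : 𝕜) = 0) := by
  classical
  set P : X →ₗ[𝕜] X := W.subtype ∘ₗ (orthogonalProjection W).toLinearMap with hP
  constructor
  · rintro ⟨p, q, e, f, S, ⟨he, hspe, hfon, hspf, hoff, hdiag⟩, hU⟩
    have hfW : ∀ j, f j ∈ W := fun j => hspf ▸ subset_span (Set.mem_range_self j)
    set f' : Fin q → W := fun j => (⟨f j, hfW j⟩ : W) with hf'
    have hf'on : Orthonormal 𝕜 f' := by
      rw [orthonormal_iff_ite] at hfon ⊢
      intro i j
      exact hfon i j
    have hf'span : ⊤ ≤ span 𝕜 (Set.range f') := by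
      intro w _
      have h1 : Submodule.map W.subtype (span 𝕜 (Set.range f')) = W := by
        rw [Submodule.map_span, ← Set.range_comp]
        have h2 : (W.subtype ∘ f') = f := rfl
        rw [h2, hspf]
      have h2 : (w : X) ∈ Submodule.map W.subtype (span 𝕜 (Set.range f')) := by
        rw [h1]; exact w.2
      rcases h2 with ⟨w', hw', hww⟩
      have h3 : w' = w := Subtype.ext hww
      rwa [← h3]
    set fB : OrthonormalBasis (Fin q) 𝕜 W := OrthonormalBasis.mk hf'on hf'span with hfB
    have hfBc : ∀ j, (fB j : X) = f j := by
      intro j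
      rw [hfB, OrthonormalBasis.coe_mk]
    have hPsum : ∀ x : X, (orthogonalProjection W x : X) = ∑ m, ⟪f m, x⟫ • f m := by
      intro x
      have h1 := fB.orthogonalProjectionOnto_apply_eq_sum x
      calc (orthogonalProjection W x : X) = ((∑ m, ⟪(fB m : X), x⟫ • fB m : W) : X) := by
            rw [h1]
        _ = ∑ m, ⟪f m, x⟫ • f m := by
            push_cast
            refine Finset.sum_congr rfl fun m _ => ?_
            rw [hfBc]
    have hclaim : ∀ i j : Fin p, i ≠ j →
        ⟪(orthogonalProjection W (e i) : X), (orthogonalProjection W (e j) : X)⟫ = 0 := by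
      intro i j hij
      have hvals : (i:ℕ) ≠ (j:ℕ) := fun h => hij (Fin.ext h)
      rw [pw_inner_pw, hPsum, inner_sum]
      apply Finset.sum_eq_zero
      intro m _
      rw [inner_smul_right]
      by_cases hmi : (i:ℕ) = (m:ℕ)
      · have h0 : (inner 𝕜 (e j) (f m) : 𝕜) = 0 := hoff j m (by omega)
        have h0' : (inner 𝕜 (f m) (e j) : 𝕜) = 0 := inner_eq_zero_symm.2 h0
        rw [h0', zero_mul]
      · rw [hoff i m hmi, mul_zero]
    set N := span 𝕜 (e '' Sᶜ) with hN
    have hUortho : span 𝕜 (e '' S) ⟂ N := by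
      rw [hN, Submodule.isOrtho_span]
      rintro a ⟨ia, hia, rfl⟩ b ⟨ib, hib, rfl⟩
      have hne : ia ≠ ib := fun hc => hib (hc ▸ hia)
      exact he.2 hne
    have hUN : ∀ u n : X, u ∈ U → n ∈ N → ⟪u, n⟫ = 0 := by
      intro u n hu hn
      exact Submodule.isOrtho_iff_inner_eq.1 hUortho u (by rw [← hU]; exact hu) n hn
    have hsub : Uᗮ ⊓ V ≤ N := by
      rintro v ⟨hvU, hvV⟩
      have hVsup : U ⊔ N = V := by
        rw [hU, hN, ← Submodule.span_union, ← Set.image_union, Set.union_compl_self,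
          Set.image_univ, hspe]
      rcases Submodule.mem_sup.1 (by rw [hVsup]; exact hvV : v ∈ U ⊔ N) with ⟨u, hu, n, hn, rfl⟩
      have h1 : ⟪u, u + n⟫ = 0 := (Submodule.mem_orthogonal U (u + n)).1 hvU u hu
      have h2 : ⟪u, n⟫ = 0 := hUN u n hu hn
      rw [inner_add_right, h2, add_zero] at h1
      have h3 : u = 0 := inner_self_eq_zero.1 h1
      rw [h3, zero_add]
      exact hn
    intro x hx y hy
    have hmain : Submodule.map P (span 𝕜 (e '' S)) ⟂ Submodule.map P N := by
      rw [hN, Submodule.map_span, Submodule.map_span, Submodule.isOrtho_span]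
      rintro a ⟨a', ⟨ia, hia, rfl⟩, rfl⟩ b ⟨b', ⟨ib, hib, rfl⟩, rfl⟩
      have hne : ia ≠ ib := fun hc => hib (hc ▸ hia)
      show ⟪(orthogonalProjection W (e ia) : X), (orthogonalProjection W (e ib) : X)⟫ = 0
      exact hclaim ia ib hne
    have hx' : x ∈ Submodule.map P (span 𝕜 (e '' S)) := by rw [← hU]; exact hx
    have hy' : y ∈ Submodule.map P N := Submodule.map_mono hsub hy
    exact Submodule.isOrtho_iff_inner_eq.1 hmain x hx' y hy'
  · intro hyp
    set U' := Uᗮ ⊓ V with hU'def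
    set m1 := Module.finrank 𝕜 U with hm1
    set m2 := Module.finrank 𝕜 U' with hm2
    obtain ⟨e1, he1, hsp1, ho1⟩ := aux_svd W U
    obtain ⟨e2, he2, hsp2, ho2⟩ := aux_svd W U'
    set e0 : Fin (m1 + m2) → X := Fin.append e1 e2 with he0
    have he1U : ∀ i, e1 i ∈ U := by
      intro i
      rw [← hsp1]
      exact subset_span (Set.mem_range_self i)
    have he2U' : ∀ i, e2 i ∈ U' := by
      intro i
      rw [← hsp2]
      exact subset_span (Set.mem_range_self i)
    have hUperp : ∀ (a b : X), a ∈ U → b ∈ U' → ⟪a, b⟫ = 0 := by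
      intro a b ha hb
      exact (Submodule.mem_orthogonal U b).1 hb.1 a ha
    have hdecomp : ∀ i : Fin (m1 + m2),
        (∃ i1, i = Fin.castAdd m2 i1) ∨ (∃ i1, i = Fin.natAdd m1 i1) := fun i =>
      Fin.addCases (fun i1 => Or.inl ⟨i1, rfl⟩) (fun i1 => Or.inr ⟨i1, rfl⟩) i
    have he0on : Orthonormal 𝕜 e0 := by
      rw [orthonormal_iff_ite]
      intro i j
      rcases hdecomp i with ⟨i1, rfl⟩ | ⟨i1, rfl⟩ <;> rcases hdecomp j with ⟨j1, rfl⟩ | ⟨j1, rfl⟩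
      · rw [he0, Fin.append_left, Fin.append_left]
        rw [orthonormal_iff_ite] at he1
        rw [he1 i1 j1]
        by_cases h : i1 = j1
        · rw [if_pos h, if_pos (by rw [h])]
        · rw [if_neg h, if_neg (fun hc => h (by simpa [Fin.ext_iff] using hc))]
      · rw [he0, Fin.append_left, Fin.append_right]
        rw [hUperp _ _ (he1U i1) (he2U' j1)]
        rw [if_neg (fun hc => by simp [Fin.ext_iff] at hc; omega)]
      · rw [he0, Fin.append_right, Fin.append_left]
        rw [inner_eq_zero_symm.1 (hUperp _ _ (he1U j1) (he2U' i1))]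
        rw [if_neg (fun hc => by simp [Fin.ext_iff] at hc; omega)]
      · rw [he0, Fin.append_right, Fin.append_right]
        rw [orthonormal_iff_ite] at he2
        rw [he2 i1 j1]
        by_cases h : i1 = j1
        · rw [if_pos h, if_pos (by rw [h])]
        · rw [if_neg h, if_neg (fun hc => h (by
            rw [Fin.ext_iff] at hc ⊢
            simp at hc
            omega))]
    have hcross : ∀ (a b : X), a ∈ U → b ∈ U' →
        ⟪(orthogonalProjection W a : X), (orthogonalProjection W b : X)⟫ = 0 := by
      intro a b ha hb
      exact hyp _ ⟨a, ha, rfl⟩ _ ⟨b, hb, rfl⟩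
    have horth0 : ∀ i j : Fin (m1 + m2), i ≠ j →
        ⟪(orthogonalProjection W (e0 i) : X), (orthogonalProjection W (e0 j) : X)⟫ = 0 := by
      intro i j hij
      rcases hdecomp i with ⟨i1, rfl⟩ | ⟨i1, rfl⟩ <;> rcases hdecomp j with ⟨j1, rfl⟩ | ⟨j1, rfl⟩
      · rw [he0, Fin.append_left, Fin.append_left]
        exact ho1 i1 j1 (fun hc => hij (by rw [hc]))
      · rw [he0, Fin.append_left, Fin.append_right]
        exact hcross _ _ (he1U i1) (he2U' j1)
      · rw [he0, Fin.append_right, Fin.append_left]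
        exact inner_eq_zero_symm.1 (hcross _ _ (he1U j1) (he2U' i1))
      · rw [he0, Fin.append_right, Fin.append_right]
        exact ho2 i1 j1 (fun hc => hij (by rw [hc]))
    have hrange : Set.range e0 = Set.range e1 ∪ Set.range e2 := by
      ext x
      constructor
      · rintro ⟨i, rfl⟩
        rcases hdecomp i with ⟨i1, rfl⟩ | ⟨i1, rfl⟩
        · left; exact ⟨i1, by rw [he0, Fin.append_left]⟩
        · right; exact ⟨i1, by rw [he0, Fin.append_right]⟩
      · rintro (⟨i1, rfl⟩ | ⟨i1, rfl⟩)
        · exact ⟨Fin.castAdd m2 i1, by rw [he0, Fin.append_left]⟩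
        · exact ⟨Fin.natAdd m1 i1, by rw [he0, Fin.append_right]⟩
    have hspanV : span 𝕜 (Set.range e0) = V := by
      rw [hrange, Submodule.span_union, hsp1, hsp2, hU'def]
      exact Submodule.sup_orthogonal_inf_of_hasOrthogonalProjection hUV
    obtain ⟨σ, f, hpair⟩ := core W e0 he0on horth0
    rw [hspanV] at hpair
    refine ⟨m1 + m2, Module.finrank 𝕜 W, e0 ∘ σ, f,
      σ ⁻¹' {j : Fin (m1 + m2) | (j:ℕ) < m1}, hpair, ?_⟩
    have h1 : (e0 ∘ σ) '' (σ ⁻¹' {j : Fin (m1 + m2) | (j:ℕ) < m1})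
        = e0 '' {j : Fin (m1 + m2) | (j:ℕ) < m1} := by
      rw [Set.image_comp, Set.image_preimage_eq _ σ.surjective]
    have h2 : e0 '' {j : Fin (m1 + m2) | (j:ℕ) < m1} = Set.range e1 := by
      ext x
      constructor
      · rintro ⟨j, hj, rfl⟩
        refine ⟨⟨(j:ℕ), hj⟩, ?_⟩
        have h4 : j = Fin.castAdd m2 ⟨(j:ℕ), hj⟩ := by ext; rfl
        have h3 : e0 j = e1 ⟨(j:ℕ), hj⟩ := by
          rw [he0]
          conv_lhs => rw [h4]
          rw [Fin.append_left]
        exact h3.symm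
      · rintro ⟨i1, rfl⟩
        exact ⟨Fin.castAdd m2 i1, by simpa using i1.2, by rw [he0, Fin.append_left]⟩
    rw [h1, h2, hsp1]
end

section
/- Let e : Fin p → X and f : Fin q → X be associated principal bases of nonzero subspaces V and W, let P be the orthogonal projection onto W, and let S, T ⊆ Fin p be distinct subsets with |S| = |T| = r. Set V₁ = span{e i : i ∈ S} and V₂ = span{e i : i ∈ T}. Then for every family a : Fin r → X with all values in V₁ and every family b : Fin r → X with all values in V₂, both det( (⟪a i, b j⟫)_{i,j} ) = 0 and det( (⟪P(a i), P(b j)⟫)_{i,j} ) = 0. -/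
variable {𝕜 X : Type*} [RCLike 𝕜] [NormedAddCommGroup X] [InnerProductSpace 𝕜 X]
  [FiniteDimensional 𝕜 X]

/-- inner 𝕜 with z vanishes on a span when it vanishes on generators. -/
lemma aux_inner_span_zero {s : Set X} {x : X} (hx : x ∈ Submodule.span 𝕜 s) (z : X)
    (h : ∀ y ∈ s, (inner 𝕜 y z : 𝕜) = 0) : (inner 𝕜 x z : 𝕜) = 0 := by
  induction hx using Submodule.span_induction with
  | mem y hy => exact h y hy
  | zero => simp
  | add u v hu hv hu' hv' => rw [inner_add_left, hu', hv', add_zero]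
  | smul c u hu hu' => rw [inner_smul_left, hu', mul_zero]

/-- expand inner 𝕜 product against an element of a span of an orthonormal family. -/
lemma aux_expand {n : ℕ} {g : Fin n → X} (hg : Orthonormal 𝕜 g) (U : Finset (Fin n)) {w : X}
    (hw : w ∈ Submodule.span 𝕜 (g '' ↑U)) (x : X) :
    (inner 𝕜 x w : 𝕜) = ∑ k ∈ U, (inner 𝕜 (g k) w : 𝕜) * (inner 𝕜 x (g k) : 𝕜) := by
  induction hw using Submodule.span_induction with
  | mem y hy =>
    obtain ⟨t, ht, rfl⟩ := hy
    rw [Finset.sum_eq_single t]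
    · rw [orthonormal_iff_ite.1 hg t t, if_pos rfl, one_mul]
    · intro k _ hk
      rw [orthonormal_iff_ite.1 hg k t, if_neg hk, zero_mul]
    · intro h; exact absurd ht h
  | zero => simp
  | add u v hu hv hu' hv' =>
    simp only [inner_add_right, hu', hv', add_mul, Finset.sum_add_distrib]
  | smul c u hu hu' =>
    simp only [inner_smul_right, hu', Finset.mul_sum, mul_assoc]

/-- expand inner 𝕜 product with projection of an element of a span of an orthonormal family. -/
lemma aux_expandP (W : Submodule 𝕜 X) {n : ℕ} {g : Fin n → X} (hg : Orthonormal 𝕜 g)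
    (U : Finset (Fin n)) {w : X} (hw : w ∈ Submodule.span 𝕜 (g '' ↑U)) (x : X) :
    (inner 𝕜 x ((Submodule.orthogonalProjectionOnto W w : X)) : 𝕜) =
      ∑ k ∈ U, (inner 𝕜 (g k) w : 𝕜) * (inner 𝕜 x ((Submodule.orthogonalProjectionOnto W (g k) : X)) : 𝕜) := by
  induction hw using Submodule.span_induction with
  | mem y hy =>
    obtain ⟨t, ht, rfl⟩ := hy
    rw [Finset.sum_eq_single t]
    · rw [orthonormal_iff_ite.1 hg t t, if_pos rfl, one_mul]
    · intro k _ hk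
      rw [orthonormal_iff_ite.1 hg k t, if_neg hk, zero_mul]
    · intro h; exact absurd ht h
  | zero => simp
  | add u v hu hv hu' hv' =>
    simp only [map_add, Submodule.coe_add, inner_add_right, inner_add_left, hu', hv', add_mul,
      Finset.sum_add_distrib]
  | smul c u hu hu' =>
    simp only [map_smul, Submodule.coe_smul, inner_smul_right, inner_smul_left, hu',
      Finset.mul_sum, mul_assoc, mul_left_comm]

/-- A matrix that factors through fewer than `r` indices has zero determinant. -/
lemma aux_det_zero {r : ℕ} {ι : Type*} [DecidableEq ι] (K : Finset ι) (hK : K.card < r)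
    (g : Fin r → ι → 𝕜) (h : ι → Fin r → 𝕜) (M : Matrix (Fin r) (Fin r) 𝕜)
    (hM : ∀ i j, M i j = ∑ k ∈ K, g i k * h k j) : M.det = 0 := by
  have hfact : M = (Matrix.of fun i (k : ↥K) => g i (k : ι)) *
      (Matrix.of fun (k : ↥K) j => h (k : ι) j) := by
    ext i j
    rw [Matrix.mul_apply, hM]
    exact (Finset.sum_coe_sort K fun k => g i k * h k j).symm
  by_contra hdet
  have hunit : IsUnit M := (Matrix.isUnit_iff_isUnit_det M).2 (Ne.isUnit hdet)
  have h1 : M.rank = r := by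
    rw [Matrix.rank_of_isUnit M hunit, Fintype.card_fin]
  have h2 : M.rank ≤ K.card := by
    rw [hfact]
    exact le_trans (Matrix.rank_mul_le_right _ _)
      (le_trans (Matrix.rank_le_card_height _) (by simp))
  omega

/-- Let `e, f` be associated principal bases of nonzero subspaces `V, W`, `P`
the orthogonal projection onto `W`, and `S ≠ T` subsets of `Fin p` with `|S| = |T| = r`, spanning
coprincipal subspaces `V₁ = span {e i : i ∈ S}`, `V₂ = span {e i : i ∈ T}`.  Then for families
`a`, `b` valued in `V₁`, `V₂` respectively, `det (⟪a i, b j⟫) = 0` and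
`det (⟪P (a i), P (b j)⟫) = 0`. -/
theorem coprincipal_gram_dets_vanish {p q r : ℕ} (V W : Submodule 𝕜 X)
    (hV : V ≠ ⊥) (hW : W ≠ ⊥)
    (e : Fin p → X) (f : Fin q → X) (hef : IsPrincipalPair V W e f)
    (S T : Finset (Fin p)) (hST : S ≠ T) (hS : S.card = r) (hT : T.card = r)
    (a b : Fin r → X)
    (ha : ∀ i, a i ∈ Submodule.span 𝕜 (e '' ↑S))
    (hb : ∀ i, b i ∈ Submodule.span 𝕜 (e '' ↑T)) :
    (Matrix.of fun i j : Fin r => (inner 𝕜 (a i) (b j) : 𝕜)).det = 0 ∧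
    (Matrix.of fun i j : Fin r =>
      (inner 𝕜 ((Submodule.orthogonalProjectionOnto W (a i) : X)) ((Submodule.orthogonalProjectionOnto W (b j) : X)) : 𝕜)).det
      = 0 := by
  obtain ⟨he, hVe, hf, hWf, hortho, -⟩ := hef
  -- the intersection is small
  have hK : (S ∩ T).card < r := by
    rcases lt_or_eq_of_le (le_trans (Finset.card_le_card Finset.inter_subset_left) hS.le)
      with h | h
    · exact h
    · exfalso
      have h1 : S ∩ T = S :=
        Finset.eq_of_subset_of_card_le Finset.inter_subset_left (by omega)
      have h2 : S ⊆ T := by rw [← h1]; exact Finset.inter_subset_right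
      exact hST (Finset.eq_of_subset_of_card_le h2 (by omega))
  -- inner 𝕜 of a i with e k vanishes for k ∉ S
  have haek : ∀ (i : Fin r) (k : Fin p), k ∉ S → (inner 𝕜 (a i) (e k) : 𝕜) = 0 := by
    intro i k hk
    refine aux_inner_span_zero (ha i) _ ?_
    rintro y ⟨s, hs, rfl⟩
    rw [orthonormal_iff_ite.1 he s k, if_neg]
    exact fun h => hk (h ▸ hs)
  constructor
  · refine aux_det_zero (S ∩ T) hK (fun i k => (inner 𝕜 (a i) (e k) : 𝕜))
      (fun k j => (inner 𝕜 (e k) (b j) : 𝕜)) _ ?_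
    intro i j
    show (inner 𝕜 (a i) (b j) : 𝕜) = _
    rw [aux_expand he T (hb j) (a i)]
    rw [← Finset.sum_subset Finset.inter_subset_right]
    · exact Finset.sum_congr rfl fun k _ => mul_comm _ _
    · intro k hkT hk
      have hkS : k ∉ S := fun h => hk (Finset.mem_inter.2 ⟨h, hkT⟩)
      rw [haek i k hkS, mul_zero]
  · -- second determinant
    have hprojW : ∀ (u : X), u ∈ W → ∀ v : X,
        (inner 𝕜 u ((Submodule.orthogonalProjectionOnto W v : X)) : 𝕜) = inner 𝕜 u v := by
      intro u hu v
      have h := Submodule.inner_orthogonalProjectionOnto_eq_of_mem_left (K := W) (u := (⟨u, hu⟩ : W)) (v := v)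
      rwa [Submodule.coe_inner] at h
    -- inner 𝕜 of P(a i) with P(e k) vanishes for k ∉ S
    have haPk : ∀ (i : Fin r) (k : Fin p), k ∉ S →
        (inner 𝕜 (a i) ((Submodule.orthogonalProjectionOnto W (e k) : X)) : 𝕜) = 0 := by
      intro i k hk
      have hmem : ((Submodule.orthogonalProjectionOnto W (e k) : X)) ∈
          Submodule.span 𝕜 (f '' ↑(Finset.univ : Finset (Fin q))) := by
        rw [Finset.coe_univ, Set.image_univ, hWf]
        exact (Submodule.orthogonalProjectionOnto W (e k)).2
      rw [aux_expand hf Finset.univ hmem (a i)]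
      refine Finset.sum_eq_zero fun j _ => ?_
      by_cases hjk : (j : ℕ) = (k : ℕ)
      · -- then ⟪a i, f j⟫ = 0 since ⟪e s, f j⟫ = 0 for all s ∈ S
        have : (inner 𝕜 (a i) (f j) : 𝕜) = 0 := by
          refine aux_inner_span_zero (ha i) _ ?_
          rintro y ⟨s, hs, rfl⟩
          refine hortho s j (fun h => hk ?_)
          have : s = k := Fin.ext (h.trans hjk)
          exact this ▸ hs
        rw [this, mul_zero]
      · -- then ⟪f j, P(e k)⟫ = ⟪f j, e k⟫ = 0
        have hfjW : f j ∈ W := hWf ▸ Submodule.subset_span ⟨j, rfl⟩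
        have : (inner 𝕜 (f j) ((Submodule.orthogonalProjectionOnto W (e k) : X)) : 𝕜) = 0 := by
          rw [hprojW (f j) hfjW (e k), ← inner_conj_symm,
            hortho k j (fun h => hjk h.symm), map_zero]
        rw [this, zero_mul]
    refine aux_det_zero (S ∩ T) hK
      (fun i k => (inner 𝕜 (a i) ((Submodule.orthogonalProjectionOnto W (e k) : X)) : 𝕜))
      (fun k j => (inner 𝕜 (e k) (b j) : 𝕜)) _ ?_
    intro i j
    show (inner 𝕜 ((Submodule.orthogonalProjectionOnto W (a i) : X)) ((Submodule.orthogonalProjectionOnto W (b j) : X)) : 𝕜) = _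
    have step1 : (inner 𝕜 ((Submodule.orthogonalProjectionOnto W (a i) : X))
        ((Submodule.orthogonalProjectionOnto W (b j) : X)) : 𝕜)
        = inner 𝕜 (a i) ((Submodule.orthogonalProjectionOnto W (b j) : X)) := by
      have h0 : a i - (Submodule.orthogonalProjectionOnto W (a i) : X) ∈ Wᗮ :=
        Submodule.sub_starProjection_mem_orthogonal (K := W) (a i)
      have h1 : (inner 𝕜 (a i - (Submodule.orthogonalProjectionOnto W (a i) : X))
          ((Submodule.orthogonalProjectionOnto W (b j) : X)) : 𝕜) = 0 := by
        rw [← inner_conj_symm, h0 _ (Submodule.orthogonalProjectionOnto W (b j)).2, map_zero]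
      rw [inner_sub_left, sub_eq_zero] at h1
      exact h1.symm
    rw [step1, aux_expandP W he T (hb j) (a i),
      ← Finset.sum_subset Finset.inter_subset_right]
    · exact Finset.sum_congr rfl fun k _ => mul_comm _ _
    · intro k hkT hk
      rw [haPk i k (fun h => hk (Finset.mem_inter.2 ⟨h, hkT⟩)), mul_zero]
end

section
/- Let e : Fin p → X and f : Fin q → X be associated principal bases of nonzero subspaces V and W, let P be the orthogonal projection onto W, and let S, T ⊆ Fin p be distinct subsets with |S| = |T| = r. Set V₁ = span{e i : i ∈ S} and V₂ = span{e i : i ∈ T}. Then: (i) V₁ is partially orthogonal to V₂, i.e., there is a nonzero x ∈ V₁ with ⟪x, y⟫ = 0 for all y ∈ V₂; and (ii) if V₁ is not partially orthogonal to W, then P(V₁) is partially orthogonal to P(V₂). -/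
variable {𝕜 X : Type*} [RCLike 𝕜] [NormedAddCommGroup X] [InnerProductSpace 𝕜 X]
  [FiniteDimensional 𝕜 X]

omit [FiniteDimensional 𝕜 X] in
lemma inner_span_right_eq_zero {s : Set X} {x : X} (h : ∀ g ∈ s, (inner 𝕜 x g : 𝕜) = 0)
    {b : X} (hb : b ∈ Submodule.span 𝕜 s) : (inner 𝕜 x b : 𝕜) = 0 := by
  induction hb using Submodule.span_induction with
  | mem g hg => exact h g hg
  | zero => simp
  | add y z _ _ hy hz => rw [inner_add_right, hy, hz, add_zero]
  | smul c y _ hy => rw [inner_smul_right, hy, mul_zero]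

/-- `A` is *partially orthogonal* to `B`: some nonzero `a ∈ A` is orthogonal to all of `B`. -/
def PartiallyOrthogonal {𝕜 X : Type*} [RCLike 𝕜] [NormedAddCommGroup X]
    [InnerProductSpace 𝕜 X] (A B : Submodule 𝕜 X) : Prop :=
  ∃ a ∈ A, a ≠ 0 ∧ ∀ b ∈ B, (inner 𝕜 a b : 𝕜) = 0

/-- Let `e, f` be associated principal bases of nonzero subspaces `V, W`, `P`
the orthogonal projection onto `W`, and `S ≠ T` subsets of `Fin p` with `|S| = |T| = r`, spanning
coprincipal subspaces `V₁ = span {e i : i ∈ S}`, `V₂ = span {e i : i ∈ T}`.  Then (i) `V₁` is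
partially orthogonal to `V₂`, and (ii) if `V₁` is not partially orthogonal to `W`, then `P(V₁)`
is partially orthogonal to `P(V₂)`. -/
theorem coprincipal_partially_orthogonal {p q r : ℕ} (V W : Submodule 𝕜 X)
    (hV : V ≠ ⊥) (hW : W ≠ ⊥)
    (e : Fin p → X) (f : Fin q → X) (hef : IsPrincipalPair V W e f)
    (S T : Finset (Fin p)) (hST : S ≠ T) (hS : S.card = r) (hT : T.card = r) :
    PartiallyOrthogonal (Submodule.span 𝕜 (e '' ↑S)) (Submodule.span 𝕜 (e '' ↑T)) ∧
    (¬ PartiallyOrthogonal (Submodule.span 𝕜 (e '' ↑S)) W →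
      PartiallyOrthogonal
        (Submodule.map (W.subtype ∘ₗ (W.orthogonalProjectionOnto).toLinearMap)
          (Submodule.span 𝕜 (e '' ↑S)))
        (Submodule.map (W.subtype ∘ₗ (W.orthogonalProjectionOnto).toLinearMap)
          (Submodule.span 𝕜 (e '' ↑T)))) := by
  obtain ⟨he, heV, hf, hfW, hzero, hpos⟩ := hef
  have hnsub : ¬ S ⊆ T := fun hsub =>
    hST (Finset.eq_of_subset_of_card_le hsub (by omega))
  obtain ⟨i, hiS, hiT⟩ := Finset.not_subset.mp hnsub
  have heiS : e i ∈ Submodule.span 𝕜 (e '' ↑S) :=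
    Submodule.subset_span ⟨i, hiS, rfl⟩
  constructor
  · refine ⟨e i, heiS, he.ne_zero i, ?_⟩
    intro b hb
    refine inner_span_right_eq_zero ?_ hb
    rintro g ⟨j, hjT, rfl⟩
    have hij : i ≠ j := fun h => hiT (h ▸ hjT)
    simpa [hij] using orthonormal_iff_ite.mp he i j
  · intro h
    have hei_notperp : ¬ ∀ b ∈ W, (inner 𝕜 (e i) b : 𝕜) = 0 := fun hb =>
      h ⟨e i, heiS, he.ne_zero i, hb⟩
    have hiq : (i : ℕ) < q := by
      by_contra hq
      apply hei_notperp
      intro b hb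
      refine inner_span_right_eq_zero ?_ (show b ∈ Submodule.span 𝕜 (Set.range f) from hfW ▸ hb)
      rintro g ⟨j, rfl⟩
      exact hzero i j (by omega)
    set i' : Fin q := ⟨i, hiq⟩ with hi'
    obtain ⟨c, hc0, hc⟩ := hpos i i' rfl
    have hfiW : f i' ∈ W := hfW ▸ Submodule.subset_span ⟨i', rfl⟩
    have hproj : (↑(W.orthogonalProjectionOnto (e i)) : X) = (c : 𝕜) • f i' := by
      apply Submodule.eq_starProjection_of_mem_of_inner_eq_zero
      · exact Submodule.smul_mem _ _ hfiW
      · intro w hw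
        refine inner_span_right_eq_zero ?_ (show w ∈ Submodule.span 𝕜 (Set.range f) from hfW ▸ hw)
        rintro g ⟨j, rfl⟩
        rw [inner_sub_left, inner_smul_left]
        by_cases hij : (i : ℕ) = (j : ℕ)
        · have hji : i' = j := Fin.ext hij
          subst hji
          have h1 : (inner 𝕜 (f i') (f i') : 𝕜) = 1 := by
            simpa using orthonormal_iff_ite.mp hf i' i'
          rw [hc, h1, mul_one, RCLike.conj_ofReal, sub_self]
        · have hij' : i' ≠ j := fun hh => hij (by simpa [hi'] using congrArg Fin.val hh)
          have h0 : (inner 𝕜 (f i') (f j) : 𝕜) = 0 := by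
            simpa [hij'] using orthonormal_iff_ite.mp hf i' j
          rw [hzero i j hij, h0, mul_zero, sub_self]
    have hcne : (c : 𝕜) ≠ 0 := by
      intro h0
      apply hei_notperp
      intro b hb
      have hmem : e i ∈ Wᗮ := by
        have h2 := Submodule.sub_starProjection_mem_orthogonal (K := W) (e i)
        rwa [Submodule.starProjection_apply, hproj, h0, zero_smul, sub_zero] at h2
      exact (Submodule.mem_orthogonal' W (e i)).mp hmem b hb
    refine ⟨(c : 𝕜) • f i', ⟨e i, heiS, hproj⟩,
      smul_ne_zero hcne (hf.ne_zero i'), ?_⟩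
    rintro b ⟨v, hv, rfl⟩
    have hPv : ((W.subtype ∘ₗ (W.orthogonalProjectionOnto).toLinearMap) v : X)
        = ↑(W.orthogonalProjectionOnto v) := rfl
    rw [hPv, inner_smul_left]
    have hsub : (inner 𝕜 (f i') (v - ↑(W.orthogonalProjectionOnto v)) : 𝕜) = 0 :=
      (Submodule.mem_orthogonal W _).mp (Submodule.sub_starProjection_mem_orthogonal v) (f i') hfiW
    have hfv : (inner 𝕜 (f i') v : 𝕜) = 0 := by
      refine inner_span_right_eq_zero ?_ hv
      rintro g ⟨j, hjT, rfl⟩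
      have hji : (j : ℕ) ≠ (i' : ℕ) := fun hh => hiT ((Fin.ext hh : j = i) ▸ hjT)
      rw [← inner_conj_symm, hzero j i' hji, map_zero]
    have : (inner 𝕜 (f i') (↑(W.orthogonalProjectionOnto v) : X) : 𝕜) = 0 := by
      rw [inner_sub_right, hfv] at hsub
      linear_combination -hsub
    rw [this, mul_zero]
end

section
/- Let V and W be nonzero subspaces of X with P the orthogonal projection onto W, and let e : Fin p → X be an orthonormal basis of V whose projections are pairwise orthogonal, i.e., ⟪P(e i), P(e j)⟫ = 0 for i ≠ j (equivalently, e is a principal basis of V with respect to W). Let u : Fin r → X be an orthonormal family spanning a subspace U ⊆ V. Then det( (⟪P(u i), P(u j)⟫)_{i,j} ) = ∑_{S ⊆ Fin p, |S| = r} |det( (⟪e k, u j⟫)_{k ∈ S, j ∈ Fin r} )|² · ∏_{k ∈ S} ‖P(e k)‖², where rows are indexed by the increasing enumeration of each subset S. Equivalently, cos²Θ_{U,W} = ∑_S cos²Θ_{U,V_S} · cos²Θ_{V_S,W} over the coordinate r-subspaces V_S = span{e k : k ∈ S} of the principal basis. -/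
variable {𝕜 X : Type*} [RCLike 𝕜] [NormedAddCommGroup X] [InnerProductSpace 𝕜 X]
  [FiniteDimensional 𝕜 X]

omit [FiniteDimensional 𝕜 X] in
theorem aux_repr {n : ℕ} (e : Fin n → X) (he : Orthonormal 𝕜 e) {x : X}
    (hx : x ∈ Submodule.span 𝕜 (Set.range e)) :
    x = ∑ k, (inner 𝕜 (e k) x : 𝕜) • e k := by
  obtain ⟨c, hc⟩ := (Submodule.mem_span_range_iff_exists_fun 𝕜).mp hx
  have hck : ∀ k, (inner 𝕜 (e k) x : 𝕜) = c k := by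
    intro k
    rw [← hc, inner_sum]
    simp only [inner_smul_right]
    rw [Finset.sum_eq_single k]
    · rw [orthonormal_iff_ite.mp he k k]; simp
    · intro l _ hlk
      rw [orthonormal_iff_ite.mp he k l]; simp [(Ne.symm hlk)]
    · simp
  simp_rw [hck]
  exact hc.symm

theorem aux_entry {p r : ℕ} (W : Submodule 𝕜 X) (e : Fin p → X)
    (hproj : ∀ i j : Fin p, i ≠ j →
      (inner 𝕜 ((W.orthogonalProjectionOnto (e i) : X)) ((W.orthogonalProjectionOnto (e j) : X)) : 𝕜) = 0)
    (u : Fin r → X) (hu : ∀ j, u j = ∑ k, (inner 𝕜 (e k) (u j) : 𝕜) • e k) (i j : Fin r) :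
    (inner 𝕜 ((W.orthogonalProjectionOnto (u i) : X)) ((W.orthogonalProjectionOnto (u j) : X)) : 𝕜) =
      ∑ k, ((‖(W.orthogonalProjectionOnto (e k) : X)‖ ^ 2 : ℝ) : 𝕜) *
        (starRingEnd 𝕜) ((inner 𝕜 (e k) (u i) : 𝕜)) * (inner 𝕜 (e k) (u j) : 𝕜) := by
  have hPu : ∀ j, (W.orthogonalProjectionOnto (u j) : X) =
      ∑ k, (inner 𝕜 (e k) (u j) : 𝕜) • (W.orthogonalProjectionOnto (e k) : X) := by
    intro j
    conv_lhs => rw [hu j]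
    rw [map_sum, Submodule.coe_sum]
    refine Finset.sum_congr rfl fun k _ => ?_
    rw [_root_.map_smul]
    rfl
  rw [hPu i, hPu j, sum_inner]
  refine Finset.sum_congr rfl fun k _ => ?_
  rw [inner_smul_left, inner_sum]
  simp_rw [inner_smul_right]
  rw [Finset.sum_eq_single k]
  · rw [inner_self_eq_norm_sq_to_K]
    push_cast
    ring
  · intro l _ hlk
    rw [hproj k l (Ne.symm hlk)]
    ring
  · simp

omit [NormedAddCommGroup X] in
theorem aux_image_orderIsoOfFin {p r : ℕ} (S : Finset (Fin p)) (hS : S.card = r) :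
    Finset.image (fun k => (S.orderIsoOfFin hS k : Fin p)) Finset.univ = S := by
  ext x
  simp only [Finset.mem_image, Finset.mem_univ, true_and]
  constructor
  · rintro ⟨i, rfl⟩; exact (S.orderIsoOfFin hS i).2
  · intro hx; exact ⟨(S.orderIsoOfFin hS).symm ⟨x, hx⟩, by simp⟩

theorem aux_conj_det {r : ℕ} (B : Matrix (Fin r) (Fin r) 𝕜) :
    ∑ σ : Equiv.Perm (Fin r), ((Equiv.Perm.sign σ : ℤ) : 𝕜) *
      ∏ i, (starRingEnd 𝕜) (B (σ i) i) = (starRingEnd 𝕜) B.det := by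
  rw [Matrix.det_apply, map_sum]
  refine Finset.sum_congr rfl fun σ _ => ?_
  rw [Units.smul_def, zsmul_eq_mul, _root_.map_mul, map_prod, map_intCast]

theorem det_sum_rows {p r : ℕ} (A : Matrix (Fin p) (Fin r) 𝕜) (c : Fin r → Fin p → 𝕜) :
    (Matrix.of fun i j : Fin r => ∑ k, c i k * A k j).det =
      ∑ f : Fin r → Fin p, (∏ i, c i (f i)) * (A.submatrix f id).det := by
  have hms := (Matrix.detRowAlternating (R := 𝕜) (n := Fin r)).toMultilinearMap.map_sum
    (α := fun _ => Fin p) (g := fun i k => c i k • A k)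
  have h2 : (Matrix.of fun i j : Fin r => ∑ k, c i k * A k j).det =
      (Matrix.detRowAlternating (R := 𝕜) (n := Fin r)).toMultilinearMap
        fun i => ∑ k, c i k • A k := by
    congr 1
    funext i j
    simp [Finset.sum_apply]
  rw [h2, hms]
  refine Finset.sum_congr rfl fun f _ => ?_
  have h3 := (Matrix.detRowAlternating (R := 𝕜) (n := Fin r)).toMultilinearMap.map_smul_univ
    (fun i => c i (f i)) (fun i => A (f i))
  rw [h3, smul_eq_mul]
  rfl

theorem cauchyBinet_diag {p r : ℕ} (A : Matrix (Fin p) (Fin r) 𝕜) (d : Fin p → 𝕜) :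
    (Matrix.of fun i j : Fin r =>
        ∑ k, d k * (starRingEnd 𝕜) (A k i) * A k j).det =
      ∑ S ∈ (Finset.powersetCard r (Finset.univ : Finset (Fin p))).attach,
        (starRingEnd 𝕜) (A.submatrix
            (fun k => (S.1.orderIsoOfFin (Finset.mem_powersetCard_univ.mp S.2) k : Fin p))
            id).det *
          (A.submatrix
            (fun k => (S.1.orderIsoOfFin (Finset.mem_powersetCard_univ.mp S.2) k : Fin p))
            id).det *
          ∏ k ∈ S.1, d k := by
  classical
  rw [det_sum_rows A (fun i k => d k * (starRingEnd 𝕜) (A k i))]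
  rw [← Finset.sum_filter_of_ne (p := fun f => Function.Injective f)
    (by
      intro f _ hne
      by_contra hf
      apply hne
      rw [Function.not_injective_iff] at hf
      obtain ⟨i, j, hij, hne'⟩ := hf
      have : (A.submatrix f id).det = 0 :=
        Matrix.det_zero_of_row_eq hne' (by funext l; simp [Matrix.submatrix, hij])
      simp [this])]
  have key : ∀ S : {S // S ∈ Finset.powersetCard r (Finset.univ : Finset (Fin p))},
      (starRingEnd 𝕜) (A.submatrix
          (fun k => (S.1.orderIsoOfFin (Finset.mem_powersetCard_univ.mp S.2) k : Fin p))
          id).det *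
        (A.submatrix
          (fun k => (S.1.orderIsoOfFin (Finset.mem_powersetCard_univ.mp S.2) k : Fin p))
          id).det *
        ∏ k ∈ S.1, d k =
      ∑ σ : Equiv.Perm (Fin r),
        (∏ i, d ((S.1.orderIsoOfFin (Finset.mem_powersetCard_univ.mp S.2) (σ i) : Fin p)) *
          (starRingEnd 𝕜)
            (A ((S.1.orderIsoOfFin (Finset.mem_powersetCard_univ.mp S.2) (σ i) : Fin p)) i)) *
        (A.submatrix
          (fun i => (S.1.orderIsoOfFin (Finset.mem_powersetCard_univ.mp S.2) (σ i) : Fin p))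
          id).det := by
    intro S
    set hS := Finset.mem_powersetCard_univ.mp S.2 with hhS
    set en : Fin r → Fin p := fun k => (S.1.orderIsoOfFin hS k : Fin p) with hen
    set B : Matrix (Fin r) (Fin r) 𝕜 := A.submatrix en id with hB
    have hperm : ∀ σ : Equiv.Perm (Fin r),
        (A.submatrix (fun i => en (σ i)) id) = B.submatrix σ id := by
      intro σ; funext i j; rfl
    have hd : ∀ σ : Equiv.Perm (Fin r),
        (∏ i, d (en (σ i)) * (starRingEnd 𝕜) (A (en (σ i)) i)) =
        (∏ k ∈ S.1, d k) * ∏ i, (starRingEnd 𝕜) (B (σ i) i) := by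
      intro σ
      have h1 : ∏ i, d (en (σ i)) = ∏ k ∈ S.1, d k := by
        rw [Equiv.prod_comp σ (fun i => d (en i))]
        have h2 : ∏ i : Fin r, d (en i) = ∏ x : {x // x ∈ S.1}, d ↑x :=
          Equiv.prod_comp (S.1.orderIsoOfFin hS).toEquiv (fun x : {x // x ∈ S.1} => d ↑x)
        rw [h2, Finset.prod_coe_sort S.1 (fun k => d k)]
      rw [Finset.prod_mul_distrib, h1]
      rfl
    calc (starRingEnd 𝕜) B.det * B.det * ∏ k ∈ S.1, d k
        = (∑ σ : Equiv.Perm (Fin r), ((Equiv.Perm.sign σ : ℤ) : 𝕜) *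
            ∏ i, (starRingEnd 𝕜) (B (σ i) i)) * B.det * ∏ k ∈ S.1, d k := by
          rw [aux_conj_det]
      _ = ∑ σ : Equiv.Perm (Fin r),
            ((∏ k ∈ S.1, d k) * ∏ i, (starRingEnd 𝕜) (B (σ i) i)) *
              (((Equiv.Perm.sign σ : ℤ) : 𝕜) * B.det) := by
          rw [Finset.sum_mul, Finset.sum_mul]
          refine Finset.sum_congr rfl fun σ _ => ?_
          ring
      _ = _ := by
          refine Finset.sum_congr rfl fun σ _ => ?_
          rw [hd σ, hperm σ, Matrix.det_permute]
  rw [Finset.sum_congr rfl (fun S _ => key S)]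
  rw [← Finset.sum_product']
  refine (Finset.sum_bij
    (i := fun (x : {S // S ∈ Finset.powersetCard r (Finset.univ : Finset (Fin p))} ×
        Equiv.Perm (Fin r)) _ =>
      fun i => (x.1.1.orderIsoOfFin (Finset.mem_powersetCard_univ.mp x.1.2) (x.2 i) : Fin p))
    ?_ ?_ ?_ ?_).symm
  · intro x _
    simp only [Finset.mem_filter, Finset.mem_univ, true_and]
    intro i j hij
    have := (x.1.1.orderIsoOfFin (Finset.mem_powersetCard_univ.mp x.1.2)).injective
      (Subtype.ext hij)
    exact x.2.injective this
  · rintro ⟨S, σ⟩ _ ⟨S', σ'⟩ _ hf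
    have himS : Finset.image
        (fun i => (S.1.orderIsoOfFin (Finset.mem_powersetCard_univ.mp S.2) (σ i) : Fin p))
        Finset.univ = S.1 := by
      rw [show (fun i => (S.1.orderIsoOfFin (Finset.mem_powersetCard_univ.mp S.2) (σ i) : Fin p))
          = (fun k => (S.1.orderIsoOfFin (Finset.mem_powersetCard_univ.mp S.2) k : Fin p)) ∘ σ
          from rfl, ← Finset.image_image, Finset.image_univ_equiv]
      exact aux_image_orderIsoOfFin S.1 _
    have himS' : Finset.image
        (fun i => (S'.1.orderIsoOfFin (Finset.mem_powersetCard_univ.mp S'.2) (σ' i) : Fin p))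
        Finset.univ = S'.1 := by
      rw [show (fun i => (S'.1.orderIsoOfFin (Finset.mem_powersetCard_univ.mp S'.2) (σ' i) : Fin p))
          = (fun k => (S'.1.orderIsoOfFin (Finset.mem_powersetCard_univ.mp S'.2) k : Fin p)) ∘ σ'
          from rfl, ← Finset.image_image, Finset.image_univ_equiv]
      exact aux_image_orderIsoOfFin S'.1 _
    have hf2 : (fun i => (S.1.orderIsoOfFin (Finset.mem_powersetCard_univ.mp S.2) (σ i) : Fin p))
        = fun i => (S'.1.orderIsoOfFin (Finset.mem_powersetCard_univ.mp S'.2) (σ' i) : Fin p) := hf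
    have hSS : S = S' := by
      apply Subtype.ext
      rw [← himS, ← himS', hf2]
    subst hSS
    refine Prod.ext rfl ?_
    refine Equiv.ext fun i => ?_
    exact (S.1.orderIsoOfFin (Finset.mem_powersetCard_univ.mp S.2)).injective
      (Subtype.ext (congrFun hf2 i))
  · intro f hfmem
    rw [Finset.mem_filter] at hfmem
    have hf : Function.Injective f := hfmem.2
    have hcard : (Finset.image f Finset.univ).card = r := by
      rw [Finset.card_image_of_injective _ hf, Finset.card_univ, Fintype.card_fin]
    have hmem : Finset.image f Finset.univ ∈
        Finset.powersetCard r (Finset.univ : Finset (Fin p)) :=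
      Finset.mem_powersetCard_univ.mpr hcard
    set S : {S // S ∈ Finset.powersetCard r (Finset.univ : Finset (Fin p))} := ⟨_, hmem⟩
    have hS : S.1.card = r := Finset.mem_powersetCard_univ.mp S.2
    set en := S.1.orderIsoOfFin hS with hen
    have hg : Function.Injective
        fun i => en.symm ⟨f i, Finset.mem_image_of_mem f (Finset.mem_univ i)⟩ := by
      intro i j hij
      apply hf
      have := congrArg (fun x => (en x : Fin p)) hij
      simpa using this
    set σ : Equiv.Perm (Fin r) :=
      Equiv.ofBijective _ (Finite.injective_iff_bijective.mp hg)
    refine ⟨(S, σ), Finset.mem_product.mpr ⟨Finset.mem_univ _, Finset.mem_univ _⟩, ?_⟩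
    funext i
    show (en (σ i) : Fin p) = f i
    have : σ i = en.symm ⟨f i, Finset.mem_image_of_mem f (Finset.mem_univ i)⟩ := rfl
    rw [this, OrderIso.apply_symm_apply]
  · intro x _
    rfl

/-- Let `V, W` be nonzero subspaces, `P` the orthogonal projection onto `W`,
and `e : Fin p → X` an orthonormal basis of `V` whose projections onto `W` are pairwise
orthogonal (i.e. a principal basis of `V` w.r.t. `W`).  For an orthonormal family
`u : Fin r → X` spanning `U ⊆ V`:
`det (⟪P (u i), P (u j)⟫) = ∑_{S ⊆ Fin p, |S| = r} |det (⟪e k, u j⟫)_{k ∈ S, j}|² * ∏_{k ∈ S} ‖P (e k)‖²`,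
i.e. `cos² Θ_{U,W} = ∑_S cos² Θ_{U,V_S} * cos² Θ_{V_S,W}` over the coordinate `r`-subspaces
`V_S` of the principal basis. -/
theorem sq_cos_grassmann_principal_coordinate_expansion {p r : ℕ} (V W : Submodule 𝕜 X)
    (hV : V ≠ ⊥) (hW : W ≠ ⊥)
    (e : Fin p → X) (he : Orthonormal 𝕜 e) (heV : Submodule.span 𝕜 (Set.range e) = V)
    (hproj : ∀ i j : Fin p, i ≠ j →
      (inner 𝕜 ((W.orthogonalProjectionOnto (e i) : X)) ((W.orthogonalProjectionOnto (e j) : X)) : 𝕜) = 0)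
    (U : Submodule 𝕜 X) (hUV : U ≤ V)
    (u : Fin r → X) (hu : Orthonormal 𝕜 u) (huU : Submodule.span 𝕜 (Set.range u) = U) :
    (Matrix.of fun i j : Fin r =>
        (inner 𝕜 ((W.orthogonalProjectionOnto (u i) : X)) ((W.orthogonalProjectionOnto (u j) : X)) : 𝕜)).det =
      ((∑ S ∈ (Finset.powersetCard r (Finset.univ : Finset (Fin p))).attach,
          ‖(Matrix.of fun k j : Fin r =>
              (inner 𝕜 (e ((S.1.orderIsoOfFin (Finset.mem_powersetCard_univ.mp S.2) k : Fin p)))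
                (u j) : 𝕜)).det‖ ^ 2 *
            ∏ k ∈ S.1, ‖(W.orthogonalProjectionOnto (e k) : X)‖ ^ 2 : ℝ) : 𝕜) := by
  classical
  have hurep : ∀ j, u j = ∑ k, (inner 𝕜 (e k) (u j) : 𝕜) • e k := by
    intro j
    refine aux_repr e he ?_
    rw [heV]
    exact hUV (huU ▸ Submodule.subset_span ⟨j, rfl⟩)
  set A : Matrix (Fin p) (Fin r) 𝕜 := Matrix.of fun k j => (inner 𝕜 (e k) (u j) : 𝕜) with hA
  set d : Fin p → 𝕜 := fun k => ((‖(W.orthogonalProjectionOnto (e k) : X)‖ ^ 2 : ℝ) : 𝕜) with hd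
  have h1 : (Matrix.of fun i j : Fin r =>
      (inner 𝕜 ((W.orthogonalProjectionOnto (u i) : X))
        ((W.orthogonalProjectionOnto (u j) : X)) : 𝕜)) =
      Matrix.of fun i j : Fin r => ∑ k, d k * (starRingEnd 𝕜) (A k i) * A k j := by
    funext i j
    exact aux_entry W e hproj u hurep i j
  rw [h1, cauchyBinet_diag A d]
  rw [RCLike.ofReal_sum]
  refine Finset.sum_congr rfl fun S _ => ?_
  have hB : (A.submatrix
      (fun k => (S.1.orderIsoOfFin (Finset.mem_powersetCard_univ.mp S.2) k : Fin p)) id) =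
      (Matrix.of fun k j : Fin r =>
        (inner 𝕜 (e ((S.1.orderIsoOfFin (Finset.mem_powersetCard_univ.mp S.2) k : Fin p)))
          (u j) : 𝕜)) := rfl
  rw [hB, RCLike.ofReal_mul, RCLike.ofReal_prod]
  rw [RCLike.conj_mul]
  push_cast
  congr 1
  refine Finset.prod_congr rfl fun k _ => ?_
  simp only [hd]
  push_cast
  ring
end

section
/- Let W be a nonzero subspace of X with P the orthogonal projection onto W, and let V₁ and V₂ be nonzero orthogonal subspaces with V = V₁ ⊕ V₂. Then the partition V = V₁ ⊕ V₂ is principal with respect to W — i.e., there exist associated principal bases e : Fin p → X of V and f of W and a subset S ⊆ Fin p with V₁ = span{e i : i ∈ S} and V₂ = span{e i : i ∉ S} — if and only if P(V₁) ⊥ P(V₂). -/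
open Submodule

variable {𝕜 X : Type*} [RCLike 𝕜] [NormedAddCommGroup X] [InnerProductSpace 𝕜 X]
  [FiniteDimensional 𝕜 X]

-- helper 1: x orthogonal to all f k implies orthogonal to span
private lemma inner_span_zero {ι : Type*} (f : ι → X) (x : X)
    (h : ∀ k, (inner 𝕜 x (f k) : 𝕜) = 0) :
    ∀ w ∈ Submodule.span 𝕜 (Set.range f), (inner 𝕜 x w : 𝕜) = 0 := by
  intro w hw
  induction hw using Submodule.span_induction with
  | mem w hw => obtain ⟨k, rfl⟩ := hw; exact h k
  | zero => simp
  | add a b _ _ ha hb => rw [inner_add_right, ha, hb, add_zero]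
  | smul c a _ ha => rw [inner_smul_right, ha, mul_zero]

-- helper: inner 𝕜 with element of W equals inner 𝕜 of projection
private lemma inner_proj_left (W : Submodule 𝕜 X) (x : X) (w : W) :
    (inner 𝕜 x (w : X) : 𝕜)
      = inner 𝕜 ((W.subtype ∘ₗ (orthogonalProjectionOnto W).toLinearMap) x) (w : X) := by
  have := inner_orthogonalProjection_eq_of_mem_right (K := W) w x
  rw [Submodule.coe_inner] at this
  simp only [LinearMap.coe_comp, Function.comp_apply, ContinuousLinearMap.coe_coe,
    Submodule.coe_subtype]
  rw [this]

-- helper: span of coerced orthonormal basis of a submodule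
private lemma span_coe_onb {U : Submodule 𝕜 X} {ι : Type*} [Fintype ι]
    (b : OrthonormalBasis ι 𝕜 U) :
    Submodule.span 𝕜 (Set.range (fun i => (b i : X))) = U := by
  have : Set.range (fun i => (b i : X)) = U.subtype '' (Set.range b) := by
    rw [← Set.range_comp]; rfl
  rw [this, Submodule.span_image, ← b.coe_toBasis, b.toBasis.span_eq, Submodule.map_subtype_top]

set_option linter.unusedSectionVars false

private lemma forward_aux {p q : ℕ} {V W : Submodule 𝕜 X} {e : Fin p → X} {f : Fin q → X}
    (hpp : IsPrincipalPair V W e f) {i j : Fin p} (hij : i ≠ j) :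
    (inner 𝕜 ((W.subtype ∘ₗ (orthogonalProjectionOnto W).toLinearMap) (e i))
      ((W.subtype ∘ₗ (orthogonalProjectionOnto W).toLinearMap) (e j)) : 𝕜) = 0 := by
  obtain ⟨he, hspV, hf, hspW, h0, hpos⟩ := hpp
  set P : X →ₗ[𝕜] X := W.subtype ∘ₗ (orthogonalProjectionOnto W).toLinearMap with hP
  have hPmem : ∀ x, P x ∈ W := fun x => (orthogonalProjectionOnto W x).2
  -- ⟪P (e i), P (e j)⟫ = ⟪e i, P (e j)⟫
  have step1 : (inner 𝕜 (P (e i)) (P (e j)) : 𝕜) = inner 𝕜 (e i) (P (e j)) :=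
    (inner_proj_left W (e i) ⟨P (e j), hPmem _⟩).symm
  rw [step1]
  have hfmem : ∀ k, f k ∈ W := by
    intro k
    rw [← hspW]
    exact Submodule.subset_span ⟨k, rfl⟩
  have hfP : ∀ (k : Fin q) (x : X), (inner 𝕜 (f k) (P x) : 𝕜) = inner 𝕜 (f k) x := by
    intro k x
    rw [← inner_conj_symm, ← inner_proj_left W x ⟨f k, hfmem k⟩, inner_conj_symm]
  have hPjW : P (e j) ∈ Submodule.span 𝕜 (Set.range f) := by rw [hspW]; exact hPmem _
  by_cases hi : (i : ℕ) < q
  · set i' : Fin q := ⟨i, hi⟩ with hi'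
    set c : 𝕜 := inner 𝕜 (e i) (f i') with hc
    set x : X := e i - (starRingEnd 𝕜 c) • f i' with hx
    have hxf : ∀ k, (inner 𝕜 x (f k) : 𝕜) = 0 := by
      intro k
      rw [hx, inner_sub_left, inner_smul_left, starRingEnd_self_apply]
      by_cases hk : k = i'
      · rw [hk]
        have h1 : (inner 𝕜 (f i') (f i') : 𝕜) = 1 := by
          rw [inner_self_eq_norm_sq_to_K, hf.1 i']; norm_num
        rw [h1, mul_one, ← hc, sub_self]
      · have h2 : (inner 𝕜 (f i') (f k) : 𝕜) = 0 := hf.2 (Ne.symm hk)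
        have h3 : (inner 𝕜 (e i) (f k) : 𝕜) = 0 := by
          refine h0 i k ?_
          intro hk'
          exact hk (Fin.ext hk'.symm)
        rw [h2, h3, mul_zero, sub_zero]
    have hxw := inner_span_zero f x hxf (P (e j)) hPjW
    have expand : (inner 𝕜 (e i) (P (e j)) : 𝕜)
        = inner 𝕜 x (P (e j)) + c * inner 𝕜 (f i') (P (e j)) := by
      rw [hx, inner_sub_left, inner_smul_left, starRingEnd_self_apply]
      ring
    rw [expand, hxw, hfP, zero_add]
    have hji : (inner 𝕜 (f i') (e j) : 𝕜) = 0 := by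
      rw [← inner_conj_symm]
      have : (inner 𝕜 (e j) (f i') : 𝕜) = 0 := by
        refine h0 j i' ?_
        intro h
        exact hij (Fin.ext (by simpa [hi'] using h.symm))
      rw [this, map_zero]
    rw [hji, mul_zero]
  · have hall : ∀ k : Fin q, (inner 𝕜 (e i) (f k) : 𝕜) = 0 := fun k =>
      h0 i k (by omega)
    exact inner_span_zero f (e i) hall (P (e j)) hPjW

private lemma forward_full {p q : ℕ} {V W V₁ V₂ : Submodule 𝕜 X} {e : Fin p → X} {f : Fin q → X}
    {S : Set (Fin p)} (hpp : IsPrincipalPair V W e f)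
    (h1 : V₁ = Submodule.span 𝕜 (e '' S)) (h2 : V₂ = Submodule.span 𝕜 (e '' Sᶜ)) :
    ∀ x ∈ Submodule.map (W.subtype ∘ₗ (orthogonalProjectionOnto W).toLinearMap) V₁,
      ∀ y ∈ Submodule.map (W.subtype ∘ₗ (orthogonalProjectionOnto W).toLinearMap) V₂,
        (inner 𝕜 x y : 𝕜) = 0 := by
  set P : X →ₗ[𝕜] X := W.subtype ∘ₗ (orthogonalProjectionOnto W).toLinearMap with hP
  have key : ∀ a ∈ Submodule.span 𝕜 (e '' S), ∀ b ∈ Submodule.span 𝕜 (e '' Sᶜ),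
      (inner 𝕜 (P a) (P b) : 𝕜) = 0 := by
    intro a ha
    induction ha using Submodule.span_induction with
    | mem a haS =>
      obtain ⟨i, hiS, rfl⟩ := haS
      intro b hb
      induction hb using Submodule.span_induction with
      | mem b hbS =>
        obtain ⟨j, hjS, rfl⟩ := hbS
        exact forward_aux hpp (fun h => hjS (h ▸ hiS))
      | zero => rw [map_zero]; exact inner_zero_right _
      | add u v _ _ hu hv => rw [map_add, inner_add_right, hu, hv, add_zero]
      | smul c u _ hu => rw [map_smul, inner_smul_right, hu, mul_zero]
    | zero => intro b hb; rw [map_zero]; exact inner_zero_left _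
    | add u v _ _ hu hv =>
      intro b hb
      rw [map_add, inner_add_left, hu b hb, hv b hb, add_zero]
    | smul c u _ hu =>
      intro b hb
      rw [map_smul, inner_smul_left, hu b hb, mul_zero]
  intro x hx y hy
  obtain ⟨a, ha, rfl⟩ := hx
  obtain ⟨b, hb, rfl⟩ := hy
  exact key a (h1 ▸ ha) b (h2 ▸ hb)

private lemma proj_inner_right (W : Submodule 𝕜 X) (x y : X) (hx : x ∈ W) :
    (inner 𝕜 x ((W.subtype ∘ₗ (orthogonalProjectionOnto W).toLinearMap) y) : 𝕜) = inner 𝕜 x y := by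
  rw [← inner_conj_symm, ← inner_proj_left W y ⟨x, hx⟩, inner_conj_symm]

private lemma proj_op_inner (W U : Submodule 𝕜 X) (x y : U) :
    (inner 𝕜 (((orthogonalProjectionOnto U).toLinearMap ∘ₗ
        (W.subtype ∘ₗ (orthogonalProjectionOnto W).toLinearMap) ∘ₗ U.subtype) x) y : 𝕜)
      = inner 𝕜 ((W.subtype ∘ₗ (orthogonalProjectionOnto W).toLinearMap) (x : X))
          ((W.subtype ∘ₗ (orthogonalProjectionOnto W).toLinearMap) (y : X)) := by
  set P : X →ₗ[𝕜] X := W.subtype ∘ₗ (orthogonalProjectionOnto W).toLinearMap with hP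
  have h1 : (inner 𝕜 (((orthogonalProjectionOnto U).toLinearMap ∘ₗ P ∘ₗ U.subtype) x) y : 𝕜)
      = inner 𝕜 (P (x : X)) (y : X) := by
    have := inner_orthogonalProjection_eq_of_mem_right (K := U) y (P (x : X))
    rw [Submodule.coe_inner] at this
    simpa using this
  rw [h1, ← proj_inner_right W (P (x : X)) (y : X) ((orthogonalProjectionOnto W (x : X)).2)]

private lemma T_isSymmetric (W U : Submodule 𝕜 X) :
    (((orthogonalProjectionOnto U).toLinearMap ∘ₗ
      (W.subtype ∘ₗ (orthogonalProjectionOnto W).toLinearMap) ∘ₗ U.subtype)).IsSymmetric := by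
  intro x y
  rw [proj_op_inner W U x y, ← inner_conj_symm, ← proj_op_inner W U y x, inner_conj_symm]

open Module in
private lemma backward {W V₁ V₂ : Submodule 𝕜 X}
    (horth : ∀ x ∈ V₁, ∀ y ∈ V₂, (inner 𝕜 x y : 𝕜) = 0)
    (hPO : ∀ a ∈ V₁, ∀ b ∈ V₂,
      (inner 𝕜 ((W.subtype ∘ₗ (orthogonalProjectionOnto W).toLinearMap) a)
        ((W.subtype ∘ₗ (orthogonalProjectionOnto W).toLinearMap) b) : 𝕜) = 0) :
    ∃ (p q : ℕ) (e : Fin p → X) (f : Fin q → X) (S : Set (Fin p)),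
        IsPrincipalPair (V₁ ⊔ V₂) W e f ∧
        V₁ = Submodule.span 𝕜 (e '' S) ∧ V₂ = Submodule.span 𝕜 (e '' Sᶜ) := by
  classical
  set P : X →ₗ[𝕜] X := W.subtype ∘ₗ (orthogonalProjectionOnto W).toLinearMap with hPdef
  have hPmem : ∀ x, P x ∈ W := fun x => (orthogonalProjectionOnto W x).2
  set r₁ := finrank 𝕜 V₁ with hr₁
  set r₂ := finrank 𝕜 V₂ with hr₂
  set qd := finrank 𝕜 W with hq
  have hs₁ : ((orthogonalProjectionOnto V₁).toLinearMap ∘ₗ P ∘ₗ V₁.subtype).IsSymmetric :=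
    T_isSymmetric W V₁
  have hs₂ : ((orthogonalProjectionOnto V₂).toLinearMap ∘ₗ P ∘ₗ V₂.subtype).IsSymmetric :=
    T_isSymmetric W V₂
  let b₁ : OrthonormalBasis (Fin r₁) 𝕜 V₁ := hs₁.eigenvectorBasis rfl
  let b₂ : OrthonormalBasis (Fin r₂) 𝕜 V₂ := hs₂.eigenvectorBasis rfl
  set e₀ : Fin r₁ ⊕ Fin r₂ → X :=
    Sum.elim (fun i => (b₁ i : X)) (fun i => (b₂ i : X)) with he₀def
  -- pairwise orthogonality of the projections
  have hpoi₁ : ∀ x y : V₁, (inner 𝕜 (((orthogonalProjectionOnto V₁).toLinearMap ∘ₗ P ∘ₗ V₁.subtype) x) y : 𝕜)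
      = inner 𝕜 (P (x : X)) (P (y : X)) := by
    intro x y
    have := proj_op_inner W V₁ x y
    rw [← hPdef] at this
    exact this
  have hpoi₂ : ∀ x y : V₂, (inner 𝕜 (((orthogonalProjectionOnto V₂).toLinearMap ∘ₗ P ∘ₗ V₂.subtype) x) y : 𝕜)
      = inner 𝕜 (P (x : X)) (P (y : X)) := by
    intro x y
    have := proj_op_inner W V₂ x y
    rw [← hPdef] at this
    exact this
  have claimC : ∀ i j : Fin r₁ ⊕ Fin r₂, i ≠ j →
      (inner 𝕜 (P (e₀ i)) (P (e₀ j)) : 𝕜) = 0 := by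
    rintro (i|i) (j|j) hij
    · have hij' : i ≠ j := fun h => hij (by rw [h])
      simp only [he₀def, Sum.elim_inl]
      rw [← hpoi₁ (b₁ i) (b₁ j)]
      show (inner 𝕜 (((orthogonalProjectionOnto V₁).toLinearMap ∘ₗ P ∘ₗ V₁.subtype)
        (hs₁.eigenvectorBasis rfl i)) (hs₁.eigenvectorBasis rfl j) : 𝕜) = 0
      rw [hs₁.apply_eigenvectorBasis rfl i, inner_smul_left, RCLike.conj_ofReal,
        b₁.orthonormal.2 hij', mul_zero]
    · simp only [he₀def, Sum.elim_inl, Sum.elim_inr]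
      exact hPO _ (b₁ i).2 _ (b₂ j).2
    · simp only [he₀def, Sum.elim_inl, Sum.elim_inr]
      rw [← inner_conj_symm, hPO _ (b₁ j).2 _ (b₂ i).2, map_zero]
    · have hij' : i ≠ j := fun h => hij (by rw [h])
      simp only [he₀def, Sum.elim_inr]
      rw [← hpoi₂ (b₂ i) (b₂ j)]
      show (inner 𝕜 (((orthogonalProjectionOnto V₂).toLinearMap ∘ₗ P ∘ₗ V₂.subtype)
        (hs₂.eigenvectorBasis rfl i)) (hs₂.eigenvectorBasis rfl j) : 𝕜) = 0
      rw [hs₂.apply_eigenvectorBasis rfl i, inner_smul_left, RCLike.conj_ofReal,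
        b₂.orthonormal.2 hij', mul_zero]
  have he₀ : Orthonormal 𝕜 e₀ := by
    rw [orthonormal_iff_ite]
    rintro (i|i) (j|j)
    · simp only [he₀def, Sum.elim_inl]
      rw [← Submodule.coe_inner, orthonormal_iff_ite.mp b₁.orthonormal]
      by_cases h : i = j <;> simp [h]
    · simp only [he₀def, Sum.elim_inl, Sum.elim_inr]
      rw [horth _ (b₁ i).2 _ (b₂ j).2]
      simp
    · simp only [he₀def, Sum.elim_inl, Sum.elim_inr]
      have hz : (inner 𝕜 ((b₂ i : X)) ((b₁ j : X)) : 𝕜) = 0 := by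
        rw [← inner_conj_symm, horth _ (b₁ j).2 _ (b₂ i).2, map_zero]
      rw [hz]
      simp
    · simp only [he₀def, Sum.elim_inr]
      rw [← Submodule.coe_inner, orthonormal_iff_ite.mp b₂.orthonormal]
      by_cases h : i = j <;> simp [h]
  set G : Set (Fin r₁ ⊕ Fin r₂) := {i | P (e₀ i) ≠ 0} with hG
  set n := Fintype.card G with hn
  set m := Fintype.card ↥(Gᶜ) with hm
  have hnm : n + m = r₁ + r₂ := by
    rw [hn, hm, ← Fintype.card_sum]
    rw [Fintype.card_congr (Equiv.Set.sumCompl G)]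
    simp
  let eG : ↥G ≃ Fin n := Fintype.equivFin ↥G
  let eGc : ↥(Gᶜ) ≃ Fin m := Fintype.equivFin ↥(Gᶜ)
  let σ : Fin (r₁ + r₂) ≃ (Fin r₁ ⊕ Fin r₂) :=
    ((finCongr hnm.symm).trans finSumFinEquiv.symm).trans
      ((Equiv.sumCongr eG.symm eGc.symm).trans (Equiv.sumCompl (· ∈ G)))
  set e : Fin (r₁ + r₂) → X := e₀ ∘ σ with hedef
  have hσ₁ : ∀ (k : Fin (r₁ + r₂)), (k : ℕ) < n → σ k ∈ G := by
    intro k h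
    have h1 : finCongr hnm.symm k = Fin.castAdd m ⟨(k : ℕ), h⟩ := by
      apply Fin.ext; simp
    have h2 : σ k = ((eG.symm ⟨(k : ℕ), h⟩ : ↥G) : Fin r₁ ⊕ Fin r₂) := by
      simp only [σ, Equiv.trans_apply, h1, finSumFinEquiv_symm_apply_castAdd]
      rfl
    rw [h2]
    exact (eG.symm _).2
  have hσ₂ : ∀ (k : Fin (r₁ + r₂)), n ≤ (k : ℕ) → σ k ∉ G := by
    intro k h
    have hkm : (k : ℕ) - n < m := by have := k.isLt; omega
    have h1 : finCongr hnm.symm k = Fin.natAdd n ⟨(k : ℕ) - n, hkm⟩ := by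
      apply Fin.ext; simp [Fin.natAdd]; omega
    have h2 : σ k = ((eGc.symm ⟨(k : ℕ) - n, hkm⟩ : ↥(Gᶜ)) : Fin r₁ ⊕ Fin r₂) := by
      simp only [σ, Equiv.trans_apply, h1, finSumFinEquiv_symm_apply_natAdd]
      rfl
    rw [h2]
    exact (eGc.symm _).2
  -- n ≤ qd
  have hnq : n ≤ qd := by
    have hgon : Orthonormal 𝕜 (fun i : ↥G =>
        ((‖P (e₀ (i : Fin r₁ ⊕ Fin r₂))‖⁻¹ : ℝ) : 𝕜) •
          (⟨P (e₀ (i : Fin r₁ ⊕ Fin r₂)), hPmem _⟩ : W)) := by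
      rw [orthonormal_iff_ite]
      intro i j
      rw [inner_smul_left, inner_smul_right, Submodule.coe_inner]
      by_cases h : i = j
      · subst h
        have hne : ‖P (e₀ (i : Fin r₁ ⊕ Fin r₂))‖ ≠ 0 := norm_ne_zero_iff.mpr i.2
        rw [if_pos rfl, inner_self_eq_norm_sq_to_K, RCLike.conj_ofReal]
        rw [← RCLike.ofReal_pow, ← RCLike.ofReal_mul, ← RCLike.ofReal_mul,
          ← RCLike.ofReal_one]
        congr 1
        field_simp
      · rw [claimC _ _ (fun hc => h (Subtype.ext hc))]
        simp [h]
    exact hgon.linearIndependent.fintype_card_le_finrank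
  have hnp : n ≤ r₁ + r₂ := by omega
  -- the f family
  set v : Fin qd → W := fun k =>
    if h : (k : ℕ) < n then
      ((‖P (e ⟨(k : ℕ), lt_of_lt_of_le h hnp⟩)‖⁻¹ : ℝ) : 𝕜) •
        (⟨P (e ⟨(k : ℕ), lt_of_lt_of_le h hnp⟩), hPmem _⟩ : W)
    else 0 with hvdef
  set s : Set (Fin qd) := {k | (k : ℕ) < n} with hs
  have hσne : ∀ (k : Fin (r₁ + r₂)), (k : ℕ) < n → P (e k) ≠ 0 := by
    intro k hk
    exact hσ₁ k hk
  have hval : ∀ (k : Fin qd) (hk : (k : ℕ) < n),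
      v k = ((‖P (e ⟨(k : ℕ), lt_of_lt_of_le hk hnp⟩)‖⁻¹ : ℝ) : 𝕜) •
        (⟨P (e ⟨(k : ℕ), lt_of_lt_of_le hk hnp⟩), hPmem _⟩ : W) := by
    intro k hk
    simp only [hvdef]
    rw [dif_pos hk]
  have hvon : Orthonormal 𝕜 (s.restrict v) := by
    rw [orthonormal_iff_ite]
    rintro ⟨k, hk⟩ ⟨l, hl⟩
    have hk' : (k : ℕ) < n := hk
    have hl' : (l : ℕ) < n := hl
    show (inner 𝕜 (v k) (v l) : 𝕜) = _
    rw [hval k hk', hval l hl']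
    rw [inner_smul_left, inner_smul_right, Submodule.coe_inner]
    by_cases h : k = l
    · subst h
      have hne : ‖P (e ⟨(k : ℕ), lt_of_lt_of_le hk' hnp⟩)‖ ≠ 0 :=
        norm_ne_zero_iff.mpr (hσne _ hk')
      rw [if_pos rfl, inner_self_eq_norm_sq_to_K, RCLike.conj_ofReal]
      rw [← RCLike.ofReal_pow, ← RCLike.ofReal_mul, ← RCLike.ofReal_mul,
        ← RCLike.ofReal_one]
      congr 1
      field_simp
    · have hz : (inner 𝕜 (P (e ⟨(k : ℕ), lt_of_lt_of_le hk' hnp⟩))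
          (P (e ⟨(l : ℕ), lt_of_lt_of_le hl' hnp⟩)) : 𝕜) = 0 := by
        have hne' : σ ⟨(k : ℕ), lt_of_lt_of_le hk' hnp⟩
            ≠ σ ⟨(l : ℕ), lt_of_lt_of_le hl' hnp⟩ := by
          intro hc
          apply h
          have hv2 := congrArg Fin.val (σ.injective hc)
          exact Fin.ext hv2
        exact claimC _ _ hne'
      rw [hz]
      have h' : (⟨k, hk⟩ : s) ≠ ⟨l, hl⟩ := fun hc => h (Subtype.ext_iff.mp hc)
      simp [h']
  obtain ⟨bW, hbW⟩ := hvon.exists_orthonormalBasis_extension_of_card_eq (by simp [hq])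
  set f : Fin qd → X := fun k => (bW k : X) with hfdef
  -- the key expansion of P (e i) in terms of the basis of W
  have hP0 : ∀ (i : Fin (r₁ + r₂)), ¬ ((i : ℕ) < n) → P (e i) = 0 := by
    intro i h
    by_contra hne
    exact hσ₂ i (le_of_not_gt h) hne
  have hkey : ∀ (i : Fin (r₁ + r₂)) (h : (i : ℕ) < n),
      P (e i) = ((‖P (e i)‖ : ℝ) : 𝕜) • (bW ⟨(i : ℕ), lt_of_lt_of_le h hnq⟩ : X) := by
    intro i h
    have hne : ‖P (e i)‖ ≠ 0 := norm_ne_zero_iff.mpr (hσne i h)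
    have hidx : (⟨((⟨(i : ℕ), lt_of_lt_of_le h hnq⟩ : Fin qd) : ℕ),
        lt_of_lt_of_le h hnp⟩ : Fin (r₁ + r₂)) = i := Fin.ext rfl
    have h1 : bW ⟨(i : ℕ), lt_of_lt_of_le h hnq⟩ = v ⟨(i : ℕ), lt_of_lt_of_le h hnq⟩ :=
      hbW _ h
    have h2 := hval ⟨(i : ℕ), lt_of_lt_of_le h hnq⟩ h
    rw [hidx] at h2
    rw [h1, h2, Submodule.coe_smul]
    rw [smul_smul, ← RCLike.ofReal_mul, mul_inv_cancel₀ hne, RCLike.ofReal_one, one_smul]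
  have hstep : ∀ (i : Fin (r₁ + r₂)) (j : Fin qd),
      (inner 𝕜 (e i) ((bW j : X)) : 𝕜) = inner 𝕜 (P (e i)) ((bW j : X)) := by
    intro i j
    have := inner_proj_left W (e i) (bW j)
    rw [← hPdef] at this
    exact this
  refine ⟨r₁ + r₂, qd, e, f, σ ⁻¹' (Set.range Sum.inl), ⟨?_, ?_, ?_, ?_, ?_, ?_⟩, ?_, ?_⟩
  · exact he₀.comp σ σ.injective
  · -- span e = V₁ ⊔ V₂
    have h1 : Set.range e = Set.range e₀ := by
      rw [hedef]
      exact σ.surjective.range_comp e₀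
    rw [h1, he₀def, Set.Sum.elim_range, Submodule.span_union, span_coe_onb b₁, span_coe_onb b₂]
  · -- orthonormal f
    rw [orthonormal_iff_ite]
    intro k l
    simp only [hfdef]
    rw [← Submodule.coe_inner, orthonormal_iff_ite.mp bW.orthonormal]
  · -- span f = W
    exact span_coe_onb bW
  · -- off-diagonal
    intro i j hij
    simp only [hfdef]
    rw [hstep]
    by_cases h : (i : ℕ) < n
    · rw [hkey i h, inner_smul_left, RCLike.conj_ofReal]
      have hz : (inner 𝕜 ((bW ⟨(i : ℕ), lt_of_lt_of_le h hnq⟩ : X)) ((bW j : X)) : 𝕜) = 0 := by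
        rw [← Submodule.coe_inner]
        exact bW.orthonormal.2 (fun hc => hij (congrArg Fin.val hc))
      rw [hz, mul_zero]
    · rw [hP0 i h, inner_zero_left]
  · -- diagonal
    intro i j hij
    simp only [hfdef]
    by_cases h : (i : ℕ) < n
    · refine ⟨‖P (e i)‖, norm_nonneg _, ?_⟩
      rw [hstep]
      conv_lhs => rw [hkey i h, inner_smul_left, RCLike.conj_ofReal]
      have hij' : (⟨(i : ℕ), lt_of_lt_of_le h hnq⟩ : Fin qd) = j := Fin.ext hij
      have hone : (inner 𝕜 ((bW ⟨(i : ℕ), lt_of_lt_of_le h hnq⟩ : X)) ((bW j : X)) : 𝕜) = 1 := by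
        rw [hij', ← Submodule.coe_inner, inner_self_eq_norm_sq_to_K, bW.orthonormal.1 j]
        norm_num
      rw [hone, mul_one]
    · refine ⟨0, le_refl 0, ?_⟩
      rw [hstep, hP0 i h, inner_zero_left, RCLike.ofReal_zero]
  · -- V₁ span
    have himg : e '' (σ ⁻¹' (Set.range Sum.inl)) = Set.range (fun i => (b₁ i : X)) := by
      rw [hedef, Set.image_comp, Set.image_preimage_eq _ σ.surjective, ← Set.range_comp,
        he₀def]
      congr 1
    rw [himg, span_coe_onb b₁]
  · -- V₂ span
    have himg : e '' (σ ⁻¹' (Set.range Sum.inl))ᶜ = Set.range (fun i => (b₂ i : X)) := by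
      rw [← Set.preimage_compl, Set.compl_range_inl, hedef, Set.image_comp,
        Set.image_preimage_eq _ σ.surjective, ← Set.range_comp, he₀def]
      congr 1
    rw [himg, span_coe_onb b₂]

/-- Let `W` be a nonzero subspace with orthogonal projection `P`, and let
`V₁, V₂` be nonzero orthogonal subspaces with `V = V₁ ⊕ V₂`.  The partition `V = V₁ ⊕ V₂` is
principal with respect to `W` (i.e. `V₁` and `V₂` are spanned by complementary subsets of a
single principal basis of `V` w.r.t. `W`) if and only if `P(V₁) ⊥ P(V₂)`. -/
theorem principal_partition_iff_orthogonal_projections (V W V₁ V₂ : Submodule 𝕜 X)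
    (hW : W ≠ ⊥) (hV₁ : V₁ ≠ ⊥) (hV₂ : V₂ ≠ ⊥)
    (horth : ∀ x ∈ V₁, ∀ y ∈ V₂, (inner 𝕜 x y : 𝕜) = 0)
    (hV : V₁ ⊔ V₂ = V) :
    (∃ (p q : ℕ) (e : Fin p → X) (f : Fin q → X) (S : Set (Fin p)),
        IsPrincipalPair V W e f ∧
        V₁ = Submodule.span 𝕜 (e '' S) ∧ V₂ = Submodule.span 𝕜 (e '' Sᶜ)) ↔
      (∀ x ∈ Submodule.map (W.subtype ∘ₗ (Submodule.orthogonalProjectionOnto W).toLinearMap) V₁,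
        ∀ y ∈ Submodule.map (W.subtype ∘ₗ (Submodule.orthogonalProjectionOnto W).toLinearMap) V₂,
          (inner 𝕜 x y : 𝕜) = 0) := by
  constructor
  · rintro ⟨p, q, e, f, S, hpp, h1, h2⟩
    exact forward_full hpp h1 h2
  · intro hPO
    obtain ⟨p, q, e, f, S, hpp, h1, h2⟩ := backward horth
      (fun a ha b hb => hPO _ (Submodule.mem_map_of_mem ha) _ (Submodule.mem_map_of_mem hb))
    refine ⟨p, q, e, f, S, ?_, h1, h2⟩
    rw [← hV]
    exact hpp
end
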